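/- arXiv:1101.4889 — 6 statements merged into one kernel-verified Lean document; each statement's English description precedes it below -/
import Mathlib

section
/- Let ℋ₂ = ℋ₁ = ℂ², and let P₁, P₂ be rank-two orthogonal projections on ℂ²⊗ℂ² with P₁ + P₂ = I⊗I. The two-outcome quantum 1-tester {T₁ = ½P₁, T₂ = ½P₂} is NOT extremal if and only if either P₁ = I₂⊗|v⟩⟨v| for some unit vector |v⟩ ∈ ℋ₁, or there exist unit vectors |e⟩ ∈ ℋ₁ and |f⟩ ∈ ℋ₂ such that |f⟩⊗|e⟩ lies in the range of P₁ and |f^⊥⟩⊗|e⟩ lies in the range of P₂, where |f^⊥⟩ is a unit vector orthogonal to |f⟩ in ℋ₂. -/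
set_option linter.unusedSectionVars false
set_option maxHeartbeats 1000000


open Matrix Kronecker
open scoped ComplexOrder

/-- A quantum 1-tester with `M` outcomes on `ℋ₂ ⊗ ℋ₁`: a family of positive semidefinite
operators summing to `I₂ ⊗ ρ` for some density operator `ρ` on `ℋ₁`. -/
def IsTester (d₂ d₁ M : ℕ)
    (T : Fin M → Matrix (Fin d₂ × Fin d₁) (Fin d₂ × Fin d₁) ℂ) : Prop :=
  (∀ i, (T i).PosSemidef) ∧
    ∃ ρ : Matrix (Fin d₁) (Fin d₁) ℂ, ρ.PosSemidef ∧ ρ.trace = 1 ∧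
      ∑ i, T i = (1 : Matrix (Fin d₂) (Fin d₂) ℂ) ⊗ₖ ρ


noncomputable section


variable {n : Type*} [Fintype n] [DecidableEq n]

lemma vecMulVec_mulVec (a b c : n → ℂ) :
    (vecMulVec a b) *ᵥ c = (b ⬝ᵥ c) • a := by
  ext i
  simp [vecMulVec_apply, mulVec, dotProduct, Finset.sum_mul, Finset.mul_sum, mul_comm, mul_left_comm]

lemma mul_vecMulVec (A : Matrix n n ℂ) (a b : n → ℂ) :
    A * vecMulVec a b = vecMulVec (A *ᵥ a) b := by
  ext i j
  simp only [vecMulVec_apply, mul_apply, mulVec, dotProduct]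
  rw [Finset.sum_mul]
  apply Finset.sum_congr rfl
  intro k _
  ring

lemma vecMulVec_mul (A : Matrix n n ℂ) (a b : n → ℂ) :
    vecMulVec a b * A = vecMulVec a (b ᵥ* A) := by
  ext i j
  simp [vecMulVec_apply, mul_apply, vecMul, dotProduct, Finset.mul_sum, mul_comm, mul_left_comm]

lemma herm_vecMulVec (x : n → ℂ) : (vecMulVec x (star x)).IsHermitian := by
  ext i j
  simp [IsHermitian, conjTranspose_apply, vecMulVec_apply, mul_comm]

lemma psd_vecMulVec (x : n → ℂ) : (vecMulVec x (star x)).PosSemidef := by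
  rw [posSemidef_iff_dotProduct_mulVec]
  constructor
  · exact herm_vecMulVec x
  · intro y
    rw [_root_.vecMulVec_mulVec]
    have : star y ⬝ᵥ (star x ⬝ᵥ y) • x = (star x ⬝ᵥ y) * (star y ⬝ᵥ x) := by
      simp [dotProduct_smul, mul_comm]
    rw [this]
    have h2 : star y ⬝ᵥ x = star (star x ⬝ᵥ y) := by
      simp [dotProduct, mul_comm]
    rw [h2]
    exact mul_star_self_nonneg _

lemma herm_idem_psd {A : Matrix n n ℂ} (h : A.IsHermitian) (h2 : A * A = A) :
    A.PosSemidef := by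
  have : A = Aᴴ * A := by rw [h.eq, h2]
  rw [this]
  exact posSemidef_conjTranspose_mul_self A

lemma psd_smul_real {A : Matrix n n ℂ} (h : A.PosSemidef) {c : ℝ} (hc : 0 ≤ c) :
    ((c : ℂ) • A).PosSemidef := by
  rw [posSemidef_iff_dotProduct_mulVec]
  constructor
  · ext i j
    simp [conjTranspose_apply, h.isHermitian.apply]
  · intro x
    rw [smul_mulVec, dotProduct_smul]
    have := h.dotProduct_mulVec_nonneg x
    have hc' : (0:ℂ) ≤ (c:ℂ) := by
      rw [Complex.le_def]; simp [hc]
    exact mul_nonneg hc' this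

lemma psd_eq_zero_of_add {A B : Matrix n n ℂ} (hA : A.PosSemidef) (hB : B.PosSemidef)
    (h : A + B = 0) : A = 0 := by
  have hxz : ∀ x, A *ᵥ x = 0 := by
    intro x
    rw [← hA.dotProduct_mulVec_zero_iff]
    have h1 := hA.dotProduct_mulVec_nonneg x
    have h2 := hB.dotProduct_mulVec_nonneg x
    have : star x ⬝ᵥ A *ᵥ x + star x ⬝ᵥ B *ᵥ x = 0 := by
      rw [← dotProduct_add, ← add_mulVec, h, zero_mulVec, dotProduct_zero]
    have hle : star x ⬝ᵥ A *ᵥ x ≤ 0 := by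
      have h3 : star x ⬝ᵥ A *ᵥ x = - (star x ⬝ᵥ B *ᵥ x) := by
        linear_combination this
      rw [h3]; exact neg_nonpos_of_nonneg h2
    exact le_antisymm hle h1
  ext i j
  have := congrFun (hxz (Pi.single j 1)) i
  simpa [mulVec_single] using this

lemma eq_zero_of_mulVec_zero {A : Matrix n n ℂ} (h : ∀ x, A *ᵥ x = 0) : A = 0 := by
  ext i j
  have := congrFun (h (Pi.single j 1)) i
  simpa [mulVec_single] using this

lemma psd_sandwich_zero {A B : Matrix n n ℂ} (hA : A.PosSemidef)
    (h : Bᴴ * A * B = 0) : A * B = 0 := by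
  have : ∀ y, (A * B) *ᵥ y = 0 := by
    intro y
    rw [← mulVec_mulVec]
    rw [← hA.dotProduct_mulVec_zero_iff]
    have : star (B *ᵥ y) ⬝ᵥ A *ᵥ (B *ᵥ y) = star y ⬝ᵥ (Bᴴ * A * B) *ᵥ y := by
      rw [star_mulVec, mulVec_mulVec, dotProduct_mulVec, dotProduct_mulVec, vecMul_vecMul,
        Matrix.mul_assoc]
    rw [this, h, zero_mulVec, dotProduct_zero]
  ext i j
  have := congrFun (this (Pi.single j 1)) i
  simpa [mulVec_single] using this



/-- orthogonal complement vector in ℂ² -/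
def perp (e : Fin 2 → ℂ) : Fin 2 → ℂ := ![-(starRingEnd ℂ) (e 1), (starRingEnd ℂ) (e 0)]

lemma perp_norm {e : Fin 2 → ℂ} (h : ∑ j, star (e j) * e j = 1) :
    ∑ j, star (perp e j) * perp e j = 1 := by
  simp only [Fin.sum_univ_two] at h ⊢
  simp only [perp, Matrix.cons_val_zero, Matrix.cons_val_one, Matrix.head_cons, Pi.star_apply,
    Complex.star_def, map_neg, Complex.conj_conj] at *
  ring_nf
  ring_nf at h
  linear_combination h

lemma perp_orth (e : Fin 2 → ℂ) : ∑ j, star (e j) * perp e j = 0 := by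
  simp only [Fin.sum_univ_two, perp, Matrix.cons_val_zero, Matrix.cons_val_one, Matrix.head_cons,
    Pi.star_apply, Complex.star_def]
  ring

lemma perp_orth' (e : Fin 2 → ℂ) : ∑ j, star (perp e j) * e j = 0 := by
  simp only [Fin.sum_univ_two, perp, Matrix.cons_val_zero, Matrix.cons_val_one, Matrix.head_cons,
    Pi.star_apply, Complex.star_def, map_neg, Complex.conj_conj]
  ring

lemma perp_complete {e : Fin 2 → ℂ} (h : ∑ j, star (e j) * e j = 1) :
    vecMulVec e (star e) + vecMulVec (perp e) (star (perp e)) = 1 := by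
  simp only [Fin.sum_univ_two, Pi.star_apply, Complex.star_def] at h
  ext i j
  fin_cases i <;> fin_cases j <;>
    simp [Matrix.add_apply, vecMulVec_apply, perp, Matrix.one_apply, Pi.star_apply, Complex.star_def, -cons_vecMulVec] <;>
    ring_nf <;> linear_combination h

/-- two orthonormal vectors in ℂ² are complete -/
lemma pair_complete {f f' : Fin 2 → ℂ} (hf : ∑ j, star (f j) * f j = 1)
    (hf' : ∑ j, star (f' j) * f' j = 1) (ho : ∑ j, star (f j) * f' j = 0) :
    vecMulVec f (star f) + vecMulVec f' (star (f' : Fin 2 → ℂ)) = 1 := by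
  classical
  set U : Matrix (Fin 2) (Fin 2) ℂ := Matrix.of ![f, f']ᵀ with hU
  have hU' : ∀ i j, U i j = ![f, f'] j i := fun i j => rfl
  have hUU : Uᴴ * U = 1 := by
    ext i j
    fin_cases i <;> fin_cases j <;>
      simp only [mul_apply, Fin.sum_univ_two, conjTranspose_apply, hU', Matrix.of_apply,
        Matrix.transpose_apply, Matrix.cons_val_zero, Matrix.cons_val_one, Matrix.head_cons,
        Matrix.one_apply] <;>
      simp only [Fin.sum_univ_two, Pi.star_apply, Complex.star_def] at hf hf' ho <;>
      simp <;>
      first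
        | linear_combination hf
        | linear_combination hf'
        | linear_combination ho
        | linear_combination (by simpa using congrArg (starRingEnd ℂ) ho :
            f 0 * (starRingEnd ℂ) (f' 0) + f 1 * (starRingEnd ℂ) (f' 1) = 0)
  have hUU' : U * Uᴴ = 1 := mul_eq_one_comm.mp hUU
  ext i j
  have := congrFun (congrFun hUU' i) j
  simp only [mul_apply, Fin.sum_univ_two, conjTranspose_apply, hU', Matrix.of_apply,
    Matrix.transpose_apply, Matrix.cons_val_zero, Matrix.cons_val_one, Matrix.head_cons] at this
  simpa [vecMulVec_apply, Pi.star_apply] using this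

lemma mat2_ext {A B : Matrix (Fin 2) (Fin 2) ℂ} (h00 : A 0 0 = B 0 0) (h01 : A 0 1 = B 0 1)
    (h10 : A 1 0 = B 1 0) (h11 : A 1 1 = B 1 1) : A = B := by
  ext i j
  fin_cases i <;> fin_cases j <;> assumption

lemma classify_proj2 {M : Matrix (Fin 2) (Fin 2) ℂ} (hh : M.IsHermitian) (hi : M * M = M) :
    M = 0 ∨ M = 1 ∨ ∃ f : Fin 2 → ℂ, (∑ j, star (f j) * f j = 1) ∧
      M = Matrix.vecMulVec f (star f) := by
  have hconj : ∀ x y, (starRingEnd ℂ) (M x y) = M y x := by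
    intro x y
    have := congrFun (congrFun hh.eq y) x
    simpa [conjTranspose_apply, Complex.star_def] using this
  have e00 : M 0 0 * M 0 0 + M 0 1 * M 1 0 = M 0 0 := by
    have := congrFun (congrFun hi 0) 0; simpa [mul_apply, Fin.sum_univ_two] using this
  have e01 : M 0 0 * M 0 1 + M 0 1 * M 1 1 = M 0 1 := by
    have := congrFun (congrFun hi 0) 1; simpa [mul_apply, Fin.sum_univ_two] using this
  have e11 : M 1 0 * M 0 1 + M 1 1 * M 1 1 = M 1 1 := by
    have := congrFun (congrFun hi 1) 1; simpa [mul_apply, Fin.sum_univ_two] using this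
  have ha : ((M 0 0).re : ℂ) = M 0 0 := Complex.conj_eq_iff_re.mp (hconj 0 0)
  have hd : ((M 1 1).re : ℂ) = M 1 1 := Complex.conj_eq_iff_re.mp (hconj 1 1)
  have hba : M 1 0 = (starRingEnd ℂ) (M 0 1) := (hconj 0 1).symm
  by_cases hbz : M 0 1 = 0
  · have h10 : M 1 0 = 0 := by rw [hba, hbz, map_zero]
    have ea : M 0 0 * M 0 0 = M 0 0 := by rw [hbz] at e00; linear_combination e00
    have ed : M 1 1 * M 1 1 = M 1 1 := by rw [h10] at e11; linear_combination e11
    have ea' : M 0 0 = 0 ∨ M 0 0 = 1 := by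
      rcases mul_eq_zero.mp (by linear_combination ea : M 0 0 * (M 0 0 - 1) = 0) with h | h
      · exact Or.inl h
      · exact Or.inr (by linear_combination h)
    have ed' : M 1 1 = 0 ∨ M 1 1 = 1 := by
      rcases mul_eq_zero.mp (by linear_combination ed : M 1 1 * (M 1 1 - 1) = 0) with h | h
      · exact Or.inl h
      · exact Or.inr (by linear_combination h)
    rcases ea' with ha0 | ha1 <;> rcases ed' with hd0 | hd1
    · left; exact mat2_ext (by simpa using ha0) (by simpa using hbz) (by simpa using h10)
        (by simpa using hd0)
    · right; right
      exact ⟨![0, 1], by simp, mat2_ext (by simp [vecMulVec_apply, ha0])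
        (by simp [vecMulVec_apply, hbz]) (by simp [vecMulVec_apply, h10])
        (by simp [vecMulVec_apply, hd1])⟩
    · right; right
      exact ⟨![1, 0], by simp, mat2_ext (by simp [vecMulVec_apply, ha1])
        (by simp [vecMulVec_apply, hbz]) (by simp [vecMulVec_apply, h10])
        (by simp [vecMulVec_apply, hd0])⟩
    · right; left
      exact mat2_ext (by simp [Matrix.one_apply, ha1]) (by simp [Matrix.one_apply, hbz])
        (by simp [Matrix.one_apply, h10]) (by simp [Matrix.one_apply, hd1])
  · right; right
    have had : M 0 0 + M 1 1 = 1 := by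
      have hfac : M 0 1 * (M 0 0 + M 1 1 - 1) = 0 := by linear_combination e01
      rcases mul_eq_zero.mp hfac with h | h
      · exact absurd h hbz
      · linear_combination h
    have hnb : M 0 1 * M 1 0 = (Complex.normSq (M 0 1) : ℂ) := by
      rw [hba, Complex.mul_conj]
    have e00' : ((M 0 0).re : ℂ) ^ 2 + (Complex.normSq (M 0 1) : ℂ) = ((M 0 0).re : ℂ) := by
      rw [ha]; rw [hnb] at e00; linear_combination e00
    have e00R : (M 0 0).re ^ 2 + Complex.normSq (M 0 1) = (M 0 0).re := by exact_mod_cast e00'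
    have hnbpos : 0 < Complex.normSq (M 0 1) := Complex.normSq_pos.mpr hbz
    have hαpos : 0 < (M 0 0).re := by nlinarith
    have key : ((Real.sqrt (M 0 0).re : ℝ) : ℂ) * ((Real.sqrt (M 0 0).re : ℝ) : ℂ)
        = ((M 0 0).re : ℂ) := by
      rw [← Complex.ofReal_mul, Real.mul_self_sqrt hαpos.le]
    have hsqne : ((Real.sqrt (M 0 0).re : ℝ) : ℂ) ≠ 0 := by
      simp only [ne_eq, Complex.ofReal_eq_zero]
      exact (Real.sqrt_pos.mpr hαpos).ne'
    have hαne : ((M 0 0).re : ℂ) ≠ 0 := by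
      exact_mod_cast hαpos.ne'
    refine ⟨![((Real.sqrt (M 0 0).re : ℝ) : ℂ), (starRingEnd ℂ) (M 0 1) / ((Real.sqrt (M 0 0).re : ℝ) : ℂ)], ?_, ?_⟩
    · simp only [Fin.sum_univ_two, Matrix.cons_val_zero, Matrix.cons_val_one, Matrix.head_cons,
        Pi.star_apply, Complex.star_def, map_div₀, Complex.conj_conj, Complex.conj_ofReal]
      rw [div_mul_div_comm, key, Complex.mul_conj]
      have hq : (Complex.normSq (M 0 1) : ℂ) / ((M 0 0).re : ℂ) = 1 - ((M 0 0).re : ℂ) := by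
        rw [div_eq_iff hαne]; linear_combination e00'
      rw [hq]; ring
    · refine mat2_ext ?_ ?_ ?_ ?_ <;>
        simp only [vecMulVec_apply, Matrix.cons_val_zero, Matrix.cons_val_one, Matrix.head_cons,
          Pi.star_apply, Complex.star_def, map_div₀, Complex.conj_conj, Complex.conj_ofReal]
      · rw [key, ha]
      · field_simp
      · rw [hba]; field_simp
      · rw [div_mul_div_comm, key, mul_comm ((starRingEnd ℂ) (M 0 1)) (M 0 1), Complex.mul_conj]
        rw [eq_div_iff hαne]
        linear_combination ((M 0 0).re:ℂ) * had + ((M 0 0).re:ℂ) * ha - e00'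

lemma classify_traceless {σ : Matrix (Fin 2) (Fin 2) ℂ} (hh : σ.IsHermitian) (ht : σ.trace = 0)
    (hnz : σ ≠ 0) : ∃ (e : Fin 2 → ℂ) (c : ℂ), (∑ j, star (e j) * e j = 1) ∧
      Matrix.vecMulVec e (star e) = c • σ + (2⁻¹ : ℂ) • 1 := by
  have hconj : ∀ x y, (starRingEnd ℂ) (σ x y) = σ y x := by
    intro x y
    have := congrFun (congrFun hh.eq y) x
    simpa [conjTranspose_apply, Complex.star_def] using this
  have ha : ((σ 0 0).re : ℂ) = σ 0 0 := Complex.conj_eq_iff_re.mp (hconj 0 0)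
  have hba : σ 1 0 = (starRingEnd ℂ) (σ 0 1) := (hconj 0 1).symm
  have htr : σ 1 1 = -σ 0 0 := by
    have : σ 0 0 + σ 1 1 = 0 := by simpa [Matrix.trace, Fin.sum_univ_two] using ht
    linear_combination this
  set α : ℝ := (σ 0 0).re with hα
  set nb : ℝ := Complex.normSq (σ 0 1) with hnbdef
  set L : ℝ := Real.sqrt (α ^ 2 + nb) with hLdef
  have hnbnn : 0 ≤ nb := Complex.normSq_nonneg _
  have hL2 : L ^ 2 = α ^ 2 + nb := Real.sq_sqrt (by positivity)
  have hLnn : 0 ≤ L := Real.sqrt_nonneg _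
  have hLpos : 0 < L := by
    rcases hLnn.lt_or_eq with h | h
    · exact h
    · exfalso
      have h0 : α ^ 2 + nb = 0 := by rw [← hL2, ← h]; ring
      have hα0 : α = 0 := by nlinarith
      have hb0 : σ 0 1 = 0 := by
        have : nb = 0 := by nlinarith
        exact Complex.normSq_eq_zero.mp this
      apply hnz
      refine mat2_ext ?_ ?_ ?_ ?_ <;> simp only [Matrix.zero_apply]
      · rw [← ha, hα0]; simp
      · exact hb0
      · rw [hba, hb0, map_zero]
      · rw [htr, ← ha, hα0]; simp
  have hLne : (L : ℂ) ≠ 0 := by exact_mod_cast hLpos.ne'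
  by_cases hcase : σ 0 1 = 0 ∧ α ≤ 0
  · obtain ⟨hb0, hαle⟩ := hcase
    have hnb0 : nb = 0 := by rw [hnbdef, hb0]; simp
    have hLα : L = -α := by
      rw [hLdef, hnb0, add_zero, Real.sqrt_sq_eq_abs, abs_of_nonpos hαle]
    have hL' : ((L:ℝ):ℂ) = -((α:ℝ):ℂ) := by
      rw [hLα]; push_cast; ring
    have hcα : ((1 / (2 * L) : ℝ) : ℂ) * σ 0 0 = -2⁻¹ := by
      rw [← ha]; push_cast; rw [hL']
      have hαC : ((α:ℝ):ℂ) ≠ 0 := by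
        intro h0
        rw [h0] at hL'
        simp only [neg_zero] at hL'
        exact hLne hL'
      field_simp
    refine ⟨![0, 1], ((1 / (2 * L) : ℝ) : ℂ), by simp, ?_⟩
    refine mat2_ext ?_ ?_ ?_ ?_
    · have h1 : Matrix.vecMulVec ![(0:ℂ),1] (star ![(0:ℂ),1]) 0 0 = 0 := by
        simp [vecMulVec_apply]
      rw [h1, Matrix.add_apply, Matrix.smul_apply, Matrix.smul_apply, Matrix.one_apply_eq,
        smul_eq_mul, smul_eq_mul, hcα]
      norm_num
    · have h1 : Matrix.vecMulVec ![(0:ℂ),1] (star ![(0:ℂ),1]) 0 1 = 0 := by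
        simp [vecMulVec_apply]
      rw [h1, Matrix.add_apply, Matrix.smul_apply, Matrix.smul_apply,
        Matrix.one_apply_ne (by decide), smul_eq_mul, smul_eq_mul, hb0]
      ring
    · have h1 : Matrix.vecMulVec ![(0:ℂ),1] (star ![(0:ℂ),1]) 1 0 = 0 := by
        simp [vecMulVec_apply]
      rw [h1, Matrix.add_apply, Matrix.smul_apply, Matrix.smul_apply,
        Matrix.one_apply_ne (by decide), smul_eq_mul, smul_eq_mul, hba, hb0]
      simp
    · have h1 : Matrix.vecMulVec ![(0:ℂ),1] (star ![(0:ℂ),1]) 1 1 = 1 := by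
        simp [vecMulVec_apply]
      rw [h1, Matrix.add_apply, Matrix.smul_apply, Matrix.smul_apply, Matrix.one_apply_eq,
        smul_eq_mul, smul_eq_mul, htr, mul_neg, hcα]
      norm_num
  · have hpos : 0 < L + α := by
      by_cases hb0 : σ 0 1 = 0
      · have hαpos : 0 < α := by
          by_contra hle
          exact hcase ⟨hb0, le_of_not_gt hle⟩
        linarith
      · have hnbpos : 0 < nb := Complex.normSq_pos.mpr hb0
        nlinarith
    set n : ℝ := 2 * L * (L + α) with hndef
    have hnpos : 0 < n := by positivity
    set s : ℝ := Real.sqrt n with hsdef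
    have hspos : 0 < s := Real.sqrt_pos.mpr hnpos
    have hs2 : (s : ℂ) * (s : ℂ) = (n : ℂ) := by
      rw [← Complex.ofReal_mul, Real.mul_self_sqrt hnpos.le]
    have hsne : (s : ℂ) ≠ 0 := by exact_mod_cast hspos.ne'
    have hnne : (n : ℂ) ≠ 0 := by exact_mod_cast hnpos.ne'
    have hncast : ((n:ℝ):ℂ) = 2*(L:ℂ)*((L:ℂ)+(α:ℂ)) := by rw [hndef]; push_cast; ring
    have hLαne : (L:ℂ)+(α:ℂ) ≠ 0 := by
      have h1 : ((L+α:ℝ):ℂ) ≠ 0 := by exact_mod_cast hpos.ne'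
      push_cast at h1; exact h1
    have hL2C : ((L:ℝ):ℂ)^2 = ((α:ℝ):ℂ)^2 + ((nb:ℝ):ℂ) := by
      have := congrArg (Complex.ofReal) hL2
      push_cast at this
      exact_mod_cast this
    have key1 : ((1 / (2 * L) : ℝ) : ℂ) = ((L + α : ℝ) : ℂ) / (n : ℂ) := by
      push_cast
      rw [hncast]
      field_simp
    refine ⟨![((L + α : ℝ) : ℂ) / (s : ℂ), (starRingEnd ℂ) (σ 0 1) / (s : ℂ)],
      ((1 / (2 * L) : ℝ) : ℂ), ?_, ?_⟩
    · simp only [Fin.sum_univ_two, Matrix.cons_val_zero, Matrix.cons_val_one, Matrix.head_cons,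
        Pi.star_apply, Complex.star_def, map_div₀, Complex.conj_conj, Complex.conj_ofReal]
      rw [div_mul_div_comm, div_mul_div_comm, hs2, Complex.mul_conj, ← hnbdef,
        ← add_div, div_eq_one_iff_eq hnne]
      rw [hncast]
      push_cast
      linear_combination -hL2C
    · refine mat2_ext ?_ ?_ ?_ ?_ <;>
        simp only [vecMulVec_apply, Matrix.cons_val_zero, Matrix.cons_val_one, Matrix.head_cons,
          Pi.star_apply, Complex.star_def, map_div₀, Complex.conj_conj, Complex.conj_ofReal,
          Matrix.add_apply, Matrix.smul_apply, smul_eq_mul]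
      · rw [Matrix.one_apply_eq, div_mul_div_comm, hs2, ← ha, key1, hncast]
        push_cast
        field_simp
        ring
      · rw [Matrix.one_apply_ne (by decide), div_mul_div_comm, hs2, key1]
        ring
      · rw [Matrix.one_apply_ne (by decide), div_mul_div_comm, hs2, hba, key1]
        ring
      · rw [Matrix.one_apply_eq, div_mul_div_comm, hs2, htr, ← ha,
          mul_comm ((starRingEnd ℂ) (σ 0 1)) (σ 0 1), Complex.mul_conj, ← hnbdef, key1, hncast]
        push_cast
        field_simp
        linear_combination (-1 : ℂ) * hL2C

lemma vecMulVec_mulVec' {n : Type*} [Fintype n] (a b c : n → ℂ) :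
    (vecMulVec a b) *ᵥ c = (b ⬝ᵥ c) • a := by
  ext i
  simp [vecMulVec_apply, mulVec, dotProduct, Finset.sum_mul, Finset.mul_sum, mul_comm,
    mul_left_comm]

lemma mul_vecMulVec' {n : Type*} [Fintype n] (A : Matrix n n ℂ) (a b : n → ℂ) :
    A * vecMulVec a b = vecMulVec (A *ᵥ a) b := by
  ext i j
  simp only [vecMulVec_apply, mul_apply, mulVec, dotProduct]
  rw [Finset.sum_mul]
  exact Finset.sum_congr rfl fun k _ => by ring

lemma vmv_idem {u : Fin 2 → ℂ} (hu : ∑ j, star (u j) * u j = 1) :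
    vecMulVec u (star u) * vecMulVec u (star u) = vecMulVec u (star u) := by
  rw [mul_vecMulVec', vecMulVec_mulVec']
  have : star u ⬝ᵥ u = 1 := by simpa [dotProduct] using hu
  rw [this, one_smul]

lemma kron_mulVec (A B : Matrix (Fin 2) (Fin 2) ℂ) (f e : Fin 2 → ℂ) :
    (A ⊗ₖ B) *ᵥ (fun p : Fin 2 × Fin 2 => f p.1 * e p.2)
      = fun p : Fin 2 × Fin 2 => (A *ᵥ f) p.1 * (B *ᵥ e) p.2 := by
  ext ⟨i, j⟩
  simp only [mulVec, dotProduct, Fintype.sum_prod_type, kroneckerMap_apply, Fin.sum_univ_two,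
    mulVec, dotProduct]
  ring

lemma extract {P : Matrix (Fin 2 × Fin 2) (Fin 2 × Fin 2) ℂ} {u : Fin 2 → ℂ}
    (hP : P.IsHermitian) (hPP : P * P = P) (hu : ∑ j, star (u j) * u j = 1)
    (hc : P * ((1 : Matrix (Fin 2) (Fin 2) ℂ) ⊗ₖ vecMulVec u (star u))
        = ((1 : Matrix (Fin 2) (Fin 2) ℂ) ⊗ₖ vecMulVec u (star u)) * P) :
    ∃ M : Matrix (Fin 2) (Fin 2) ℂ, M.IsHermitian ∧ M * M = M ∧
      P * ((1 : Matrix (Fin 2) (Fin 2) ℂ) ⊗ₖ vecMulVec u (star u))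
        = M ⊗ₖ vecMulVec u (star u) := by
  set Q : Matrix (Fin 2 × Fin 2) (Fin 2 × Fin 2) ℂ :=
    (1 : Matrix (Fin 2) (Fin 2) ℂ) ⊗ₖ vecMulVec u (star u) with hQdef
  have hQQ : Q * Q = Q := by
    rw [hQdef, ← mul_kronecker_mul, one_mul, vmv_idem hu]
  set M : Matrix (Fin 2) (Fin 2) ℂ :=
    Matrix.of (fun i k => ∑ j, ∑ l, (starRingEnd ℂ) (u j) * P (i, j) (k, l) * u l) with hMdef
  have hconjP : ∀ x y, (starRingEnd ℂ) (P x y) = P y x := by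
    intro x y
    have := congrFun (congrFun hP.eq y) x
    simpa [conjTranspose_apply, Complex.star_def] using this
  have hPQ2 : P * Q = Q * (P * Q) := by
    rw [← Matrix.mul_assoc, ← hc, Matrix.mul_assoc, hQQ]
  have hQmul : ∀ (A : Matrix (Fin 2 × Fin 2) (Fin 2 × Fin 2) ℂ) (i j k l : Fin 2),
      (Q * A) (i, j) (k, l) = u j * ∑ j', star u j' * A (i, j') (k, l) := by
    intro A i j k l
    simp only [hQdef, mul_apply, Fintype.sum_prod_type, Fin.sum_univ_two, kroneckerMap_apply,
      vecMulVec_apply, Matrix.one_apply, Pi.star_apply]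
    fin_cases i <;> simp <;> ring
  have hmulQ : ∀ (A : Matrix (Fin 2 × Fin 2) (Fin 2 × Fin 2) ℂ) (i j k l : Fin 2),
      (A * Q) (i, j) (k, l) = star u l * ∑ l', u l' * A (i, j) (k, l') := by
    intro A i j k l
    simp only [hQdef, mul_apply, Fintype.sum_prod_type, Fin.sum_univ_two, kroneckerMap_apply,
      vecMulVec_apply, Matrix.one_apply, Pi.star_apply]
    fin_cases k <;> simp <;> ring
  have hkey : Q * (P * Q) = M ⊗ₖ vecMulVec u (star u) := by
    ext ⟨i, j⟩ ⟨k, l⟩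
    rw [hQmul]
    simp only [hMdef, kroneckerMap_apply, vecMulVec_apply, Matrix.of_apply, Pi.star_apply,
      Complex.star_def]
    have : ∀ j' : Fin 2, (P * Q) (i, j') (k, l) = star u l * ∑ l', u l' * P (i, j') (k, l') :=
      fun j' => hmulQ P i j' k l
    simp only [this]
    simp only [Fin.sum_univ_two, Pi.star_apply, Complex.star_def]
    ring
  have hfinal : P * Q = M ⊗ₖ vecMulVec u (star u) := hPQ2.trans hkey
  have hMherm : M.IsHermitian := by
    ext i k
    simp only [conjTranspose_apply, Matrix.of_apply, hMdef, Complex.star_def, map_sum]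
    rw [Finset.sum_comm]
    refine Finset.sum_congr rfl fun l _ => Finset.sum_congr rfl fun j _ => ?_
    rw [_root_.map_mul, _root_.map_mul, Complex.conj_conj, hconjP]
    ring
  have hPQPQ : (P * Q) * (P * Q) = P * Q := by
    calc (P * Q) * (P * Q) = P * ((Q * P) * Q) := by
          rw [Matrix.mul_assoc, Matrix.mul_assoc]
      _ = P * ((P * Q) * Q) := by rw [hc]
      _ = P * (P * (Q * Q)) := by rw [Matrix.mul_assoc]
      _ = (P * P) * Q := by rw [hQQ, Matrix.mul_assoc]
      _ = P * Q := by rw [hPP]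
  have hMM : M * M = M := by
    have h2 : (M * M) ⊗ₖ vecMulVec u (star u) = M ⊗ₖ vecMulVec u (star u) := by
      have h3 := Matrix.mul_kronecker_mul M M (vecMulVec u (star u)) (vecMulVec u (star u))
      rw [vmv_idem hu] at h3
      rw [h3, ← hfinal, hPQPQ, hfinal]
    obtain ⟨j0, hj0⟩ : ∃ j, u j ≠ 0 := by
      by_contra hall
      push_neg at hall
      rw [Fin.sum_univ_two, hall 0, hall 1] at hu
      simp at hu
    ext i k
    have := congrFun (congrFun h2 (i, j0)) (k, j0)
    simp only [kroneckerMap_apply, vecMulVec_apply, Pi.star_apply] at this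
    have hne : u j0 * star (u j0) ≠ 0 := mul_ne_zero hj0 (star_ne_zero.mpr hj0)
    exact mul_right_cancel₀ hne this
  exact ⟨M, hMherm, hMM, hfinal⟩

lemma second_disjunct_aux {P₁ P₂ : Matrix (Fin 2 × Fin 2) (Fin 2 × Fin 2) ℂ}
    (hsum : P₁ + P₂ = 1)
    {A B : Matrix (Fin 2) (Fin 2) ℂ} {u w f : Fin 2 → ℂ}
    (hdecomp : P₁ = A ⊗ₖ vecMulVec u (star u) + B ⊗ₖ vecMulVec w (star w))
    (hu : ∑ j, star (u j) * u j = 1) (hf : ∑ j, star (f j) * f j = 1)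
    (hAf : A = vecMulVec f (star f))
    (hWu : vecMulVec w (star w) *ᵥ u = 0)
    (hUu : vecMulVec u (star u) *ᵥ u = u) :
    (∃ e f₀ f' : Fin 2 → ℂ,
      (∑ j, star (e j) * e j = 1) ∧ (∑ j, star (f₀ j) * f₀ j = 1) ∧
      (∑ j, star (f' j) * f' j = 1) ∧ (∑ j, star (f₀ j) * f' j = 0) ∧
      (fun p : Fin 2 × Fin 2 => f₀ p.1 * e p.2) ∈ LinearMap.range P₁.mulVecLin ∧
      (fun p : Fin 2 × Fin 2 => f' p.1 * e p.2) ∈ LinearMap.range P₂.mulVecLin) := by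
  have hAf' : A *ᵥ f = f := by
    rw [hAf, vecMulVec_mulVec']
    have : star f ⬝ᵥ f = 1 := by simpa [dotProduct] using hf
    rw [this, one_smul]
  have hAperp : A *ᵥ perp f = 0 := by
    rw [hAf, vecMulVec_mulVec']
    have : star f ⬝ᵥ perp f = 0 := by simpa [dotProduct] using perp_orth f
    rw [this, zero_smul]
  have hx : P₁ *ᵥ (fun p : Fin 2 × Fin 2 => f p.1 * u p.2) = fun p => f p.1 * u p.2 := by
    rw [hdecomp, Matrix.add_mulVec, kron_mulVec, kron_mulVec, hAf', hUu, hWu]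
    funext p
    simp
  have hx' : P₁ *ᵥ (fun p : Fin 2 × Fin 2 => perp f p.1 * u p.2) = 0 := by
    rw [hdecomp, Matrix.add_mulVec, kron_mulVec, kron_mulVec, hAperp, hUu, hWu]
    funext p
    simp
  have hx'' : P₂ *ᵥ (fun p : Fin 2 × Fin 2 => perp f p.1 * u p.2)
      = fun p => perp f p.1 * u p.2 := by
    have hP₂ : P₂ = 1 - P₁ := by rw [← hsum]; abel
    rw [hP₂, Matrix.sub_mulVec, hx', Matrix.one_mulVec, sub_zero]
  exact ⟨u, f, perp f, hu, hf, perp_norm hf, perp_orth f,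
    LinearMap.mem_range.mpr ⟨_, by rw [Matrix.mulVecLin_apply, hx]⟩,
    LinearMap.mem_range.mpr ⟨_, by rw [Matrix.mulVecLin_apply, hx'']⟩⟩

lemma rhs_of_comm {P₁ P₂ : Matrix (Fin 2 × Fin 2) (Fin 2 × Fin 2) ℂ}
    (h₁herm : P₁.IsHermitian) (h₁proj : P₁ * P₁ = P₁) (h₁rank : P₁.rank = 2)
    (h₂rank : P₂.rank = 2) (hsum : P₁ + P₂ = 1)
    {σ : Matrix (Fin 2) (Fin 2) ℂ} (hσh : σ.IsHermitian) (hσt : σ.trace = 0) (hσnz : σ ≠ 0)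
    (hσc : P₁ * ((1 : Matrix (Fin 2) (Fin 2) ℂ) ⊗ₖ σ)
      = ((1 : Matrix (Fin 2) (Fin 2) ℂ) ⊗ₖ σ) * P₁) :
    ((∃ v : Fin 2 → ℂ, (∑ j, star (v j) * v j = 1) ∧
        P₁ = (1 : Matrix (Fin 2) (Fin 2) ℂ) ⊗ₖ Matrix.vecMulVec v (star v)) ∨
      (∃ e f f' : Fin 2 → ℂ,
        (∑ j, star (e j) * e j = 1) ∧ (∑ j, star (f j) * f j = 1) ∧
        (∑ j, star (f' j) * f' j = 1) ∧ (∑ j, star (f j) * f' j = 0) ∧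
        (fun p : Fin 2 × Fin 2 => f p.1 * e p.2) ∈ LinearMap.range P₁.mulVecLin ∧
        (fun p : Fin 2 × Fin 2 => f' p.1 * e p.2) ∈ LinearMap.range P₂.mulVecLin)) := by
  obtain ⟨e, c, he, hee⟩ := classify_traceless hσh hσt hσnz
  set E : Matrix (Fin 2) (Fin 2) ℂ := vecMulVec e (star e) with hEdef
  set p : Fin 2 → ℂ := perp e with hpdef
  have hp : ∑ j, star (p j) * p j = 1 := perp_norm he
  set Pp : Matrix (Fin 2) (Fin 2) ℂ := vecMulVec p (star p) with hPpdef
  have hQe : (1 : Matrix (Fin 2) (Fin 2) ℂ) ⊗ₖ E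
      = c • ((1 : Matrix (Fin 2) (Fin 2) ℂ) ⊗ₖ σ) + (2⁻¹ : ℂ) • 1 := by
    rw [hee, kronecker_add, kronecker_smul, kronecker_smul, one_kronecker_one]
  have hcomm_e : P₁ * ((1 : Matrix (Fin 2) (Fin 2) ℂ) ⊗ₖ E)
      = ((1 : Matrix (Fin 2) (Fin 2) ℂ) ⊗ₖ E) * P₁ := by
    rw [hQe]
    simp only [Matrix.mul_add, Matrix.add_mul, Matrix.mul_smul, Matrix.smul_mul,
      Matrix.mul_one, Matrix.one_mul, hσc]
  have hcompl : (1 : Matrix (Fin 2 × Fin 2) (Fin 2 × Fin 2) ℂ)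
      = (1 : Matrix (Fin 2) (Fin 2) ℂ) ⊗ₖ E + (1 : Matrix (Fin 2) (Fin 2) ℂ) ⊗ₖ Pp := by
    rw [← kronecker_add, hEdef, hPpdef, hpdef, perp_complete he, one_kronecker_one]
  have hcomm_p : P₁ * ((1 : Matrix (Fin 2) (Fin 2) ℂ) ⊗ₖ Pp)
      = ((1 : Matrix (Fin 2) (Fin 2) ℂ) ⊗ₖ Pp) * P₁ := by
    have h1 : (1 : Matrix (Fin 2) (Fin 2) ℂ) ⊗ₖ Pp
        = 1 - (1 : Matrix (Fin 2) (Fin 2) ℂ) ⊗ₖ E := by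
      rw [hcompl]; abel
    rw [h1, Matrix.mul_sub, Matrix.sub_mul, Matrix.mul_one, Matrix.one_mul, hcomm_e]
  obtain ⟨M, hMh, hMM, hMeq⟩ := extract h₁herm h₁proj he hcomm_e
  obtain ⟨M', hM'h, hM'M, hM'eq⟩ := extract h₁herm h₁proj hp hcomm_p
  have hdecomp : P₁ = M ⊗ₖ E + M' ⊗ₖ Pp := by
    have h2 : P₁ * ((1 : Matrix (Fin 2) (Fin 2) ℂ) ⊗ₖ E)
        + P₁ * ((1 : Matrix (Fin 2) (Fin 2) ℂ) ⊗ₖ Pp) = P₁ := by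
      rw [← Matrix.mul_add, ← hcompl, Matrix.mul_one]
    rw [hMeq, hM'eq] at h2
    exact h2.symm
  have hEe : E *ᵥ e = e := by
    rw [hEdef, vecMulVec_mulVec']
    have : star e ⬝ᵥ e = 1 := by simpa [dotProduct] using he
    rw [this, one_smul]
  have hEp : E *ᵥ p = 0 := by
    rw [hEdef, vecMulVec_mulVec']
    have : star e ⬝ᵥ p = 0 := by simpa [dotProduct] using perp_orth e
    rw [this, zero_smul]
  have hPe : Pp *ᵥ e = 0 := by
    rw [hPpdef, vecMulVec_mulVec']
    have : star p ⬝ᵥ e = 0 := by simpa [dotProduct] using perp_orth' e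
    rw [this, zero_smul]
  have hPp' : Pp *ᵥ p = p := by
    rw [hPpdef, vecMulVec_mulVec']
    have : star p ⬝ᵥ p = 1 := by simpa [dotProduct] using hp
    rw [this, one_smul]
  rcases classify_proj2 hMh hMM with hM0 | hM1 | ⟨f, hf, hMf⟩
  · rcases classify_proj2 hM'h hM'M with hM'0 | hM'1 | ⟨g, hg, hM'g⟩
    · -- P₁ = 0, contradiction with rank
      exfalso
      rw [hM0, hM'0, Matrix.zero_kronecker, Matrix.zero_kronecker, add_zero] at hdecomp
      rw [hdecomp, Matrix.rank_zero] at h₁rank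
      exact two_ne_zero h₁rank.symm
    · -- P₁ = 1 ⊗ Pp
      left
      refine ⟨p, hp, ?_⟩
      rw [hdecomp, hM0, hM'1, Matrix.zero_kronecker, zero_add, hPpdef]
    · -- second disjunct via p
      right
      rw [add_comm] at hdecomp
      exact second_disjunct_aux hsum (by rw [hdecomp, hM'g, hEdef, hPpdef]) hp hg rfl hEp hPp'
  · rcases classify_proj2 hM'h hM'M with hM'0 | hM'1 | ⟨g, hg, hM'g⟩
    · left
      refine ⟨e, he, ?_⟩
      rw [hdecomp, hM1, hM'0, Matrix.zero_kronecker, add_zero, hEdef]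
    · -- P₁ = 1, P₂ = 0, contradiction
      exfalso
      rw [hM1, hM'1, ← hcompl] at hdecomp
      have hP₂0 : P₂ = 0 := by
        have h4 := hsum
        rw [hdecomp] at h4
        have h5 : (1 : Matrix (Fin 2 × Fin 2) (Fin 2 × Fin 2) ℂ) + P₂ = 1 + 0 := by
          rw [add_zero]; exact h4
        exact add_left_cancel h5
      rw [hP₂0, Matrix.rank_zero] at h₂rank
      exact two_ne_zero h₂rank.symm
    · right
      rw [add_comm] at hdecomp
      exact second_disjunct_aux hsum (by rw [hdecomp, hM'g, hEdef, hPpdef]) hp hg rfl hEp hPp'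
  · right
    exact second_disjunct_aux hsum (by rw [hdecomp, hMf, hEdef, hPpdef]) he hf rfl hPe hEe

lemma cle {r : ℝ} (h : 0 ≤ r) : (0 : ℂ) ≤ (r : ℂ) := by
  rw [Complex.le_def]; simp [h]

lemma psd_smul {n : Type*} [Fintype n] {A : Matrix n n ℂ} (h : A.PosSemidef) {c : ℂ}
    (hc : 0 ≤ c) : (c • A).PosSemidef := by
  have him : c.im = 0 := ((Complex.le_def.mp hc).2).symm
  rw [posSemidef_iff_dotProduct_mulVec]
  constructor
  · show (c • A)ᴴ = c • A
    rw [Matrix.conjTranspose_smul, h.isHermitian.eq]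
    congr 1
    exact Complex.conj_eq_iff_im.mpr him
  · intro x
    rw [Matrix.smul_mulVec, dotProduct_smul, smul_eq_mul]
    exact mul_nonneg hc (h.dotProduct_mulVec_nonneg x)

lemma psd_smul_R {n : Type*} [Fintype n] {A : Matrix n n ℂ} (h : A.PosSemidef) {c : ℝ}
    (hc : 0 ≤ c) : (c • A).PosSemidef := by
  have : c • A = ((c : ℂ)) • A := by
    ext i j
    simp [Complex.real_smul]
  rw [this]
  exact psd_smul h (cle hc)

lemma real_smul_mat (r : ℝ) (A : Matrix (Fin 2 × Fin 2) (Fin 2 × Fin 2) ℂ) :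
    r • A = ((r : ℂ)) • A := by
  ext i j
  simp [Complex.real_smul]

lemma trace_vmv {v : Fin 2 → ℂ} (hv : ∑ j, star (v j) * v j = 1) :
    (vecMulVec v (star v)).trace = 1 := by
  simp only [Fin.sum_univ_two, Pi.star_apply] at hv
  simp only [Matrix.trace, Matrix.diag, vecMulVec_apply, Fin.sum_univ_two, Pi.star_apply]
  linear_combination hv

lemma not_extreme_of_pert {P₁ P₂ : Matrix (Fin 2 × Fin 2) (Fin 2 × Fin 2) ℂ}
    (D₀ D₁ : Matrix (Fin 2 × Fin 2) (Fin 2 × Fin 2) ℂ)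
    (h1 : ((1/2 : ℂ) • P₁ + D₀).PosSemidef) (h2 : ((1/2 : ℂ) • P₂ + D₁).PosSemidef)
    (h3 : ((1/2 : ℂ) • P₁ - D₀).PosSemidef) (h4 : ((1/2 : ℂ) • P₂ - D₁).PosSemidef)
    (ρ' ρ'' : Matrix (Fin 2) (Fin 2) ℂ)
    (hρ' : ρ'.PosSemidef) (htρ' : ρ'.trace = 1)
    (hρ'' : ρ''.PosSemidef) (htρ'' : ρ''.trace = 1)
    (hs1 : ((1/2 : ℂ) • P₁ + D₀) + ((1/2 : ℂ) • P₂ + D₁)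
      = (1 : Matrix (Fin 2) (Fin 2) ℂ) ⊗ₖ ρ')
    (hs2 : ((1/2 : ℂ) • P₁ - D₀) + ((1/2 : ℂ) • P₂ - D₁)
      = (1 : Matrix (Fin 2) (Fin 2) ℂ) ⊗ₖ ρ'')
    (hD : D₀ ≠ 0) :
    ![(1/2 : ℂ) • P₁, (1/2 : ℂ) • P₂] ∉ {W | IsTester 2 2 2 W}.extremePoints ℝ := by
  intro hmem
  rw [mem_extremePoints] at hmem
  obtain ⟨hTS, hext⟩ := hmem
  have hT' : ![(1/2 : ℂ) • P₁ + D₀, (1/2 : ℂ) • P₂ + D₁] ∈ {W | IsTester 2 2 2 W} := by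
    refine ⟨?_, ρ', hρ', htρ', ?_⟩
    · intro i
      fin_cases i
      · simpa using h1
      · simpa using h2
    · rw [Fin.sum_univ_two]
      simpa using hs1
  have hT'' : ![(1/2 : ℂ) • P₁ - D₀, (1/2 : ℂ) • P₂ - D₁] ∈ {W | IsTester 2 2 2 W} := by
    refine ⟨?_, ρ'', hρ'', htρ'', ?_⟩
    · intro i
      fin_cases i
      · simpa using h3
      · simpa using h4
    · rw [Fin.sum_univ_two]
      simpa using hs2
  have hseg : ![(1/2 : ℂ) • P₁, (1/2 : ℂ) • P₂] ∈
      openSegment ℝ ![(1/2 : ℂ) • P₁ + D₀, (1/2 : ℂ) • P₂ + D₁]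
        ![(1/2 : ℂ) • P₁ - D₀, (1/2 : ℂ) • P₂ - D₁] := by
    refine ⟨1/2, 1/2, by norm_num, by norm_num, by norm_num, ?_⟩
    funext i
    fin_cases i
    · show (1/2 : ℝ) • ((1/2 : ℂ) • P₁ + D₀) + (1/2 : ℝ) • ((1/2 : ℂ) • P₁ - D₀)
        = (1/2 : ℂ) • P₁
      module
    · show (1/2 : ℝ) • ((1/2 : ℂ) • P₂ + D₁) + (1/2 : ℝ) • ((1/2 : ℂ) • P₂ - D₁)
        = (1/2 : ℂ) • P₂
      module
  have hres := hext _ hT' _ hT'' hseg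
  apply hD
  have := congrFun hres.1 0
  simp only [Matrix.cons_val_zero] at this
  have h5 : (1/2 : ℂ) • P₁ + D₀ - (1/2 : ℂ) • P₁ = (1/2 : ℂ) • P₁ - (1/2 : ℂ) • P₁ := by
    rw [this]
  simpa using h5

lemma cle' {c : ℂ} (h1 : 0 ≤ c.re) (h2 : c.im = 0) : (0 : ℂ) ≤ c := by
  rw [Complex.le_def]; simp [h1, h2]

lemma tester_T {P₁ P₂ : Matrix (Fin 2 × Fin 2) (Fin 2 × Fin 2) ℂ}
    (h₁herm : P₁.IsHermitian) (h₁proj : P₁ * P₁ = P₁)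
    (h₂herm : P₂.IsHermitian) (h₂proj : P₂ * P₂ = P₂)
    (hsum : P₁ + P₂ = 1) :
    IsTester 2 2 2 ![(1/2 : ℂ) • P₁, (1/2 : ℂ) • P₂] := by
  have hhalf : (0 : ℂ) ≤ 1/2 := cle' (by norm_num) (by norm_num)
  refine ⟨?_, (1/2 : ℂ) • 1, psd_smul Matrix.PosSemidef.one hhalf, ?_, ?_⟩
  · intro i
    fin_cases i
    · exact psd_smul (herm_idem_psd h₁herm h₁proj) hhalf
    · exact psd_smul (herm_idem_psd h₂herm h₂proj) hhalf
  · rw [Matrix.trace_smul, Matrix.trace_one]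
    norm_num
  · rw [Fin.sum_univ_two]
    show (1/2 : ℂ) • P₁ + (1/2 : ℂ) • P₂ = _
    rw [kronecker_smul, one_kronecker_one, ← smul_add, hsum]

lemma tester_support {n : Type*} [Fintype n] [DecidableEq n]
    {P X Y Z : Matrix n n ℂ} (hP : P.IsHermitian) (hX : X.PosSemidef) (hY : Y.PosSemidef)
    {a b : ℝ} (ha : 0 < a) (hb : 0 < b)
    (hsum : a • X + b • Y = Z) (hZ : P * Z * P = 0) : X * P = 0 ∧ P * X = 0 := by
  have h1 : a • (P * X * P) + b • (P * Y * P) = 0 := by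
    have h2 : P * (a • X + b • Y) * P = 0 := by rw [hsum]; exact hZ
    rw [Matrix.mul_add, Matrix.add_mul, Matrix.mul_smul, Matrix.mul_smul, Matrix.smul_mul,
      Matrix.smul_mul] at h2
    exact h2
  have hXP : (P * X * P).PosSemidef := by
    have := hX.mul_mul_conjTranspose_same P
    rwa [hP.eq] at this
  have hYP : (P * Y * P).PosSemidef := by
    have := hY.mul_mul_conjTranspose_same P
    rwa [hP.eq] at this
  have h3 : a • (P * X * P) = 0 := psd_eq_zero_of_add (psd_smul_R hXP ha.le) (psd_smul_R hYP hb.le) h1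
  have h4 : P * X * P = 0 := by
    have h5 : P * X * P = a⁻¹ • (a • (P * X * P)) := by
      rw [smul_smul, inv_mul_cancel₀ ha.ne', one_smul]
    rw [h5, h3, smul_zero]
  have h6 : X * P = 0 := by
    apply psd_sandwich_zero hX
    rwa [hP.eq]
  refine ⟨h6, ?_⟩
  have h7 := congrArg Matrix.conjTranspose h6
  rwa [Matrix.conjTranspose_mul, hP.eq, hX.isHermitian.eq, Matrix.conjTranspose_zero] at h7

lemma comm_of_not_extreme {P₁ P₂ : Matrix (Fin 2 × Fin 2) (Fin 2 × Fin 2) ℂ}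
    (h₁herm : P₁.IsHermitian) (h₁proj : P₁ * P₁ = P₁)
    (h₂herm : P₂.IsHermitian) (h₂proj : P₂ * P₂ = P₂)
    (hsum : P₁ + P₂ = 1)
    (hne : ![(1/2 : ℂ) • P₁, (1/2 : ℂ) • P₂] ∉ {W | IsTester 2 2 2 W}.extremePoints ℝ) :
    ∃ σ : Matrix (Fin 2) (Fin 2) ℂ, σ.IsHermitian ∧ σ.trace = 0 ∧ σ ≠ 0 ∧
      P₁ * ((1 : Matrix (Fin 2) (Fin 2) ℂ) ⊗ₖ σ)
        = ((1 : Matrix (Fin 2) (Fin 2) ℂ) ⊗ₖ σ) * P₁ := by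
  have hP₂eq : P₂ = 1 - P₁ := by rw [← hsum]; abel
  have hP21 : P₂ * P₁ = 0 := by
    rw [hP₂eq, Matrix.sub_mul, Matrix.one_mul, h₁proj, sub_self]
  have hP12 : P₁ * P₂ = 0 := by
    rw [hP₂eq, Matrix.mul_sub, Matrix.mul_one, h₁proj, sub_self]
  have hTS := tester_T h₁herm h₁proj h₂herm h₂proj hsum
  rw [mem_extremePoints] at hne
  push_neg at hne
  obtain ⟨T', hT'S, T'', hT''S, hseg, hne2⟩ := hne hTS
  obtain ⟨a, b, ha, hb, hab, habsum⟩ := hseg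
  have hT'neq : T' ≠ ![(1/2 : ℂ) • P₁, (1/2 : ℂ) • P₂] := by
    intro hT'eq
    apply hne2 hT'eq
    rw [hT'eq] at habsum
    have h6 : b • T'' = b • ![(1/2 : ℂ) • P₁, (1/2 : ℂ) • P₂] := by
      have h7 : a • ![(1/2 : ℂ) • P₁, (1/2 : ℂ) • P₂] + b • T''
          = a • ![(1/2 : ℂ) • P₁, (1/2 : ℂ) • P₂] + b • ![(1/2 : ℂ) • P₁, (1/2 : ℂ) • P₂] := by
        rw [habsum, ← add_smul, hab, one_smul]
      exact add_left_cancel h7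
    funext i
    ext x y
    have h8 := congrFun (congrFun (congrFun h6 i) x) y
    simp only [Pi.smul_apply, Matrix.smul_apply] at h8
    exact smul_right_injective ℂ hb.ne' h8
  -- component equations
  have hcomp0 : a • T' 0 + b • T'' 0 = (1/2 : ℂ) • P₁ := by
    have := congrFun habsum 0
    simpa using this
  have hcomp1 : a • T' 1 + b • T'' 1 = (1/2 : ℂ) • P₂ := by
    have := congrFun habsum 1
    simpa using this
  obtain ⟨hpsd', ρ', hρ'psd, hρ'tr, hρ'sum⟩ := hT'S
  obtain ⟨hpsd'', _⟩ := hT''S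
  rw [Fin.sum_univ_two] at hρ'sum
  -- support conditions
  have hZ0 : P₂ * ((1/2 : ℂ) • P₁) * P₂ = 0 := by
    rw [Matrix.mul_smul, Matrix.smul_mul, Matrix.mul_assoc, hP12, Matrix.mul_zero, smul_zero]
  have hZ1 : P₁ * ((1/2 : ℂ) • P₂) * P₁ = 0 := by
    rw [Matrix.mul_smul, Matrix.smul_mul, Matrix.mul_assoc, hP21, Matrix.mul_zero, smul_zero]
  obtain ⟨hT'0P₂, hP₂T'0⟩ := tester_support h₂herm (hpsd' 0) (hpsd'' 0) ha hb hcomp0 hZ0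
  obtain ⟨hT'1P₁, hP₁T'1⟩ := tester_support h₁herm (hpsd' 1) (hpsd'' 1) ha hb hcomp1 hZ1
  have hT'0P₁ : T' 0 * P₁ = T' 0 := by
    have h9 : T' 0 * P₁ + T' 0 * P₂ = T' 0 := by
      rw [← Matrix.mul_add, hsum, Matrix.mul_one]
    rw [hT'0P₂, add_zero] at h9
    exact h9
  have hP₁T'0 : P₁ * T' 0 = T' 0 := by
    have h9 : P₁ * T' 0 + P₂ * T' 0 = T' 0 := by
      rw [← Matrix.add_mul, hsum, Matrix.one_mul]
    rw [hP₂T'0, add_zero] at h9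
    exact h9
  set σ : Matrix (Fin 2) (Fin 2) ℂ := ρ' - (1/2 : ℂ) • 1 with hσdef
  have hhalfherm : ((1/2 : ℂ) • (1 : Matrix (Fin 2) (Fin 2) ℂ)).IsHermitian := by
    show _ᴴ = _
    rw [Matrix.conjTranspose_smul, Matrix.conjTranspose_one]
    congr 1
    simp [Complex.ext_iff]
  have hσherm : σ.IsHermitian := hρ'psd.isHermitian.sub hhalfherm
  have hσtr : σ.trace = 0 := by
    rw [hσdef, Matrix.trace_sub, hρ'tr, Matrix.trace_smul, Matrix.trace_one]
    simp
  have hρσ : ρ' = σ + (1/2 : ℂ) • 1 := by rw [hσdef]; abel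
  have hkρ : (1 : Matrix (Fin 2) (Fin 2) ℂ) ⊗ₖ ρ'
      = (1 : Matrix (Fin 2) (Fin 2) ℂ) ⊗ₖ σ + (1/2 : ℂ) • 1 := by
    rw [hρσ, kronecker_add, kronecker_smul, one_kronecker_one]
  have hKσ : (1 : Matrix (Fin 2) (Fin 2) ℂ) ⊗ₖ σ = (T' 0 + T' 1) - (1/2 : ℂ) • 1 := by
    rw [hkρ] at hρ'sum
    exact (eq_sub_of_add_eq hρ'sum.symm)
  refine ⟨σ, hσherm, hσtr, ?_, ?_⟩
  · -- σ ≠ 0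
    intro hσ0
    apply hT'neq
    have hρ'eq : ρ' = (1/2 : ℂ) • 1 := by
      rw [hρσ, hσ0, zero_add]
    have hsum' : T' 0 + T' 1 = (1/2 : ℂ) • (1 : Matrix (Fin 2 × Fin 2) (Fin 2 × Fin 2) ℂ) := by
      rw [hρ'sum, hρ'eq, kronecker_smul, one_kronecker_one]
    have hT'0eq : T' 0 = (1/2 : ℂ) • P₁ := by
      have h10 : P₁ * (T' 0 + T' 1) * P₁ = T' 0 := by
        rw [Matrix.mul_add, Matrix.add_mul, hP₁T'0, hP₁T'1, Matrix.zero_mul, add_zero, hT'0P₁]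
      rw [hsum', Matrix.mul_smul, Matrix.smul_mul, Matrix.mul_one, h₁proj] at h10
      exact h10.symm
    have hT'1eq : T' 1 = (1/2 : ℂ) • P₂ := by
      have hT'1P₂ : T' 1 * P₂ = T' 1 := by
        have h9 : T' 1 * P₁ + T' 1 * P₂ = T' 1 := by
          rw [← Matrix.mul_add, hsum, Matrix.mul_one]
        rw [hT'1P₁, zero_add] at h9
        exact h9
      have hP₂T'1 : P₂ * T' 1 = T' 1 := by
        have h9 : P₁ * T' 1 + P₂ * T' 1 = T' 1 := by
          rw [← Matrix.add_mul, hsum, Matrix.one_mul]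
        rw [hP₁T'1, zero_add] at h9
        exact h9
      have h10 : P₂ * (T' 0 + T' 1) * P₂ = T' 1 := by
        rw [Matrix.mul_add, Matrix.add_mul, hP₂T'0, Matrix.zero_mul, zero_add, hP₂T'1, hT'1P₂]
      rw [hsum', Matrix.mul_smul, Matrix.smul_mul, Matrix.mul_one, h₂proj] at h10
      exact h10.symm
    funext i
    fin_cases i
    · exact hT'0eq
    · exact hT'1eq
  · -- commutation
    rw [hKσ, Matrix.mul_sub, Matrix.sub_mul, Matrix.mul_add, Matrix.add_mul,
      hP₁T'0, hP₁T'1, hT'0P₁, hT'1P₁, add_zero, Matrix.mul_smul, Matrix.smul_mul,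
      Matrix.mul_one, Matrix.one_mul]

lemma prod_norm {f e : Fin 2 → ℂ} (hf : ∑ j, star (f j) * f j = 1)
    (he : ∑ j, star (e j) * e j = 1) :
    star (fun p : Fin 2 × Fin 2 => f p.1 * e p.2) ⬝ᵥ (fun p : Fin 2 × Fin 2 => f p.1 * e p.2)
      = 1 := by
  simp only [Fin.sum_univ_two, Pi.star_apply] at hf he
  simp only [dotProduct, Fintype.sum_prod_type, Fin.sum_univ_two, Pi.star_apply, star_mul']
  linear_combination (star (e 0) * e 0 + star (e 1) * e 1) * hf + he

lemma RR_sum {e f f' : Fin 2 → ℂ} (hf : ∑ j, star (f j) * f j = 1)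
    (hf' : ∑ j, star (f' j) * f' j = 1) (ho : ∑ j, star (f j) * f' j = 0) :
    vecMulVec (fun p : Fin 2 × Fin 2 => f p.1 * e p.2) (star fun p : Fin 2 × Fin 2 => f p.1 * e p.2)
    + vecMulVec (fun p : Fin 2 × Fin 2 => f' p.1 * e p.2)
        (star fun p : Fin 2 × Fin 2 => f' p.1 * e p.2)
    = (1 : Matrix (Fin 2) (Fin 2) ℂ) ⊗ₖ vecMulVec e (star e) := by
  have hc := pair_complete hf hf' ho
  ext ⟨i, j⟩ ⟨k, l⟩
  have h1 := congrFun (congrFun hc i) k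
  simp only [Matrix.add_apply, vecMulVec_apply, Pi.star_apply] at h1
  simp only [Matrix.add_apply, vecMulVec_apply, Pi.star_apply, kroneckerMap_apply, star_mul']
  linear_combination (e j * star (e l)) * h1

lemma notext_case1 {P₁ P₂ : Matrix (Fin 2 × Fin 2) (Fin 2 × Fin 2) ℂ}
    (h₁herm : P₁.IsHermitian) (h₁proj : P₁ * P₁ = P₁) (h₁rank : P₁.rank = 2)
    (h₂herm : P₂.IsHermitian) (h₂proj : P₂ * P₂ = P₂)
    (hsum : P₁ + P₂ = 1)
    {v : Fin 2 → ℂ} (hv : ∑ j, star (v j) * v j = 1)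
    (hP₁ : P₁ = (1 : Matrix (Fin 2) (Fin 2) ℂ) ⊗ₖ Matrix.vecMulVec v (star v)) :
    ![(1/2 : ℂ) • P₁, (1/2 : ℂ) • P₂] ∉ {W | IsTester 2 2 2 W}.extremePoints ℝ := by
  have hq : (0:ℂ) ≤ 1/4 := cle' (by norm_num) (by norm_num)
  have hq3 : (0:ℂ) ≤ 3/4 := cle' (by norm_num) (by norm_num)
  have hh : (0:ℂ) ≤ 1/2 := cle' (by norm_num) (by norm_num)
  have hkp : (1 : Matrix (Fin 2) (Fin 2) ℂ) ⊗ₖ vecMulVec (perp v) (star (perp v)) = P₂ := by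
    have h2 : (1 : Matrix (Fin 2) (Fin 2) ℂ) ⊗ₖ vecMulVec v (star v)
        + (1 : Matrix (Fin 2) (Fin 2) ℂ) ⊗ₖ vecMulVec (perp v) (star (perp v)) = 1 := by
      rw [← kronecker_add, perp_complete hv, one_kronecker_one]
    have h3 := eq_sub_of_add_eq' h2
    rw [h3, ← hP₁, ← hsum]
    abel
  apply not_extreme_of_pert ((1/4 : ℂ) • P₁) (-((1/4 : ℂ) • P₂))
    (ρ' := (1/4 : ℂ) • 1 + (1/2 : ℂ) • vecMulVec v (star v))
    (ρ'' := (1/4 : ℂ) • 1 + (1/2 : ℂ) • vecMulVec (perp v) (star (perp v)))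
  · rw [show (1/2 : ℂ) • P₁ + (1/4 : ℂ) • P₁ = (3/4 : ℂ) • P₁ by module]
    exact psd_smul (herm_idem_psd h₁herm h₁proj) hq3
  · rw [show (1/2 : ℂ) • P₂ + -((1/4 : ℂ) • P₂) = (1/4 : ℂ) • P₂ by module]
    exact psd_smul (herm_idem_psd h₂herm h₂proj) hq
  · rw [show (1/2 : ℂ) • P₁ - (1/4 : ℂ) • P₁ = (1/4 : ℂ) • P₁ by module]
    exact psd_smul (herm_idem_psd h₁herm h₁proj) hq
  · rw [show (1/2 : ℂ) • P₂ - -((1/4 : ℂ) • P₂) = (3/4 : ℂ) • P₂ by module]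
    exact psd_smul (herm_idem_psd h₂herm h₂proj) hq3
  · exact (psd_smul Matrix.PosSemidef.one hq).add (psd_smul (psd_vecMulVec v) hh)
  · rw [Matrix.trace_add, Matrix.trace_smul, Matrix.trace_smul, Matrix.trace_one, trace_vmv hv]
    norm_num
  · exact (psd_smul Matrix.PosSemidef.one hq).add (psd_smul (psd_vecMulVec (perp v)) hh)
  · rw [Matrix.trace_add, Matrix.trace_smul, Matrix.trace_smul, Matrix.trace_one,
      trace_vmv (perp_norm hv)]
    norm_num
  · rw [kronecker_add, kronecker_smul, kronecker_smul, one_kronecker_one, ← hP₁, ← hsum]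
    module
  · rw [kronecker_add, kronecker_smul, kronecker_smul, one_kronecker_one, hkp, ← hsum]
    module
  · intro h
    have hP₁ne : P₁ ≠ 0 := by
      intro h0
      rw [h0, Matrix.rank_zero] at h₁rank
      exact two_ne_zero h₁rank.symm
    apply hP₁ne
    have : P₁ = (4 : ℂ) • ((1/4 : ℂ) • P₁) := by
      rw [smul_smul]; norm_num
    rw [this, h, smul_zero]

lemma notext_case2 {P₁ P₂ : Matrix (Fin 2 × Fin 2) (Fin 2 × Fin 2) ℂ}
    (h₁herm : P₁.IsHermitian) (h₁proj : P₁ * P₁ = P₁)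
    (h₂herm : P₂.IsHermitian) (h₂proj : P₂ * P₂ = P₂)
    (hsum : P₁ + P₂ = 1)
    {e f f' : Fin 2 → ℂ}
    (he : ∑ j, star (e j) * e j = 1) (hf : ∑ j, star (f j) * f j = 1)
    (hf' : ∑ j, star (f' j) * f' j = 1) (ho : ∑ j, star (f j) * f' j = 0)
    (hx : (fun p : Fin 2 × Fin 2 => f p.1 * e p.2) ∈ LinearMap.range P₁.mulVecLin)
    (hx' : (fun p : Fin 2 × Fin 2 => f' p.1 * e p.2) ∈ LinearMap.range P₂.mulVecLin) :
    ![(1/2 : ℂ) • P₁, (1/2 : ℂ) • P₂] ∉ {W | IsTester 2 2 2 W}.extremePoints ℝ := by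
  have hq : (0:ℂ) ≤ 1/4 := cle' (by norm_num) (by norm_num)
  have hh : (0:ℂ) ≤ 1/2 := cle' (by norm_num) (by norm_num)
  set x : Fin 2 × Fin 2 → ℂ := fun p => f p.1 * e p.2 with hxdef
  set x' : Fin 2 × Fin 2 → ℂ := fun p => f' p.1 * e p.2 with hx'def
  have hP₂eq : P₂ = 1 - P₁ := by rw [← hsum]; abel
  have hP21 : P₂ * P₁ = 0 := by
    rw [hP₂eq, Matrix.sub_mul, Matrix.one_mul, h₁proj, sub_self]
  have hP12 : P₁ * P₂ = 0 := by
    rw [hP₂eq, Matrix.mul_sub, Matrix.mul_one, h₁proj, sub_self]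
  have hPx : P₁ *ᵥ x = x := by
    obtain ⟨z, hz⟩ := hx
    rw [Matrix.mulVecLin_apply] at hz
    rw [← hz, Matrix.mulVec_mulVec, h₁proj]
  have hPx' : P₂ *ᵥ x' = x' := by
    obtain ⟨z, hz⟩ := hx'
    rw [Matrix.mulVecLin_apply] at hz
    rw [← hz, Matrix.mulVec_mulVec, h₂proj]
  set R : Matrix (Fin 2 × Fin 2) (Fin 2 × Fin 2) ℂ := vecMulVec x (star x) with hRdef
  set R' : Matrix (Fin 2 × Fin 2) (Fin 2 × Fin 2) ℂ := vecMulVec x' (star x') with hR'def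
  have hxnorm : star x ⬝ᵥ x = 1 := prod_norm hf he
  have hx'norm : star x' ⬝ᵥ x' = 1 := prod_norm hf' he
  have hRx : R *ᵥ x = x := by
    rw [hRdef, vecMulVec_mulVec', hxnorm, one_smul]
  have hP₁R : P₁ * R = R := by rw [hRdef, mul_vecMulVec', hPx]
  have hRP₁ : R * P₁ = R := by
    have h7 := congrArg Matrix.conjTranspose hP₁R
    rwa [Matrix.conjTranspose_mul, h₁herm.eq, (herm_vecMulVec x).eq] at h7
  have hP₂R' : P₂ * R' = R' := by rw [hR'def, mul_vecMulVec', hPx']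
  have hR'P₂ : R' * P₂ = R' := by
    have h7 := congrArg Matrix.conjTranspose hP₂R'
    rwa [Matrix.conjTranspose_mul, h₂herm.eq, (herm_vecMulVec x').eq] at h7
  have hRidem : R * R = R := by
    rw [hRdef, mul_vecMulVec']
    rw [vecMulVec_mulVec', hxnorm, one_smul]
  have hR'idem : R' * R' = R' := by
    rw [hR'def, mul_vecMulVec']
    rw [vecMulVec_mulVec', hx'norm, one_smul]
  have hsandR : P₁ * (1 - R) * P₁ = P₁ - R := by
    rw [Matrix.mul_sub, Matrix.mul_one, Matrix.sub_mul, h₁proj, hP₁R, hRP₁]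
  have hsandR' : P₂ * (1 - R') * P₂ = P₂ - R' := by
    rw [Matrix.mul_sub, Matrix.mul_one, Matrix.sub_mul, h₂proj, hP₂R', hR'P₂]
  have hpsd1R : (1 - R).PosSemidef := by
    apply herm_idem_psd (Matrix.isHermitian_one.sub (herm_vecMulVec x))
    have h8 : (1 - R) * (1 - R) = 1 - R - R + R * R := by noncomm_ring
    rw [h8, hRidem]; abel
  have hpsd1R' : (1 - R').PosSemidef := by
    apply herm_idem_psd (Matrix.isHermitian_one.sub (herm_vecMulVec x'))
    have h8 : (1 - R') * (1 - R') = 1 - R' - R' + R' * R' := by noncomm_ring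
    rw [h8, hR'idem]; abel
  have hpsdPR : (P₁ - R).PosSemidef := by
    rw [← hsandR]
    have := hpsd1R.mul_mul_conjTranspose_same P₁
    rwa [h₁herm.eq] at this
  have hpsdPR' : (P₂ - R').PosSemidef := by
    rw [← hsandR']
    have := hpsd1R'.mul_mul_conjTranspose_same P₂
    rwa [h₂herm.eq] at this
  have hRR : R + R' = (1 : Matrix (Fin 2) (Fin 2) ℂ) ⊗ₖ vecMulVec e (star e) :=
    RR_sum hf hf' ho
  have hkp : (1 : Matrix (Fin 2) (Fin 2) ℂ) ⊗ₖ vecMulVec (perp e) (star (perp e))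
      = (P₁ + P₂) - (R + R') := by
    have h2 : (1 : Matrix (Fin 2) (Fin 2) ℂ) ⊗ₖ vecMulVec e (star e)
        + (1 : Matrix (Fin 2) (Fin 2) ℂ) ⊗ₖ vecMulVec (perp e) (star (perp e)) = 1 := by
      rw [← kronecker_add, perp_complete he, one_kronecker_one]
    have h3 := eq_sub_of_add_eq' h2
    rw [h3, ← hRR, hsum]
  apply not_extreme_of_pert ((1/2 : ℂ) • R - (1/4 : ℂ) • P₁) ((1/2 : ℂ) • R' - (1/4 : ℂ) • P₂)
    (ρ' := (1/4 : ℂ) • 1 + (1/2 : ℂ) • vecMulVec e (star e))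
    (ρ'' := (1/4 : ℂ) • 1 + (1/2 : ℂ) • vecMulVec (perp e) (star (perp e)))
  · rw [show (1/2 : ℂ) • P₁ + ((1/2 : ℂ) • R - (1/4 : ℂ) • P₁)
        = (1/4 : ℂ) • P₁ + (1/2 : ℂ) • R by module]
    exact (psd_smul (herm_idem_psd h₁herm h₁proj) hq).add (psd_smul (psd_vecMulVec x) hh)
  · rw [show (1/2 : ℂ) • P₂ + ((1/2 : ℂ) • R' - (1/4 : ℂ) • P₂)
        = (1/4 : ℂ) • P₂ + (1/2 : ℂ) • R' by module]
    exact (psd_smul (herm_idem_psd h₂herm h₂proj) hq).add (psd_smul (psd_vecMulVec x') hh)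
  · rw [show (1/2 : ℂ) • P₁ - ((1/2 : ℂ) • R - (1/4 : ℂ) • P₁)
        = (1/4 : ℂ) • P₁ + (1/2 : ℂ) • (P₁ - R) by module]
    exact (psd_smul (herm_idem_psd h₁herm h₁proj) hq).add (psd_smul hpsdPR hh)
  · rw [show (1/2 : ℂ) • P₂ - ((1/2 : ℂ) • R' - (1/4 : ℂ) • P₂)
        = (1/4 : ℂ) • P₂ + (1/2 : ℂ) • (P₂ - R') by module]
    exact (psd_smul (herm_idem_psd h₂herm h₂proj) hq).add (psd_smul hpsdPR' hh)
  · exact (psd_smul Matrix.PosSemidef.one hq).add (psd_smul (psd_vecMulVec e) hh)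
  · rw [Matrix.trace_add, Matrix.trace_smul, Matrix.trace_smul, Matrix.trace_one, trace_vmv he]
    norm_num
  · exact (psd_smul Matrix.PosSemidef.one hq).add (psd_smul (psd_vecMulVec (perp e)) hh)
  · rw [Matrix.trace_add, Matrix.trace_smul, Matrix.trace_smul, Matrix.trace_one,
      trace_vmv (perp_norm he)]
    norm_num
  · rw [kronecker_add, kronecker_smul, kronecker_smul, one_kronecker_one, ← hRR, ← hsum]
    module
  · rw [kronecker_add, kronecker_smul, kronecker_smul, one_kronecker_one, hkp, ← hsum]
    module
  · intro h
    have h0 : ((1/2 : ℂ) • R - (1/4 : ℂ) • P₁) *ᵥ x = (1/4 : ℂ) • x := by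
      rw [Matrix.sub_mulVec, Matrix.smul_mulVec, Matrix.smul_mulVec, hRx, hPx]
      funext p
      simp only [Pi.sub_apply, Pi.smul_apply, smul_eq_mul]
      ring
    rw [h, Matrix.zero_mulVec] at h0
    have hx0 : x = 0 := by
      funext p
      have := congrFun h0 p
      simp only [Pi.zero_apply, Pi.smul_apply, smul_eq_mul] at this ⊢
      have h4 : (1/4 : ℂ) ≠ 0 := by norm_num
      field_simp at this
      simpa using this.symm
    rw [hx0] at hxnorm
    simp [dotProduct] at hxnorm

end

theorem stmt_12 (P₁ P₂ : Matrix (Fin 2 × Fin 2) (Fin 2 × Fin 2) ℂ)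
    (h₁herm : P₁.IsHermitian) (h₁proj : P₁ * P₁ = P₁) (h₁rank : P₁.rank = 2)
    (h₂herm : P₂.IsHermitian) (h₂proj : P₂ * P₂ = P₂) (h₂rank : P₂.rank = 2)
    (hsum : P₁ + P₂ = 1) :
    ![(1/2 : ℂ) • P₁, (1/2 : ℂ) • P₂] ∉ {W | IsTester 2 2 2 W}.extremePoints ℝ ↔
      ((∃ v : Fin 2 → ℂ, (∑ j, star (v j) * v j = 1) ∧
          P₁ = (1 : Matrix (Fin 2) (Fin 2) ℂ) ⊗ₖ Matrix.vecMulVec v (star v)) ∨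
        (∃ e f f' : Fin 2 → ℂ,
          (∑ j, star (e j) * e j = 1) ∧ (∑ j, star (f j) * f j = 1) ∧
          (∑ j, star (f' j) * f' j = 1) ∧ (∑ j, star (f j) * f' j = 0) ∧
          (fun p : Fin 2 × Fin 2 => f p.1 * e p.2) ∈ LinearMap.range P₁.mulVecLin ∧
          (fun p : Fin 2 × Fin 2 => f' p.1 * e p.2) ∈ LinearMap.range P₂.mulVecLin)) := by
  constructor
  · intro hne
    obtain ⟨σ, h1, h2, h3, h4⟩ := comm_of_not_extreme h₁herm h₁proj h₂herm h₂proj hsum hne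
    exact rhs_of_comm h₁herm h₁proj h₁rank h₂rank hsum h1 h2 h3 h4
  · rintro (⟨v, hv, hP₁⟩ | ⟨e, f, f', he, hf, hf', ho, hx, hx'⟩)
    · exact notext_case1 h₁herm h₁proj h₁rank h₂herm h₂proj hsum hv hP₁
    · exact notext_case2 h₁herm h₁proj h₂herm h₂proj hsum he hf hf' ho hx hx'
end

section
/- Let ℋ₂ = ℋ₁ = ℂ² and let {T₁, T₂} be an extremal two-outcome quantum 1-tester on ℂ²⊗ℂ² whose normalization is T₁ + T₂ = I₂⊗ρ with rank(ρ) = 2. Then the pair of ranks (rank T₁, rank T₂) is (1,3), (3,1), or (2,2). -/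
open Matrix Kronecker
open scoped ComplexOrder

set_option linter.unusedSectionVars false

variable {n : Type*} [Fintype n] [DecidableEq n]

lemma outer_isHermitian (v : n → ℂ) : (vecMulVec v (star v)).IsHermitian := by
  ext i j
  simp [conjTranspose_apply, vecMulVec_apply, mul_comm]

lemma outer_posSemidef (v : n → ℂ) : (vecMulVec v (star v)).PosSemidef := by
  rw [vecMulVec_eq Unit, ← conjTranspose_replicateCol]
  exact posSemidef_self_mul_conjTranspose _

lemma psd_real_smul {A : Matrix n n ℂ} (hA : A.PosSemidef) {c : ℝ} (hc : 0 ≤ c) :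
    ((c : ℂ) • A).PosSemidef := by
  refine Matrix.PosSemidef.of_dotProduct_mulVec_nonneg ?_ ?_
  · have h1 := hA.1
    unfold Matrix.IsHermitian at *
    rw [conjTranspose_smul, h1]
    congr 1
    simp
  · intro x
    rw [smul_mulVec, dotProduct_smul, smul_eq_mul]
    have h := hA.dotProduct_mulVec_nonneg x
    rw [Complex.nonneg_iff] at h ⊢
    constructor
    · simp only [Complex.mul_re, Complex.ofReal_re, Complex.ofReal_im, zero_mul, sub_zero]
      exact mul_nonneg hc h.1
    · simp only [Complex.mul_im, Complex.ofReal_re, Complex.ofReal_im, zero_mul, add_zero]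
      rw [← h.2]; ring

set_option linter.unusedSectionVars false

lemma psd_sub_outer {T : Matrix n n ℂ} (hT : T.PosSemidef) (w : n → ℂ) :
    ∃ ε : ℝ, 0 < ε ∧
      (T - (ε : ℂ) • vecMulVec (T *ᵥ w) (star (T *ᵥ w))).PosSemidef := by
  classical
  obtain ⟨S, hS, hSS⟩ : ∃ S : Matrix n n ℂ, S.PosSemidef ∧ S * S = T := by
    open scoped MatrixOrder in
    exact ⟨CFC.sqrt T, (CFC.sqrt_nonneg T).posSemidef, CFC.sqrt_mul_sqrt_self T hT.nonneg⟩
  set u : n → ℂ := S *ᵥ w with hu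
  have hv : T *ᵥ w = S *ᵥ u := by rw [hu, mulVec_mulVec, hSS]
  -- Euclidean space versions
  set u' : EuclideanSpace ℂ n := (WithLp.equiv 2 _).symm u with hu'
  refine ⟨1 / (‖u'‖ ^ 2 + 1), by positivity, ?_⟩
  set ε : ℝ := 1 / (‖u'‖ ^ 2 + 1) with hε
  have hεpos : 0 < ε := by positivity
  refine Matrix.PosSemidef.of_dotProduct_mulVec_nonneg ?_ ?_
  · exact hT.1.sub ((psd_real_smul (outer_posSemidef (T *ᵥ w)) hεpos.le).1)
  · intro x
    set y : n → ℂ := S *ᵥ x with hy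
    set y' : EuclideanSpace ℂ n := (WithLp.equiv 2 _).symm y with hy'
    -- ⟪y', u'⟫ etc.
    have hdot : ∀ z : n → ℂ, star x ⬝ᵥ (S *ᵥ z) = star y ⬝ᵥ z := by
      intro z
      rw [dotProduct_mulVec, hy, star_mulVec, hS.1]
    have houter : (vecMulVec (T *ᵥ w) (star (T *ᵥ w))) *ᵥ x
        = (star (T *ᵥ w) ⬝ᵥ x) • (T *ᵥ w) := by
      ext i
      simp only [mulVec, dotProduct, vecMulVec_apply, Pi.smul_apply, smul_eq_mul]
      rw [Finset.sum_mul]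
      apply Finset.sum_congr rfl
      intro j _
      ring
    have hq : star x ⬝ᵥ ((T - (ε : ℂ) • vecMulVec (T *ᵥ w) (star (T *ᵥ w))) *ᵥ x)
        = (star y ⬝ᵥ y) - (ε : ℂ) * ((star (T *ᵥ w) ⬝ᵥ x) * (star y ⬝ᵥ u)) := by
      rw [sub_mulVec, dotProduct_sub, smul_mulVec, dotProduct_smul, houter,
        dotProduct_smul]
      have h1 : star x ⬝ᵥ (T *ᵥ x) = star y ⬝ᵥ y := by
        have : T *ᵥ x = S *ᵥ y := by rw [hy, mulVec_mulVec, hSS]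
        rw [this, hdot]
      have h2 : star x ⬝ᵥ (T *ᵥ w) = star y ⬝ᵥ u := by rw [hv, hdot]
      rw [h1, smul_eq_mul, h2, smul_eq_mul]
    rw [hq]
    -- identify with inner products
    have hyy : star y ⬝ᵥ y = ((‖y'‖ ^ 2 : ℝ) : ℂ) := by
      rw [dotProduct_comm]
      exact_mod_cast inner_self_eq_norm_sq_to_K (𝕜 := ℂ) y'
    have hyu : star y ⬝ᵥ u = (inner ℂ y' u' : ℂ) := by
      rw [dotProduct_comm]; rfl
    have hconj : star (T *ᵥ w) ⬝ᵥ x = star (star x ⬝ᵥ (T *ᵥ w)) := by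
      simp only [dotProduct, star_sum, star_mul', star_star, Pi.star_apply]
      apply Finset.sum_congr rfl
      intro i _
      ring
    have h2 : star x ⬝ᵥ (T *ᵥ w) = star y ⬝ᵥ u := by
      rw [hv, hdot]
    rw [hconj, h2, hyu]
    have : star (inner ℂ y' u' : ℂ) * (inner ℂ y' u' : ℂ) = ((‖(inner ℂ y' u' : ℂ)‖ ^ 2 : ℝ) : ℂ) := by
      rw [Complex.star_def, ← Complex.normSq_eq_conj_mul_self, Complex.normSq_eq_norm_sq]
    rw [this, hyy]
    rw [← Complex.ofReal_mul, ← Complex.ofReal_sub, Complex.zero_le_real]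
    have hCS : ‖(inner ℂ y' u' : ℂ)‖ ≤ ‖y'‖ * ‖u'‖ := norm_inner_le_norm y' u'
    have hCS2 : ‖(inner ℂ y' u' : ℂ)‖ ^ 2 ≤ ‖y'‖ ^ 2 * ‖u'‖ ^ 2 := by
      rw [← mul_pow]
      exact pow_le_pow_left₀ (norm_nonneg _) hCS 2
    have hn : (0:ℝ) ≤ ‖y'‖ ^ 2 := by positivity
    have hd : (0:ℝ) < ‖u'‖ ^ 2 + 1 := by positivity
    rw [hε]
    rw [div_mul_eq_mul_div, sub_nonneg, div_le_iff₀ hd]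
    nlinarith [norm_nonneg u', norm_nonneg y']

lemma psd_kron {a b : ℕ} {A : Matrix (Fin a) (Fin a) ℂ} {B : Matrix (Fin b) (Fin b) ℂ}
    (hA : A.PosSemidef) (hB : B.PosSemidef) : (A ⊗ₖ B).PosSemidef := by
  obtain ⟨A', hA'⟩ : ∃ A' : Matrix (Fin a) (Fin a) ℂ, A = A'ᴴ * A' := by
    open scoped MatrixOrder in exact CStarAlgebra.nonneg_iff_eq_star_mul_self.mp hA.nonneg
  obtain ⟨B', hB'⟩ : ∃ B' : Matrix (Fin b) (Fin b) ℂ, B = B'ᴴ * B' := by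
    open scoped MatrixOrder in exact CStarAlgebra.nonneg_iff_eq_star_mul_self.mp hB.nonneg
  have key : A ⊗ₖ B = (A' ⊗ₖ B')ᴴ * (A' ⊗ₖ B') := by
    have hct : (A' ⊗ₖ B')ᴴ = A'ᴴ ⊗ₖ B'ᴴ := by
      ext ⟨i, j⟩ ⟨k, l⟩
      simp [conjTranspose_apply, kroneckerMap_apply]
    rw [hct, ← Matrix.mul_kronecker_mul, ← hA', ← hB']
  rw [key]
  exact Matrix.posSemidef_conjTranspose_mul_self _

lemma rank_full_isUnit {m : ℕ} {A : Matrix (Fin m) (Fin m) ℂ} (h : A.rank = m) : IsUnit A := by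
  rw [← Matrix.mulVec_surjective_iff_isUnit]
  have : LinearMap.range A.mulVecLin = ⊤ := by
    apply Submodule.eq_top_of_finrank_eq
    rw [← Matrix.rank, h]
    simp
  intro v
  have : v ∈ LinearMap.range A.mulVecLin := this ▸ Submodule.mem_top
  obtain ⟨w, hw⟩ := this
  exact ⟨w, hw⟩

lemma kron_sub {a b : ℕ} (A : Matrix (Fin a) (Fin a) ℂ) (B C : Matrix (Fin b) (Fin b) ℂ) :
    A ⊗ₖ (B - C) = A ⊗ₖ B - A ⊗ₖ C := by
  ext ⟨i, j⟩ ⟨k, l⟩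
  simp [Matrix.kroneckerMap_apply, mul_sub]

lemma isTester_pair {A B : Matrix (Fin 2 × Fin 2) (Fin 2 × Fin 2) ℂ}
    (hA : A.PosSemidef) (hB : B.PosSemidef) {τ : Matrix (Fin 2) (Fin 2) ℂ}
    (hτ : τ.PosSemidef) (hτtr : τ.trace = 1)
    (hsum : A + B = (1 : Matrix (Fin 2) (Fin 2) ℂ) ⊗ₖ τ) : IsTester 2 2 2 ![A, B] := by
  refine ⟨?_, τ, hτ, hτtr, ?_⟩
  · intro i
    fin_cases i <;> simpa
  · rw [Fin.sum_univ_two]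
    simpa using hsum

lemma rank_zero_eq_zero {A : Matrix n n ℂ} (h : A.rank = 0) : A = 0 := by
  have h0 : LinearMap.range A.mulVecLin = ⊥ := by
    rw [← Submodule.finrank_eq_zero]
    exact h
  have h1 : A.mulVecLin = 0 := LinearMap.range_eq_bot.mp h0
  ext i j
  have h2 : A *ᵥ Pi.single j 1 = 0 := by
    have := congrFun (congrArg DFunLike.coe h1) (Pi.single j 1)
    simpa using this
  have h3 := congrFun h2 i
  rw [Matrix.mulVec_single] at h3
  simpa using h3

theorem stmt_13 (T₁ T₂ : Matrix (Fin 2 × Fin 2) (Fin 2 × Fin 2) ℂ)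
    (ρ : Matrix (Fin 2) (Fin 2) ℂ)
    (hρ : ρ.PosSemidef) (hρtr : ρ.trace = 1) (hρrank : ρ.rank = 2)
    (h₁ : T₁.PosSemidef) (h₂ : T₂.PosSemidef)
    (hnorm : T₁ + T₂ = (1 : Matrix (Fin 2) (Fin 2) ℂ) ⊗ₖ ρ)
    (hext : ![T₁, T₂] ∈ {W | IsTester 2 2 2 W}.extremePoints ℝ) :
    (T₁.rank, T₂.rank) = (1, 3) ∨ (T₁.rank, T₂.rank) = (3, 1) ∨
      (T₁.rank, T₂.rank) = (2, 2) := by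
  classical
  -- ρ is invertible
  have hρunit : IsUnit ρ := rank_full_isUnit hρrank
  have hAunit : IsUnit ((1 : Matrix (Fin 2) (Fin 2) ℂ) ⊗ₖ ρ) := by
    rw [Matrix.isUnit_iff_isUnit_det, Matrix.det_kronecker]
    simp only [Matrix.det_one, one_pow, one_mul]
    exact ((Matrix.isUnit_iff_isUnit_det ρ).mp hρunit).pow _
  have hrank4 : (T₁ + T₂).rank = 4 := by
    rw [hnorm, Matrix.rank_of_isUnit _ hAunit]
    simp
  -- extremality gives
  rw [mem_extremePoints] at hext
  obtain ⟨hmem, hP⟩ := hext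
  have hkey : ∀ D₁ D₂ : Matrix (Fin 2 × Fin 2) (Fin 2 × Fin 2) ℂ,
      IsTester 2 2 2 ![T₁ + D₁, T₂ + D₂] → IsTester 2 2 2 ![T₁ - D₁, T₂ - D₂] →
      D₁ = 0 ∧ D₂ = 0 := by
    intro D₁ D₂ hp hm
    have hseg : ![T₁, T₂] ∈ openSegment ℝ ![T₁ + D₁, T₂ + D₂] ![T₁ - D₁, T₂ - D₂] := by
      refine ⟨1/2, 1/2, by norm_num, by norm_num, by norm_num, ?_⟩
      have h0 : ((1/2 : ℝ) • ![T₁ + D₁, T₂ + D₂] + (1/2 : ℝ) • ![T₁ - D₁, T₂ - D₂])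
          = ![(1/2 : ℝ) • (T₁ + D₁) + (1/2 : ℝ) • (T₁ - D₁),
              (1/2 : ℝ) • (T₂ + D₂) + (1/2 : ℝ) • (T₂ - D₂)] := by
        funext i
        fin_cases i <;> rfl
      rw [h0]
      have hX : (1/2 : ℝ) • (T₁ + D₁) + (1/2 : ℝ) • (T₁ - D₁) = T₁ := by module
      have hY : (1/2 : ℝ) • (T₂ + D₂) + (1/2 : ℝ) • (T₂ - D₂) = T₂ := by module
      rw [hX, hY]
    obtain ⟨e1, _⟩ := hP _ hp _ hm hseg
    constructor
    · have := congrFun e1 0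
      simp only [Matrix.cons_val_zero] at this
      rwa [add_eq_left] at this
    · have := congrFun e1 1
      simp only [Matrix.cons_val_one, Matrix.head_cons, Matrix.cons_val_zero] at this
      rwa [add_eq_left] at this
  -- rank bounds
  have hub1 : T₁.rank ≤ 4 := by
    have := Matrix.rank_le_card_width T₁
    simpa using this
  have hub2 : T₂.rank ≤ 4 := by
    have := Matrix.rank_le_card_width T₂
    simpa using this
  set R₁ := LinearMap.range T₁.mulVecLin with hR₁
  set R₂ := LinearMap.range T₂.mulVecLin with hR₂
  have hfintop : Module.finrank ℂ ((Fin 2 × Fin 2) → ℂ) = 4 := by simp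
  have hsupinf : Module.finrank ℂ ↥(R₁ ⊔ R₂) + Module.finrank ℂ ↥(R₁ ⊓ R₂)
      = T₁.rank + T₂.rank := Submodule.finrank_sup_add_finrank_inf_eq R₁ R₂
  have hsumrank : 4 ≤ T₁.rank + T₂.rank := by
    have hle : LinearMap.range (T₁ + T₂).mulVecLin ≤ R₁ ⊔ R₂ := by
      rintro v ⟨x, rfl⟩
      rw [Matrix.mulVecLin_add]
      exact Submodule.add_mem_sup ⟨x, rfl⟩ ⟨x, rfl⟩
    have h4 : 4 ≤ Module.finrank ℂ ↥(R₁ ⊔ R₂) := by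
      rw [← hrank4]
      exact Submodule.finrank_mono hle
    omega
  -- ranks sum to at most 4
  have hle4 : T₁.rank + T₂.rank ≤ 4 := by
    by_contra hgt
    push_neg at hgt
    have hsup_le : Module.finrank ℂ ↥(R₁ ⊔ R₂) ≤ 4 := by
      have := Submodule.finrank_le (R₁ ⊔ R₂)
      rwa [hfintop] at this
    have hinf_pos : R₁ ⊓ R₂ ≠ ⊥ := by
      intro hbot
      rw [hbot] at hsupinf
      have hb0 : Module.finrank ℂ ↥(⊥ : Submodule ℂ ((Fin 2 × Fin 2) → ℂ)) = 0 := by simp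
      rw [hb0, add_zero] at hsupinf
      omega
    obtain ⟨v, hv, hv0⟩ := (Submodule.ne_bot_iff _).mp hinf_pos
    obtain ⟨w₁, hw₁⟩ := hv.1
    obtain ⟨w₂, hw₂⟩ := hv.2
    obtain ⟨ε₁, hε₁pos, hε₁⟩ := psd_sub_outer h₁ w₁
    obtain ⟨ε₂, hε₂pos, hε₂⟩ := psd_sub_outer h₂ w₂
    rw [show T₁.mulVecLin w₁ = T₁ *ᵥ w₁ from rfl] at hw₁
    rw [show T₂.mulVecLin w₂ = T₂ *ᵥ w₂ from rfl] at hw₂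
    rw [hw₁] at hε₁
    rw [hw₂] at hε₂
    set ε : ℝ := min ε₁ ε₂ with hεdef
    have hεpos : 0 < ε := lt_min hε₁pos hε₂pos
    set D : Matrix (Fin 2 × Fin 2) (Fin 2 × Fin 2) ℂ := (ε : ℂ) • vecMulVec v (star v)
      with hDdef
    have hDpsd : D.PosSemidef := psd_real_smul (outer_posSemidef v) hεpos.le
    have hsub : ∀ (T : Matrix (Fin 2 × Fin 2) (Fin 2 × Fin 2) ℂ) (ε' : ℝ), ε ≤ ε' →
        (T - (ε' : ℂ) • vecMulVec v (star v)).PosSemidef → (T - D).PosSemidef := by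
      intro T ε' hεε' hTsub
      have heq : T - D = (T - (ε' : ℂ) • vecMulVec v (star v))
          + ((ε' - ε : ℝ) : ℂ) • vecMulVec v (star v) := by
        rw [hDdef]
        push_cast
        module
      rw [heq]
      exact hTsub.add (psd_real_smul (outer_posSemidef v) (by linarith))
    have hT₁D : (T₁ - D).PosSemidef := hsub T₁ ε₁ (min_le_left _ _) hε₁
    have hT₂D : (T₂ - D).PosSemidef := hsub T₂ ε₂ (min_le_right _ _) hε₂
    have htest₁ : IsTester 2 2 2 ![T₁ + D, T₂ + -D] := by
      refine isTester_pair (h₁.add hDpsd) (by simpa [sub_eq_add_neg] using hT₂D) hρ hρtr ?_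
      rw [← hnorm]; abel
    have htest₂ : IsTester 2 2 2 ![T₁ - D, T₂ - -D] := by
      refine isTester_pair hT₁D (by simpa [sub_neg_eq_add] using h₂.add hDpsd) hρ hρtr ?_
      rw [← hnorm]; abel
    obtain ⟨hD0, _⟩ := hkey D (-D) htest₁ htest₂
    obtain ⟨i₀, hi₀⟩ := Function.ne_iff.mp hv0
    have h0 := congrFun (congrFun hD0 i₀) i₀
    rw [hDdef] at h0
    simp only [Matrix.smul_apply, vecMulVec_apply, Pi.star_apply, Matrix.zero_apply,
      smul_eq_mul] at h0
    exact (mul_ne_zero (Complex.ofReal_ne_zero.mpr hεpos.ne')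
      (mul_ne_zero hi₀ (star_ne_zero.mpr hi₀))) h0
  -- construct the σ-perturbation of ρ
  have hσ : ∃ σ : Matrix (Fin 2) (Fin 2) ℂ, σ 0 0 ≠ 0 ∧ σ.trace = 0 ∧
      (ρ + σ).PosSemidef ∧ (ρ - σ).PosSemidef := by
    have hsurj := Matrix.mulVec_surjective_iff_isUnit.mpr hρunit
    obtain ⟨w₀, hw₀⟩ := hsurj (Pi.single (0 : Fin 2) (1 : ℂ))
    obtain ⟨w₁, hw₁⟩ := hsurj (Pi.single (1 : Fin 2) (1 : ℂ))
    set e₀ : Fin 2 → ℂ := Pi.single 0 1 with he₀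
    set e₁ : Fin 2 → ℂ := Pi.single 1 1 with he₁
    obtain ⟨ε₀, hε₀pos, hε₀⟩ := psd_sub_outer hρ w₀
    obtain ⟨ε₁, hε₁pos, hε₁⟩ := psd_sub_outer hρ w₁
    rw [hw₀] at hε₀
    rw [hw₁] at hε₁
    set ε : ℝ := min ε₀ ε₁ with hεdef
    have hεpos : 0 < ε := lt_min hε₀pos hε₁pos
    refine ⟨(ε : ℂ) • (vecMulVec e₀ (star e₀) - vecMulVec e₁ (star e₁)), ?_, ?_, ?_, ?_⟩
    · simp only [Matrix.smul_apply, Matrix.sub_apply, vecMulVec_apply, Pi.star_apply,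
        he₀, he₁, smul_eq_mul]
      simp [Pi.single_apply]
      exact_mod_cast hεpos.ne'
    · rw [Matrix.trace_smul]
      have : (vecMulVec e₀ (star e₀) - vecMulVec e₁ (star e₁)).trace = 0 := by
        simp [Matrix.trace, Matrix.diag, vecMulVec_apply, Fin.sum_univ_two, he₀, he₁,
          Pi.single_apply]
      rw [this, smul_zero]
    · have heq : ρ + (ε : ℂ) • (vecMulVec e₀ (star e₀) - vecMulVec e₁ (star e₁))
          = ((ρ - (ε₁ : ℂ) • vecMulVec e₁ (star e₁)) + ((ε₁ - ε : ℝ) : ℂ) • vecMulVec e₁ (star e₁))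
            + (ε : ℂ) • vecMulVec e₀ (star e₀) := by
        push_cast
        module
      rw [heq]
      exact ((hε₁.add (psd_real_smul (outer_posSemidef e₁)
        (by simp [hεdef, sub_nonneg, min_le_right]))).add
        (psd_real_smul (outer_posSemidef e₀) hεpos.le))
    · have heq : ρ - (ε : ℂ) • (vecMulVec e₀ (star e₀) - vecMulVec e₁ (star e₁))
          = ((ρ - (ε₀ : ℂ) • vecMulVec e₀ (star e₀)) + ((ε₀ - ε : ℝ) : ℂ) • vecMulVec e₀ (star e₀))
            + (ε : ℂ) • vecMulVec e₁ (star e₁) := by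
        push_cast
        module
      rw [heq]
      exact ((hε₀.add (psd_real_smul (outer_posSemidef e₀)
        (by simp [hεdef, sub_nonneg, min_le_left]))).add
        (psd_real_smul (outer_posSemidef e₁) hεpos.le))
  obtain ⟨σ, hσ00, hσtr, hρσp, hρσm⟩ := hσ
  -- T₁ has nonzero rank
  have h1ne : T₁.rank ≠ 0 := by
    intro h10
    have hT₁0 : T₁ = 0 := rank_zero_eq_zero h10
    have hT₂ : T₂ = (1 : Matrix (Fin 2) (Fin 2) ℂ) ⊗ₖ ρ := by
      rw [← hnorm, hT₁0, zero_add]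
    have htest₁ : IsTester 2 2 2 ![T₁ + 0, T₂ + (1 : Matrix (Fin 2) (Fin 2) ℂ) ⊗ₖ σ] := by
      refine isTester_pair (by simpa using h₁) ?_ hρσp (by rw [Matrix.trace_add, hρtr, hσtr, add_zero]) ?_
      · rw [hT₂, ← Matrix.kronecker_add]
        exact psd_kron Matrix.PosSemidef.one hρσp
      · rw [hT₁0, hT₂, ← Matrix.kronecker_add]
        simp
    have htest₂ : IsTester 2 2 2 ![T₁ - 0, T₂ - (1 : Matrix (Fin 2) (Fin 2) ℂ) ⊗ₖ σ] := by
      refine isTester_pair (by simpa using h₁) ?_ hρσm (by rw [Matrix.trace_sub, hρtr, hσtr, sub_zero]) ?_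
      · rw [hT₂, ← kron_sub]
        exact psd_kron Matrix.PosSemidef.one hρσm
      · rw [hT₁0, hT₂, ← kron_sub]
        simp
    obtain ⟨_, hD0⟩ := hkey 0 _ htest₁ htest₂
    have := congrFun (congrFun hD0 (0, 0)) (0, 0)
    simp [Matrix.kroneckerMap_apply, Matrix.one_apply] at this
    exact hσ00 this
  -- T₂ has nonzero rank
  have h2ne : T₂.rank ≠ 0 := by
    intro h20
    have hT₂0 : T₂ = 0 := rank_zero_eq_zero h20
    have hT₁ : T₁ = (1 : Matrix (Fin 2) (Fin 2) ℂ) ⊗ₖ ρ := by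
      rw [← hnorm, hT₂0, add_zero]
    have htest₁ : IsTester 2 2 2 ![T₁ + (1 : Matrix (Fin 2) (Fin 2) ℂ) ⊗ₖ σ, T₂ + 0] := by
      refine isTester_pair ?_ (by simpa using h₂) hρσp (by rw [Matrix.trace_add, hρtr, hσtr, add_zero]) ?_
      · rw [hT₁, ← Matrix.kronecker_add]
        exact psd_kron Matrix.PosSemidef.one hρσp
      · rw [hT₂0, hT₁, ← Matrix.kronecker_add]
        simp
    have htest₂ : IsTester 2 2 2 ![T₁ - (1 : Matrix (Fin 2) (Fin 2) ℂ) ⊗ₖ σ, T₂ - 0] := by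
      refine isTester_pair ?_ (by simpa using h₂) hρσm (by rw [Matrix.trace_sub, hρtr, hσtr, sub_zero]) ?_
      · rw [hT₁, ← kron_sub]
        exact psd_kron Matrix.PosSemidef.one hρσm
      · rw [hT₂0, hT₁, ← kron_sub]
        simp
    obtain ⟨hD0, _⟩ := hkey _ 0 htest₁ htest₂
    have := congrFun (congrFun hD0 (0, 0)) (0, 0)
    simp [Matrix.kroneckerMap_apply, Matrix.one_apply] at this
    exact hσ00 this
  -- conclude
  have hcases : (T₁.rank = 1 ∧ T₂.rank = 3) ∨ (T₁.rank = 3 ∧ T₂.rank = 1) ∨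
      (T₁.rank = 2 ∧ T₂.rank = 2) := by omega
  rcases hcases with ⟨ha, hb⟩ | ⟨ha, hb⟩ | ⟨ha, hb⟩
  · left; rw [ha, hb]
  · right; left; rw [ha, hb]
  · right; right; rw [ha, hb]
end

section
/- If {N_i}_{i=1}^M is an extremal quantum instrument from ℋ₀ to ℋ₁, then ∑_{i=1}^M rank(N_i)² ≤ d₀². -/
set_option linter.unusedSectionVars false
set_option maxHeartbeats 1000000

open Matrix Kronecker
open scoped ComplexOrder

/-- The rank-one operator `|A⟩⟩⟨⟨B|` on `ℋ₁ ⊗ ℋ₀` built from the vectorizations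
`|A⟩⟩ = (A ⊗ I)∑ⱼ |j⟩⊗|j⟩` of linear maps `A B : ℋ₀ → ℋ₁`. -/
def outerCJ {d₁ d₀ : ℕ} (A B : Matrix (Fin d₁) (Fin d₀) ℂ) :
    Matrix (Fin d₁ × Fin d₀) (Fin d₁ × Fin d₀) ℂ :=
  fun p q => A p.1 p.2 * star (B q.1 q.2)

/-- A quantum instrument with `M` outcomes from `ℋ₀` to `ℋ₁`, described by its
Choi–Jamiołkowski operators: positive semidefinite operators on `ℋ₁ ⊗ ℋ₀` whose
sum has partial trace over `ℋ₁` equal to the identity on `ℋ₀`. -/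
def IsInstrument (d₁ d₀ M : ℕ)
    (N : Fin M → Matrix (Fin d₁ × Fin d₀) (Fin d₁ × Fin d₀) ℂ) : Prop :=
  (∀ i, (N i).PosSemidef) ∧
    Matrix.of (fun j j_ : Fin d₀ => ∑ k : Fin d₁, (∑ i, N i) (k, j) (k, j_))
      = (1 : Matrix (Fin d₀) (Fin d₀) ℂ)



lemma psd_decomp {n : Type*} [Fintype n] [DecidableEq n] {A : Matrix n n ℂ}
    (hA : A.PosSemidef) : ∃ v : Fin A.rank → (n → ℂ),
      (∀ g : Fin A.rank → ℂ, (∀ p, ∑ k, g k * v k p = 0) → g = 0) ∧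
      ∀ p q, A p q = ∑ k, v k p * star (v k q) := by
  classical
  have h := hA.1
  have hrk : A.rank = Fintype.card {i // h.eigenvalues i ≠ 0} :=
    h.rank_eq_card_non_zero_eigs
  let e : Fin A.rank ≃ {i // h.eigenvalues i ≠ 0} :=
    Fintype.equivOfCardEq (by rw [Fintype.card_fin, hrk])
  set U : Matrix n n ℂ := (h.eigenvectorUnitary : Matrix n n ℂ) with hU
  have hUU : star U * U = 1 := by
    rw [hU, ← Unitary.coe_star]; exact Unitary.coe_star_mul_self _
  set lam : n → ℝ := h.eigenvalues with hlam
  have hnn : ∀ j, 0 ≤ lam j := fun j => hA.eigenvalues_nonneg j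
  refine ⟨fun k => fun p => (Real.sqrt (lam (e k)) : ℂ) * U p (e k), ?_, ?_⟩
  · intro g hg
    funext k
    have hsq : (Real.sqrt (lam (e k)) : ℂ) ≠ 0 := by
      have hne : lam (e k) ≠ 0 := (e k).2
      have hpos : 0 < lam (e k) := lt_of_le_of_ne (hnn _) (Ne.symm hne)
      simpa using (ne_of_gt (Real.sqrt_pos.mpr hpos))
    have key : ∑ p, (∑ k', g k' * ((Real.sqrt (lam (e k')) : ℂ) * U p (e k'))) * star (U p (e k)) = 0 := by
      simp only [hg, zero_mul, Finset.sum_const_zero]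
    have key2 : ∑ k', g k' * (Real.sqrt (lam (e k')) : ℂ) *
        (∑ p, star (U p (e k)) * U p (e k')) = 0 := by
      have h1 : ∑ k', g k' * (Real.sqrt (lam (e k')) : ℂ) *
          (∑ p, star (U p (e k)) * U p (e k'))
          = ∑ k', ∑ p, (g k' * ((Real.sqrt (lam (e k')) : ℂ) * U p (e k'))) * star (U p (e k)) := by
        refine Finset.sum_congr rfl fun k' _ => ?_
        rw [Finset.mul_sum]
        exact Finset.sum_congr rfl fun p _ => by ring
      rw [h1, Finset.sum_comm]
      simpa only [← Finset.sum_mul] using key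
    have hcol : ∀ k' : Fin A.rank, (∑ p, star (U p (e k)) * U p (e k'))
        = if k = k' then 1 else 0 := by
      intro k'
      have h2 : (star U * U) (e k) (e k') = (1 : Matrix n n ℂ) (e k) (e k') := by rw [hUU]
      rw [Matrix.mul_apply] at h2
      simp only [Matrix.star_apply] at h2
      rw [h2, Matrix.one_apply]
      simp [Subtype.coe_inj, e.apply_eq_iff_eq]
    rw [Finset.sum_congr rfl (fun k' _ => by rw [hcol k'])] at key2
    simp only [mul_ite, mul_one, mul_zero, Finset.sum_ite_eq, Finset.mem_univ, if_true] at key2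
    exact (mul_eq_zero.mp key2).resolve_right hsq
  · intro p q
    have hAentry : A p q = ∑ j, (lam j : ℂ) * (U p j * star (U q j)) := by
      conv_lhs => rw [h.spectral_theorem, Unitary.conjStarAlgAut_apply]
      rw [Matrix.mul_apply]
      rw [Finset.sum_congr rfl (fun j _ => by
        rw [Matrix.mul_apply, Finset.sum_mul])]
      rw [Finset.sum_comm]
      congr 1; funext j
      simp only [Matrix.diagonal_apply, Function.comp_apply, mul_ite, ite_mul,
        mul_zero, zero_mul, Finset.sum_ite_eq, Finset.mem_univ, if_true, Matrix.star_apply, hlam]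
      simp only [← hU]
      rw [mul_right_comm, mul_comm]; rfl
    rw [hAentry]
    have hterm : ∀ k : Fin A.rank,
        ((Real.sqrt (lam (e k)) : ℂ) * U p (e k)) * star ((Real.sqrt (lam (e k)) : ℂ) * U q (e k))
        = (lam (e k) : ℂ) * (U p (e k) * star (U q (e k))) := by
      intro k
      have hst : star ((Real.sqrt (lam (e k)) : ℂ)) = (Real.sqrt (lam (e k)) : ℂ) := by
        simp [Complex.star_def]
      have h2 : (Real.sqrt (lam (e k)) : ℂ) * (Real.sqrt (lam (e k)) : ℂ) = (lam (e k) : ℂ) := by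
        rw [← Complex.ofReal_mul, Real.mul_self_sqrt (hnn _)]
      rw [star_mul', hst, ← h2]; ring
    symm
    rw [Finset.sum_congr rfl (fun k _ => hterm k)]
    rw [Fintype.sum_equiv e
      (fun k => (lam (e k : n) : ℂ) * (U p (e k) * star (U q (e k))))
      (fun j : {i // lam i ≠ 0} => (lam (j : n) : ℂ) * (U p j * star (U q j)))
      (fun k => rfl)]
    rw [← Finset.sum_subtype (Finset.univ.filter (fun j => lam j ≠ 0)) (by simp)
      (fun j => (lam j : ℂ) * (U p j * star (U q j)))]
    exact Finset.sum_filter_of_ne (fun x _ hfx h0 => hfx (by simp [h0]))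


lemma one_add_smul_psd {r : ℕ} {H : Matrix (Fin r) (Fin r) ℂ} (hH : H.IsHermitian)
    {ε : ℝ} (hε : 0 ≤ ε) (hc : ε * (∑ k, ∑ l, ‖H k l‖) ≤ 1) :
    ((1 : Matrix (Fin r) (Fin r) ℂ) + (ε : ℂ) • H).PosSemidef := by
  set c : ℝ := ∑ k, ∑ l, ‖H k l‖ with hcdef
  have hcnn : 0 ≤ c := Finset.sum_nonneg fun k _ => Finset.sum_nonneg fun l _ =>
    norm_nonneg _
  rw [Matrix.posSemidef_iff_dotProduct_mulVec]
  constructor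
  · show _ = _
    rw [Matrix.conjTranspose_add, Matrix.conjTranspose_one, Matrix.conjTranspose_smul, hH.eq]
    congr 1
    simp [Complex.star_def]
  · intro x
    set s : ℝ := ∑ p, Complex.normSq (x p) with hsdef
    have hs : 0 ≤ s := Finset.sum_nonneg fun p _ => Complex.normSq_nonneg _
    set z : ℂ := star x ⬝ᵥ (H *ᵥ x) with hzdef
    have h1 : star x ⬝ᵥ ((1 + (ε : ℂ) • H) *ᵥ x) = (s : ℂ) + (ε : ℂ) * z := by
      rw [Matrix.add_mulVec, Matrix.one_mulVec, dotProduct_add, Matrix.smul_mulVec,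
        dotProduct_smul, smul_eq_mul]
      congr 1
      rw [hsdef]
      push_cast
      rw [dotProduct]
      refine Finset.sum_congr rfl fun p _ => ?_
      rw [Complex.normSq_eq_conj_mul_self]
      rfl
    have h2 : z = star (star (H *ᵥ x) ⬝ᵥ x) := star_dotProduct _ _
    have h3 : star z = z := by
      conv_lhs => rw [h2, star_star]
      rw [star_mulVec, ← dotProduct_mulVec, hH.eq]
    have hzre : ((z.re : ℂ)) = z := Complex.conj_eq_iff_re.mp h3
    have habs : ‖z‖ ≤ c * s := by
      have hstep : ‖z‖ ≤ ∑ p, ∑ q, ‖H p q‖ *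
          (‖x p‖ * ‖x q‖) := by
        refine le_trans (norm_sum_le _ _) (Finset.sum_le_sum fun p _ => ?_)
        rw [norm_mul]
        have hstar : ‖star x p‖ = ‖x p‖ := by
          simp [Pi.star_apply, Complex.norm_conj]
        rw [hstar]
        have hmv : (H *ᵥ x) p = ∑ q, H p q * x q := rfl
        rw [hmv]
        refine le_trans (mul_le_mul_of_nonneg_left (norm_sum_le _ _)
          (norm_nonneg _)) ?_
        rw [Finset.mul_sum]
        refine Finset.sum_le_sum fun q _ => ?_
        rw [norm_mul]
        exact le_of_eq (by ring)
      refine le_trans hstep ?_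
      have hxx : ∀ p q : Fin r, ‖x p‖ * ‖x q‖ ≤ s := by
        intro p q
        have h4 : ∀ p : Fin r, ‖x p‖ ≤ Real.sqrt s := by
          intro p
          rw [Complex.norm_def]
          exact Real.sqrt_le_sqrt (Finset.single_le_sum
            (fun i _ => Complex.normSq_nonneg (x i)) (Finset.mem_univ p))
        calc ‖x p‖ * ‖x q‖
            ≤ Real.sqrt s * Real.sqrt s :=
              mul_le_mul (h4 p) (h4 q) (norm_nonneg _) (Real.sqrt_nonneg _)
          _ = s := Real.mul_self_sqrt hs
      calc ∑ p, ∑ q, ‖H p q‖ * (‖x p‖ * ‖x q‖)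
          ≤ ∑ p, ∑ q, ‖H p q‖ * s :=
            Finset.sum_le_sum fun p _ => Finset.sum_le_sum fun q _ =>
              mul_le_mul_of_nonneg_left (hxx p q) (norm_nonneg _)
        _ = c * s := by
            rw [hcdef, Finset.sum_mul]
            exact Finset.sum_congr rfl fun p _ => (Finset.sum_mul _ _ _).symm
    rw [h1, ← hzre]
    have hcast : (s : ℂ) + (ε : ℂ) * (z.re : ℂ) = ((s + ε * z.re : ℝ) : ℂ) := by
      push_cast; ring
    rw [hcast, Complex.zero_le_real]
    have hre : |z.re| ≤ c * s := le_trans (Complex.abs_re_le_norm z) habs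
    have h4 : -(c * s) ≤ z.re := (abs_le.mp hre).1
    have h5 : ε * (c * s) ≤ s := by
      calc ε * (c * s) = (ε * c) * s := by ring
        _ ≤ 1 * s := mul_le_mul_of_nonneg_right hc hs
        _ = s := one_mul s
    nlinarith [mul_le_mul_of_nonneg_left h4 hε]



section Pmap
variable {n : Type*} [Fintype n] [DecidableEq n] {r : ℕ}

noncomputable def Pmap (v : Fin r → n → ℂ) (K : Matrix (Fin r) (Fin r) ℂ) : Matrix n n ℂ :=
  fun p q => ∑ k, ∑ l, K k l * (v k p * star (v l q))

lemma sum4_comm {ι₁ ι₂ ι₃ ι₄ : Type*} [Fintype ι₁] [Fintype ι₂] [Fintype ι₃] [Fintype ι₄]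
    (f : ι₁ → ι₂ → ι₃ → ι₄ → ℂ) :
    ∑ p, ∑ q, ∑ k, ∑ l, f p q k l = ∑ k, ∑ l, ∑ p, ∑ q, f p q k l := by
  calc ∑ p, ∑ q, ∑ k, ∑ l, f p q k l
      = ∑ p, ∑ k, ∑ q, ∑ l, f p q k l :=
        Finset.sum_congr rfl fun p _ => Finset.sum_comm
    _ = ∑ k, ∑ p, ∑ q, ∑ l, f p q k l := Finset.sum_comm
    _ = ∑ k, ∑ p, ∑ l, ∑ q, f p q k l :=
        Finset.sum_congr rfl fun k _ => Finset.sum_congr rfl fun p _ => Finset.sum_comm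
    _ = ∑ k, ∑ l, ∑ p, ∑ q, f p q k l :=
        Finset.sum_congr rfl fun k _ => Finset.sum_comm

lemma dot_expand (M : Matrix n n ℂ) (x : n → ℂ) :
    star x ⬝ᵥ (M *ᵥ x) = ∑ p, ∑ q, star (x p) * M p q * x q := by
  simp only [dotProduct, mulVec, Pi.star_apply, Finset.mul_sum, mul_assoc]

lemma Pmap_add (v : Fin r → n → ℂ) (K K' : Matrix (Fin r) (Fin r) ℂ) :
    Pmap v (K + K') = Pmap v K + Pmap v K' := by
  funext p q
  simp only [Pmap, Matrix.add_apply, add_mul, Finset.sum_add_distrib]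

lemma Pmap_smul (v : Fin r → n → ℂ) (c : ℂ) (K : Matrix (Fin r) (Fin r) ℂ) :
    Pmap v (c • K) = c • Pmap v K := by
  funext p q
  simp only [Pmap, Matrix.smul_apply, smul_eq_mul, Finset.mul_sum, mul_assoc]

lemma Pmap_conjTranspose (v : Fin r → n → ℂ) (K : Matrix (Fin r) (Fin r) ℂ) :
    Pmap v Kᴴ = (Pmap v K)ᴴ := by
  funext p q
  simp only [Pmap, Matrix.conjTranspose_apply, star_sum, star_mul', star_star]
  rw [Finset.sum_comm]
  refine Finset.sum_congr rfl fun k _ => Finset.sum_congr rfl fun l _ => ?_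
  ring

lemma Pmap_posSemidef (v : Fin r → n → ℂ) {K : Matrix (Fin r) (Fin r) ℂ}
    (hK : K.PosSemidef) : (Pmap v K).PosSemidef := by
  rw [Matrix.posSemidef_iff_dotProduct_mulVec]
  constructor
  · show _ = _
    rw [← Pmap_conjTranspose, hK.1.eq]
  · intro x
    set y : Fin r → ℂ := fun k => ∑ p, star (v k p) * x p with hy
    have expand1 : star x ⬝ᵥ (Pmap v K *ᵥ x)
        = ∑ p, ∑ q, ∑ k, ∑ l, (star (x p) * v k p) * K k l * (star (v l q) * x q) := by
      rw [dot_expand]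
      refine Finset.sum_congr rfl fun p _ => Finset.sum_congr rfl fun q _ => ?_
      show star (x p) * (∑ k, ∑ l, K k l * (v k p * star (v l q))) * x q = _
      rw [Finset.mul_sum, Finset.sum_mul]
      refine Finset.sum_congr rfl fun k _ => ?_
      rw [Finset.mul_sum, Finset.sum_mul]
      refine Finset.sum_congr rfl fun l _ => ?_
      ring
    have hystar : ∀ k, star (y k) = ∑ p, star (x p) * v k p := by
      intro k
      rw [hy]
      simp only [star_sum, star_mul', star_star]
      exact Finset.sum_congr rfl fun p _ => by ring
    have expand2 : star y ⬝ᵥ (K *ᵥ y)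
        = ∑ k, ∑ l, ∑ p, ∑ q, (star (x p) * v k p) * K k l * (star (v l q) * x q) := by
      rw [dot_expand]
      refine Finset.sum_congr rfl fun k _ => Finset.sum_congr rfl fun l _ => ?_
      rw [hystar k, hy]
      show (∑ p, star (x p) * v k p) * K k l * (∑ q, star (v l q) * x q) = _
      rw [Finset.sum_mul, Finset.sum_mul]
      refine Finset.sum_congr rfl fun p _ => ?_
      rw [Finset.mul_sum]
    have heq : star x ⬝ᵥ (Pmap v K *ᵥ x) = star y ⬝ᵥ (K *ᵥ y) := by
      rw [expand1, expand2, sum4_comm]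
    rw [heq]
    exact hK.dotProduct_mulVec_nonneg y

lemma Pmap_eq_zero {v : Fin r → n → ℂ}
    (hv : ∀ g : Fin r → ℂ, (∀ p, ∑ k, g k * v k p = 0) → g = 0)
    {K : Matrix (Fin r) (Fin r) ℂ} (hP : Pmap v K = 0) : K = 0 := by
  have step1 : ∀ (q : n) (k : Fin r), ∑ l, K k l * star (v l q) = 0 := by
    intro q k
    have h1 : (fun k => ∑ l, K k l * star (v l q)) = 0 := by
      apply hv
      intro p
      have h2 : Pmap v K p q = 0 := by rw [hP]; rfl
      rw [← h2]
      simp only [Pmap]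
      rw [Finset.sum_comm]
      rw [Finset.sum_comm]
      refine Finset.sum_congr rfl fun k _ => ?_
      rw [Finset.sum_mul]
      exact Finset.sum_congr rfl fun l _ => by ring
    exact congrFun h1 k
  funext k l
  have h3 : (fun l => star (K k l)) = 0 := by
    apply hv
    intro q
    have h5 := step1 q k
    have h4 : star (∑ l, K k l * star (v l q)) = 0 := by rw [h5]; exact star_zero _
    rw [← h4, star_sum]
    exact Finset.sum_congr rfl fun l _ => by simp [star_mul']
  have h6 := congrFun h3 l
  simpa using (star_eq_zero.mp (by simpa using h6))
end Pmap

noncomputable def PhiMap {M d₀ d₁ : ℕ} (r : Fin M → ℕ)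
    (v : ∀ i, Fin (r i) → (Fin d₁ × Fin d₀) → ℂ) :
    (∀ i, Matrix (Fin (r i)) (Fin (r i)) ℂ) →ₗ[ℂ] Matrix (Fin d₀) (Fin d₀) ℂ where
  toFun G := Matrix.of fun j j' => ∑ i, ∑ m : Fin d₁, Pmap (v i) (G i) (m, j) (m, j')
  map_add' G G' := by
    ext j j'
    simp only [Matrix.of_apply, Pi.add_apply, Pmap_add, Matrix.add_apply,
      Finset.sum_add_distrib]
  map_smul' c G := by
    ext j j'
    simp only [Matrix.of_apply, Pi.smul_apply, Pmap_smul, Matrix.smul_apply, smul_eq_mul,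
      Finset.mul_sum, RingHom.id_apply]

lemma PhiMap_conj {M d₀ d₁ : ℕ} (r : Fin M → ℕ)
    (v : ∀ i, Fin (r i) → (Fin d₁ × Fin d₀) → ℂ)
    (G : ∀ i, Matrix (Fin (r i)) (Fin (r i)) ℂ) (h0 : PhiMap r v G = 0) :
    PhiMap r v (fun i => (G i)ᴴ) = 0 := by
  funext j j'
  have hent : (∑ i, ∑ m : Fin d₁, Pmap (v i) (G i) (m, j') (m, j)) = 0 :=
    congrFun (congrFun h0 j') j
  show (∑ i, ∑ m : Fin d₁, Pmap (v i) ((G i)ᴴ) (m, j) (m, j')) = 0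
  have hterm : ∀ (i : Fin M) (m : Fin d₁),
      Pmap (v i) ((G i)ᴴ) (m, j) (m, j') = star (Pmap (v i) (G i) (m, j') (m, j)) := by
    intro i m
    rw [Pmap_conjTranspose]
    rfl
  rw [Finset.sum_congr rfl (fun i _ => Finset.sum_congr rfl fun m _ => hterm i m)]
  have : ∑ i, ∑ m : Fin d₁, star (Pmap (v i) (G i) (m, j') (m, j))
      = star (∑ i, ∑ m : Fin d₁, Pmap (v i) (G i) (m, j') (m, j)) := by
    rw [star_sum]
    exact Finset.sum_congr rfl fun i _ => (star_sum _ _).symm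
  rw [this, hent, star_zero]

theorem stmt_16 {d₀ d₁ M : ℕ}
    (N : Fin M → Matrix (Fin d₁ × Fin d₀) (Fin d₁ × Fin d₀) ℂ)
    (hN : IsInstrument d₁ d₀ M N)
    (hext : N ∈ {W | IsInstrument d₁ d₀ M W}.extremePoints ℝ) :
    ∑ i, (N i).rank ^ 2 ≤ d₀ ^ 2 := by
  classical
  by_contra hlt
  push_neg at hlt
  obtain ⟨hpsd, htr⟩ := hN
  choose v hvind hvdec using fun i => psd_decomp (hpsd i)
  set r : Fin M → ℕ := fun i => (N i).rank with hr
  set Φ := PhiMap (M := M) (d₀ := d₀) (d₁ := d₁) r v with hΦdef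
  -- a nonzero element of the kernel
  have hker : ∃ G, Φ G = 0 ∧ G ≠ 0 := by
    have hfin1 : Module.finrank ℂ (∀ i, Matrix (Fin (r i)) (Fin (r i)) ℂ)
        = ∑ i, r i ^ 2 := by
      rw [Module.finrank_pi_fintype]
      refine Finset.sum_congr rfl fun i _ => ?_
      rw [Module.finrank_matrix]
      simp [pow_two]
    have hfin2 : Module.finrank ℂ (Matrix (Fin d₀) (Fin d₀) ℂ) = d₀ ^ 2 := by
      rw [Module.finrank_matrix]
      simp [pow_two]
    by_contra hno
    push_neg at hno
    have hinj : Function.Injective Φ := by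
      intro a b hab
      have h1 : Φ (a - b) = 0 := by rw [map_sub, hab, sub_self]
      exact sub_eq_zero.mp (hno _ h1)
    have hle := LinearMap.finrank_le_finrank_of_injective hinj
    rw [hfin1, hfin2] at hle
    have hlt' : d₀ ^ 2 < ∑ i, r i ^ 2 := hlt
    exact absurd hle (not_le.mpr hlt')
  obtain ⟨G, hG0, hGne⟩ := hker
  -- hermitization
  obtain ⟨H, hHherm, hΦH, i0, hi0⟩ :
      ∃ H : ∀ i, Matrix (Fin (r i)) (Fin (r i)) ℂ,
        (∀ i, (H i).IsHermitian) ∧ Φ H = 0 ∧ ∃ i0, H i0 ≠ 0 := by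
    have hΦGstar : Φ (fun i => (G i)ᴴ) = 0 := PhiMap_conj r v G hG0
    have hΦG1 : Φ (fun i => G i + (G i)ᴴ) = 0 := by
      have he : (fun i => G i + (G i)ᴴ) = G + (fun i => (G i)ᴴ) := rfl
      rw [he, map_add, hG0, hΦGstar, add_zero]
    have hΦG2 : Φ (fun i => Complex.I • (G i - (G i)ᴴ)) = 0 := by
      have he : (fun i => Complex.I • (G i - (G i)ᴴ))
          = Complex.I • (G - (fun i => (G i)ᴴ)) := rfl
      rw [he, Φ.map_smul, map_sub, hG0, hΦGstar, sub_zero, smul_zero]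
    have hG1herm : ∀ i, (G i + (G i)ᴴ).IsHermitian := fun i => by
      show _ = _
      rw [conjTranspose_add, conjTranspose_conjTranspose, add_comm]
    have hG2herm : ∀ i, (Complex.I • (G i - (G i)ᴴ)).IsHermitian := fun i => by
      show _ = _
      rw [conjTranspose_smul, conjTranspose_sub, conjTranspose_conjTranspose,
        Complex.star_def, Complex.conj_I, neg_smul, ← smul_neg, neg_sub]
    by_cases hc1 : (fun i => G i + (G i)ᴴ) = 0
    · refine ⟨fun i => Complex.I • (G i - (G i)ᴴ), hG2herm, hΦG2, ?_⟩
      refine Function.ne_iff.mp ?_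
      intro h2
      apply hGne
      funext i
      have e1 : G i + (G i)ᴴ = 0 := congrFun hc1 i
      have e2 : Complex.I • (G i - (G i)ᴴ) = 0 := congrFun h2 i
      have e3 : G i - (G i)ᴴ = 0 :=
        (smul_eq_zero.mp e2).resolve_left Complex.I_ne_zero
      have e4 : (2 : ℂ) • G i = 0 := by
        have : (2 : ℂ) • G i = (G i + (G i)ᴴ) + (G i - (G i)ᴴ) := by
          rw [two_smul]; abel
        rw [this, e1, e3, add_zero]
      simpa using (smul_eq_zero.mp e4).resolve_left (by norm_num)
    · refine ⟨fun i => G i + (G i)ᴴ, hG1herm, hΦG1, ?_⟩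
      exact Function.ne_iff.mp hc1
  -- choose the perturbation size
  set c : Fin M → ℝ := fun i => ∑ k, ∑ l, ‖H i k l‖ with hcdef
  have hcnn : ∀ i, 0 ≤ c i := fun i => Finset.sum_nonneg fun k _ =>
    Finset.sum_nonneg fun l _ => norm_nonneg _
  set ctot : ℝ := ∑ i, c i with hctot
  have hctotnn : 0 ≤ ctot := Finset.sum_nonneg fun i _ => hcnn i
  set ε : ℝ := (1 + ctot)⁻¹ with hεdef
  have hεpos : 0 < ε := inv_pos.mpr (by linarith)
  have hbound : ∀ i, ε * c i ≤ 1 := by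
    intro i
    have h1 : c i ≤ 1 + ctot := by
      have h2 : c i ≤ ctot := Finset.single_le_sum (fun j _ => hcnn j) (Finset.mem_univ i)
      linarith
    calc ε * c i ≤ ε * (1 + ctot) := mul_le_mul_of_nonneg_left h1 hεpos.le
      _ = 1 := inv_mul_cancel₀ (by positivity)
  -- the perturbation
  set D : Fin M → Matrix (Fin d₁ × Fin d₀) (Fin d₁ × Fin d₀) ℂ :=
    fun i => Pmap (v i) ((ε : ℂ) • H i) with hDdef
  have hPone : ∀ i, Pmap (v i) 1 = N i := by
    intro i
    funext p q
    rw [show N i p q = ∑ k, v i k p * star (v i k q) from hvdec i p q]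
    simp [Pmap, Matrix.one_apply, ite_mul, one_mul, zero_mul, Finset.sum_ite_eq,
      Finset.mem_univ, if_true]
  -- the trace of the perturbation vanishes
  have hDtr : ∀ j j' : Fin d₀, ∑ m : Fin d₁, (∑ i, D i) (m, j) (m, j') = 0 := by
    intro j j'
    have h0 : Φ ((ε : ℂ) • H) = 0 := by rw [Φ.map_smul, hΦH, smul_zero]
    have hent : (∑ i, ∑ m : Fin d₁, Pmap (v i) (((ε : ℂ) • H) i) (m, j) (m, j')) = 0 :=
      congrFun (congrFun h0 j) j'
    calc ∑ m : Fin d₁, (∑ i, D i) (m, j) (m, j')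
        = ∑ m : Fin d₁, ∑ i, D i (m, j) (m, j') := by
          simp [Matrix.sum_apply]
      _ = ∑ i, ∑ m : Fin d₁, D i (m, j) (m, j') := Finset.sum_comm
      _ = 0 := hent
  -- the two perturbed instruments
  have hplus : IsInstrument d₁ d₀ M (fun i => N i + D i) := by
    constructor
    · intro i
      show (N i + D i).PosSemidef
      have he : N i + D i = Pmap (v i) (1 + (ε : ℂ) • H i) := by
        rw [Pmap_add, hPone i]
      rw [he]
      exact Pmap_posSemidef _ (one_add_smul_psd (hHherm i) hεpos.le (hbound i))
    · funext j j'
      show (∑ m : Fin d₁, (∑ i, (N i + D i)) (m, j) (m, j')) = (1 : Matrix (Fin d₀) (Fin d₀) ℂ) j j'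
      have hsplit : (∑ i, (N i + D i)) = (∑ i, N i) + (∑ i, D i) := Finset.sum_add_distrib
      rw [hsplit]
      have : ∀ m : Fin d₁, ((∑ i, N i) + (∑ i, D i)) (m, j) (m, j')
          = (∑ i, N i) (m, j) (m, j') + (∑ i, D i) (m, j) (m, j') := fun m => rfl
      rw [Finset.sum_congr rfl fun m _ => this m, Finset.sum_add_distrib, hDtr j j', add_zero]
      exact congrFun (congrFun htr j) j'
  have hminus : IsInstrument d₁ d₀ M (fun i => N i - D i) := by
    constructor
    · intro i
      have hneg : Pmap (v i) ((ε : ℂ) • (-(H i))) = -(D i) := by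
        rw [show (ε : ℂ) • (-(H i)) = (-1 : ℂ) • ((ε : ℂ) • H i) by
          rw [smul_smul, neg_one_mul, neg_smul, smul_neg], Pmap_smul, neg_one_smul]
      show (N i - D i).PosSemidef
      have he : N i - D i = Pmap (v i) (1 + (ε : ℂ) • (-(H i))) := by
        rw [Pmap_add, hPone i, hneg, sub_eq_add_neg]
      rw [he]
      have hnegherm : (-(H i)).IsHermitian := (hHherm i).neg
      have hnegbound : ε * (∑ k, ∑ l, ‖(-(H i)) k l‖) ≤ 1 := by
        have : (∑ k, ∑ l, ‖(-(H i)) k l‖) = c i := by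
          rw [hcdef]
          refine Finset.sum_congr rfl fun k _ => Finset.sum_congr rfl fun l _ => ?_
          simp
        rw [this]
        exact hbound i
      exact Pmap_posSemidef _ (one_add_smul_psd hnegherm hεpos.le hnegbound)
    · funext j j'
      show (∑ m : Fin d₁, (∑ i, (N i - D i)) (m, j) (m, j')) = (1 : Matrix (Fin d₀) (Fin d₀) ℂ) j j'
      have hsplit : (∑ i, (N i - D i)) = (∑ i, N i) - (∑ i, D i) := Finset.sum_sub_distrib _ _
      rw [hsplit]
      have : ∀ m : Fin d₁, ((∑ i, N i) - (∑ i, D i)) (m, j) (m, j')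
          = (∑ i, N i) (m, j) (m, j') - (∑ i, D i) (m, j) (m, j') := fun m => rfl
      rw [Finset.sum_congr rfl fun m _ => this m, Finset.sum_sub_distrib, hDtr j j', sub_zero]
      exact congrFun (congrFun htr j) j'
  -- extremality
  obtain ⟨hNmem, hkey⟩ := hext
  have hseg : N ∈ openSegment ℝ (fun i => N i + D i) (fun i => N i - D i) := by
    refine ⟨1/2, 1/2, by norm_num, by norm_num, by norm_num, ?_⟩
    funext i
    show (1/2 : ℝ) • (N i + D i) + (1/2 : ℝ) • (N i - D i) = N i
    module
  have hW1 := hkey hplus hminus hseg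
  have hD0 : D i0 = 0 := by
    have h1 : N i0 + D i0 = N i0 := congrFun hW1 i0
    have := add_eq_left.mp h1
    exact this
  have hHK : (ε : ℂ) • H i0 = 0 := Pmap_eq_zero (hvind i0) hD0
  have : H i0 = 0 := by
    rcases smul_eq_zero.mp hHK with h | h
    · exact absurd h (by simpa using ne_of_gt hεpos)
    · exact h
  exact hi0 this
end

section
/- Let {N_i}_{i=1}^M be a quantum instrument from ℋ₀ to ℋ₁, and for each i let N_i = ∑_{m=1}^{r_i} |K_m^(i)⟩⟩⟨⟨K_m^(i)| with {K_m^(i)}_{m=1}^{r_i} linearly independent linear maps ℋ₀ → ℋ₁ (a minimal Kraus representation of each N_i). Then the instrument {N_i}_{i=1}^M is extremal if and only if the family of operators {K_m^(i)† K_n^(i) : 1 ≤ i ≤ M, 1 ≤ m, n ≤ r_i} on ℋ₀ is linearly independent over ℂ. -/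
open Matrix Kronecker
open scoped ComplexOrder
set_option linter.unusedSectionVars false
set_option maxHeartbeats 4000000

section Helpers

variable {ι κ : Type*} [Fintype ι] [Fintype κ] [DecidableEq ι] [DecidableEq κ]

lemma psd_real_smul_s17 {M : Matrix ι ι ℂ} (hM : M.PosSemidef) {b : ℝ} (hb : 0 ≤ b) :
    ((b : ℝ) • M).PosSemidef := by
  have hbc : (b : ℝ) • M = ((b : ℂ)) • M := by
    ext p q; simp [Complex.real_smul]
  rw [hbc]
  refine Matrix.PosSemidef.of_dotProduct_mulVec_nonneg ?_ ?_
  · have := hM.1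
    unfold Matrix.IsHermitian at *
    rw [conjTranspose_smul, this]
    congr 1
    simp [Complex.star_def, Complex.conj_ofReal]
  · intro x
    rw [smul_mulVec, dotProduct_smul]
    have h0 : (0:ℂ) ≤ (b:ℂ) := by exact_mod_cast hb
    simpa [smul_eq_mul] using mul_nonneg h0 (hM.dotProduct_mulVec_nonneg x)

lemma psd_nsd_zero {M : Matrix ι ι ℂ} (h1 : M.PosSemidef) (h2 : (-M).PosSemidef) : M = 0 := by
  have hz : ∀ x : ι → ℂ, M *ᵥ x = 0 := by
    intro x
    have a1 := h1.dotProduct_mulVec_nonneg x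
    have a2 := h2.dotProduct_mulVec_nonneg x
    rw [neg_mulVec, dotProduct_neg] at a2
    have hq : star x ⬝ᵥ M *ᵥ x = 0 := le_antisymm (neg_nonneg.mp a2) a1
    exact (h1.dotProduct_mulVec_zero_iff x).mp hq
  ext p q
  have := congr_fun (hz (Pi.single q 1)) p
  simpa [mulVec_single] using this

variable (V : Matrix ι κ ℂ)

lemma gram_inj (hV : ∀ x : κ → ℂ, V *ᵥ x = 0 → x = 0) :
    ∀ x : κ → ℂ, (Vᴴ * V) *ᵥ x = 0 → x = 0 := by
  intro x hx
  apply hV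
  apply dotProduct_star_self_eq_zero.mp
  have : star x ⬝ᵥ ((Vᴴ * V) *ᵥ x) = star (V *ᵥ x) ⬝ᵥ (V *ᵥ x) := by
    rw [← mulVec_mulVec, dotProduct_mulVec, ← star_mulVec]
  rw [← this, hx, dotProduct_zero]

lemma gram_unit (hV : ∀ x : κ → ℂ, V *ᵥ x = 0 → x = 0) : IsUnit (Vᴴ * V) := by
  rw [← Matrix.mulVec_injective_iff_isUnit]
  intro x y hxy
  have : (Vᴴ * V) *ᵥ (x - y) = 0 := by
    rw [mulVec_sub, hxy, sub_self]
  have := gram_inj V hV _ this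
  exact sub_eq_zero.mp this

lemma sandwich_cancel (hV : ∀ x : κ → ℂ, V *ᵥ x = 0 → x = 0) {c : Matrix κ κ ℂ}
    (h : V * c * Vᴴ = 0) : c = 0 := by
  have hG := gram_unit V hV
  have hGd : IsUnit (Vᴴ * V).det := (Matrix.isUnit_iff_isUnit_det _).mp hG
  have h2 : (Vᴴ * V) * c * (Vᴴ * V) = 0 := by
    have := congrArg (fun X => Vᴴ * X * V) h
    simpa only [Matrix.mul_assoc, Matrix.mul_zero, Matrix.zero_mul] using this
  calc c = (Vᴴ * V)⁻¹ * (Vᴴ * V) * c * ((Vᴴ * V) * (Vᴴ * V)⁻¹) := by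
        rw [Matrix.nonsing_inv_mul _ hGd, Matrix.mul_nonsing_inv _ hGd, Matrix.one_mul,
          Matrix.mul_one]
    _ = (Vᴴ * V)⁻¹ * (Vᴴ * V * c * (Vᴴ * V)) * (Vᴴ * V)⁻¹ := by
        simp only [Matrix.mul_assoc]
    _ = 0 := by rw [h2, Matrix.mul_zero, Matrix.zero_mul]

lemma support_lemma (hV : ∀ x : κ → ℂ, V *ᵥ x = 0 → x = 0) {B : Matrix ι ι ℂ}
    (hB : B.PosSemidef) (hAB : (V * Vᴴ - B).PosSemidef) :
    ∃ c : Matrix κ κ ℂ, B = V * c * Vᴴ := by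
  have hG := gram_unit V hV
  have hGd : IsUnit (Vᴴ * V).det := (Matrix.isUnit_iff_isUnit_det _).mp hG
  set G := Vᴴ * V with hGdef
  have hGH : Gᴴ = G := by rw [hGdef, conjTranspose_mul, conjTranspose_conjTranspose]
  have hGiH : G⁻¹ᴴ = G⁻¹ := by rw [Matrix.conjTranspose_nonsing_inv, hGH]
  set P := V * G⁻¹ * Vᴴ with hPdef
  have hPH : Pᴴ = P := by
    rw [hPdef, conjTranspose_mul, conjTranspose_mul, hGiH, conjTranspose_conjTranspose,
      Matrix.mul_assoc]
  have hPV : P * V = V := by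
    rw [hPdef]
    calc V * G⁻¹ * Vᴴ * V = V * (G⁻¹ * G) := by rw [hGdef]; simp only [Matrix.mul_assoc]
      _ = V := by rw [Matrix.nonsing_inv_mul _ hGd, Matrix.mul_one]
  set Q := (1 : Matrix ι ι ℂ) - P with hQdef
  have hQH : Qᴴ = Q := by rw [hQdef, conjTranspose_sub, conjTranspose_one, hPH]
  have hQV : Q * V = 0 := by rw [hQdef, Matrix.sub_mul, Matrix.one_mul, hPV, sub_self]
  have hM1 : (Q * B * Qᴴ).PosSemidef := hB.mul_mul_conjTranspose_same Q
  have hM2 : (Q * (V * Vᴴ - B) * Qᴴ).PosSemidef := hAB.mul_mul_conjTranspose_same Q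
  have hM2' : Q * (V * Vᴴ - B) * Qᴴ = -(Q * B * Qᴴ) := by
    rw [Matrix.mul_sub, Matrix.sub_mul, ← Matrix.mul_assoc, hQV, Matrix.zero_mul]
    simp
  rw [hM2'] at hM2
  have hM0 : Q * B * Qᴴ = 0 := psd_nsd_zero hM1 hM2
  obtain ⟨C, hC⟩ : ∃ C : Matrix ι ι ℂ, B = Cᴴ * C := by
    open scoped MatrixOrder in
    obtain ⟨C, hC⟩ := CStarAlgebra.nonneg_iff_eq_star_mul_self.mp hB.nonneg
    exact ⟨C, hC⟩
  have hCQ : C * Qᴴ = 0 := by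
    have : (C * Qᴴ)ᴴ * (C * Qᴴ) = 0 := by
      rw [conjTranspose_mul, conjTranspose_conjTranspose]
      have e1 : Q * Cᴴ * (C * Qᴴ) = Q * (Cᴴ * C) * Qᴴ := by simp only [Matrix.mul_assoc]
      rw [e1, ← hC, hM0]
    exact conjTranspose_mul_self_eq_zero.mp this
  have hBQ : B * Qᴴ = 0 := by rw [hC, Matrix.mul_assoc, hCQ, Matrix.mul_zero]
  have hBP : B * P = B := by
    have := hBQ
    rw [hQH, hQdef, Matrix.mul_sub, Matrix.mul_one, sub_eq_zero] at this
    exact this.symm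
  have hPB : P * B = B := by
    have := congrArg conjTranspose hBP
    rw [conjTranspose_mul, hPH, hB.1] at this
    exact this
  refine ⟨G⁻¹ * Vᴴ * B * V * G⁻¹, ?_⟩
  calc B = P * B * P := by rw [hPB, hBP]
    _ = V * (G⁻¹ * Vᴴ * B * V * G⁻¹) * Vᴴ := by
        rw [hPdef]; simp only [Matrix.mul_assoc]

lemma one_add_smul_psd_s17 (e : Matrix κ κ ℂ) (he : e.IsHermitian) {ε : ℝ} (hε : 0 ≤ ε)
    (hb : ε * ∑ m, ∑ n, ‖e m n‖ ≤ 1) :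
    ((1 : Matrix κ κ ℂ) + (ε : ℂ) • e).PosSemidef := by
  set C : ℝ := ∑ m, ∑ n, ‖e m n‖ with hC
  refine Matrix.PosSemidef.of_dotProduct_mulVec_nonneg ?_ ?_
  · unfold Matrix.IsHermitian
    rw [conjTranspose_add, conjTranspose_one, conjTranspose_smul, he.eq]
    congr 1
    simp [Complex.star_def, Complex.conj_ofReal]
  · intro x
    have hq : star x ⬝ᵥ (((1 : Matrix κ κ ℂ) + (ε : ℂ) • e) *ᵥ x)
        = star x ⬝ᵥ x + (ε : ℂ) * (star x ⬝ᵥ (e *ᵥ x)) := by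
      rw [add_mulVec, one_mulVec, dotProduct_add, smul_mulVec, dotProduct_smul,
        smul_eq_mul]
    set t : ℂ := star x ⬝ᵥ (e *ᵥ x) with htdef
    set s : ℝ := ∑ p, Complex.normSq (x p) with hsdef
    have hs0 : 0 ≤ s := Finset.sum_nonneg fun p _ => Complex.normSq_nonneg _
    have hsx : star x ⬝ᵥ x = (s : ℂ) := by
      rw [hsdef]
      push_cast
      simp [dotProduct, Complex.normSq_eq_conj_mul_self, Complex.star_def]
    have ht : (starRingEnd ℂ) t = t := by
      have h1 : star t = star (e *ᵥ x) ⬝ᵥ star (star x) := by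
        rw [htdef, ← star_dotProduct_star]
      rw [star_star, star_mulVec, he.eq] at h1
      rw [← dotProduct_mulVec] at h1
      exact h1.trans htdef.symm
    have htre : t = ((t.re : ℝ) : ℂ) := (Complex.conj_eq_iff_re.mp ht).symm
    have hxb : ∀ p, ‖x p‖ ^ 2 ≤ s := by
      intro p
      have : ‖x p‖ ^ 2 = Complex.normSq (x p) := Complex.sq_norm _
      rw [this]
      exact Finset.single_le_sum (fun q _ => Complex.normSq_nonneg (x q)) (Finset.mem_univ p)
    have habs : ‖t‖ ≤ C * s := by
      have ht2 : t = ∑ m, ∑ n, (starRingEnd ℂ) (x m) * (e m n * x n) := by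
        rw [htdef]
        simp [dotProduct, mulVec, Finset.mul_sum, Complex.star_def]
      rw [ht2]
      calc ‖∑ m, ∑ n, (starRingEnd ℂ) (x m) * (e m n * x n)‖
          ≤ ∑ m, ∑ n, ‖(starRingEnd ℂ) (x m) * (e m n * x n)‖ := by
            refine (norm_sum_le _ _).trans ?_
            exact Finset.sum_le_sum fun m _ => norm_sum_le _ _
        _ ≤ ∑ m, ∑ n, ‖e m n‖ * s := by
            refine Finset.sum_le_sum fun m _ => Finset.sum_le_sum fun n _ => ?_
            rw [norm_mul, norm_mul, Complex.norm_conj]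
            have h1 : ‖x m‖ * ‖x n‖ ≤ s := by
              nlinarith [hxb m, hxb n, norm_nonneg (x m), norm_nonneg (x n),
                sq_nonneg (‖x m‖ - ‖x n‖)]
            calc ‖x m‖ * (‖e m n‖ * ‖x n‖)
                = ‖e m n‖ * (‖x m‖ * ‖x n‖) := by ring
              _ ≤ ‖e m n‖ * s :=
                  mul_le_mul_of_nonneg_left h1 (norm_nonneg _)
        _ = C * s := by
            rw [hC, Finset.sum_mul]
            refine Finset.sum_congr rfl fun m _ => ?_
            rw [Finset.sum_mul]
    have hfinal : 0 ≤ s + ε * t.re := by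
      have h1 : -‖t‖ ≤ t.re := neg_le_of_abs_le (Complex.abs_re_le_norm t)
      have h2 : ε * ‖t‖ ≤ ε * (C * s) := mul_le_mul_of_nonneg_left habs hε
      have h3 : ε * C * s ≤ 1 * s := mul_le_mul_of_nonneg_right hb hs0
      nlinarith [mul_le_mul_of_nonneg_left h1 hε]
    rw [hq, hsx, htre]
    have : (s : ℂ) + (ε : ℂ) * ((t.re : ℝ) : ℂ) = ((s + ε * t.re : ℝ) : ℂ) := by push_cast; ring
    rw [this]
    exact Complex.zero_le_real.mpr hfinal

end Helpers

noncomputable def ptrCJ {d₁ d₀ : ℕ} :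
    Matrix (Fin d₁ × Fin d₀) (Fin d₁ × Fin d₀) ℂ →ₗ[ℂ] Matrix (Fin d₀) (Fin d₀) ℂ where
  toFun X := Matrix.of fun j j' => ∑ k, X (k, j) (k, j')
  map_add' X Y := by ext j j'; simp [Finset.sum_add_distrib]
  map_smul' z X := by ext j j'; simp [Finset.mul_sum]

lemma ptr_outer {d₁ d₀ : ℕ} (A B : Matrix (Fin d₁) (Fin d₀) ℂ) :
    ptrCJ (outerCJ A B) = (Bᴴ * A)ᵀ := by
  ext j j'
  simp [ptrCJ, outerCJ, Matrix.mul_apply, Matrix.transpose_apply, Matrix.conjTranspose_apply]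
  exact Finset.sum_congr rfl fun k _ => by ring

lemma sandwich_eq_sum {d₁ d₀ rr : ℕ} (K : Fin rr → Matrix (Fin d₁) (Fin d₀) ℂ)
    (c : Matrix (Fin rr) (Fin rr) ℂ) :
    (Matrix.of fun (p : Fin d₁ × Fin d₀) m => K m p.1 p.2) * c *
      (Matrix.of fun (p : Fin d₁ × Fin d₀) m => K m p.1 p.2)ᴴ
    = ∑ m, ∑ n, c m n • outerCJ (K m) (K n) := by
  ext p q
  simp only [Matrix.mul_apply, Matrix.of_apply, Matrix.conjTranspose_apply,
    Matrix.sum_apply, Matrix.smul_apply, outerCJ, smul_eq_mul, Finset.sum_mul,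
    Matrix.star_apply]
  rw [Finset.sum_comm]
  refine Finset.sum_congr rfl fun m _ => Finset.sum_congr rfl fun n _ => by
    simp [Complex.star_def]; ring

theorem stmt_17 {d₀ d₁ M : ℕ}
    (N : Fin M → Matrix (Fin d₁ × Fin d₀) (Fin d₁ × Fin d₀) ℂ)
    (hN : IsInstrument d₁ d₀ M N)
    (r : Fin M → ℕ) (K : (i : Fin M) → Fin (r i) → Matrix (Fin d₁) (Fin d₀) ℂ)
    (hKli : ∀ i, LinearIndependent ℂ (K i))
    (hdecomp : ∀ i, N i = ∑ m, outerCJ (K i m) (K i m)) :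
    N ∈ {W | IsInstrument d₁ d₀ M W}.extremePoints ℝ ↔
      LinearIndependent ℂ
        (fun x : Σ i : Fin M, Fin (r i) × Fin (r i) => (K x.1 x.2.1)ᴴ * K x.1 x.2.2) := by
  classical
  -- the vectorization matrices
  set V : (i : Fin M) → Matrix (Fin d₁ × Fin d₀) (Fin (r i)) ℂ :=
    fun i => Matrix.of fun p m => K i m p.1 p.2 with hVdef
  have hVinj : ∀ i (x : Fin (r i) → ℂ), V i *ᵥ x = 0 → x = 0 := by
    intro i x hx
    have LI := Fintype.linearIndependent_iff.mp (hKli i)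
    have hsum : ∑ m, x m • K i m = 0 := by
      ext a b
      have h := congr_fun hx (a, b)
      simp only [hVdef, mulVec, dotProduct, Matrix.of_apply, Pi.zero_apply] at h
      simp only [Matrix.sum_apply, Matrix.smul_apply, smul_eq_mul, Matrix.zero_apply]
      simpa [mul_comm] using h
    exact funext (LI x hsum)
  have hsand : ∀ i (c : Matrix (Fin (r i)) (Fin (r i)) ℂ),
      V i * c * (V i)ᴴ = ∑ m, ∑ n, c m n • outerCJ (K i m) (K i n) :=
    fun i c => sandwich_eq_sum (K i) c
  have hNV : ∀ i, N i = V i * (1 : Matrix (Fin (r i)) (Fin (r i)) ℂ) * (V i)ᴴ := by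
    intro i
    rw [hdecomp i, hsand i (1 : Matrix (Fin (r i)) (Fin (r i)) ℂ)]
    refine Finset.sum_congr rfl fun m _ => ?_
    rw [Finset.sum_eq_single m]
    · simp
    · intro n _ hn
      simp [Matrix.one_apply, Ne.symm hn]
    · intro h; exact absurd (Finset.mem_univ m) h
  -- instrument characterization via ptrCJ
  have hInst : ∀ W : Fin M → Matrix (Fin d₁ × Fin d₀) (Fin d₁ × Fin d₀) ℂ,
      IsInstrument d₁ d₀ M W ↔ ((∀ i, (W i).PosSemidef) ∧ ptrCJ (∑ i, W i) = 1) :=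
    fun W => Iff.rfl
  -- partial trace of sandwiches
  have hptr : ∀ (c : (i : Fin M) → Matrix (Fin (r i)) (Fin (r i)) ℂ),
      ptrCJ (∑ i, V i * c i * (V i)ᴴ)
        = (∑ i, ∑ m, ∑ n, c i m n • ((K i n)ᴴ * K i m))ᵀ := by
    intro c
    rw [map_sum, Matrix.transpose_sum]
    refine Finset.sum_congr rfl fun i _ => ?_
    rw [hsand i, map_sum, Matrix.transpose_sum]
    refine Finset.sum_congr rfl fun m _ => ?_
    rw [map_sum, Matrix.transpose_sum]
    refine Finset.sum_congr rfl fun n _ => ?_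
    rw [LinearMap.map_smul, ptr_outer, Matrix.transpose_smul]
  -- the sigma-indexed sum in terms of double sums
  have hFg : ∀ (c : (i : Fin M) → Matrix (Fin (r i)) (Fin (r i)) ℂ),
      (∑ σ : (Σ i : Fin M, Fin (r i) × Fin (r i)),
          c σ.1 σ.2.2 σ.2.1 • ((K σ.1 σ.2.1)ᴴ * K σ.1 σ.2.2))
        = ∑ i, ∑ m, ∑ n, c i m n • ((K i n)ᴴ * K i m) := by
    intro c
    rw [← Finset.univ_sigma_univ, Finset.sum_sigma]
    refine Finset.sum_congr rfl fun i _ => ?_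
    rw [Fintype.sum_prod_type]
    exact Finset.sum_comm
  have hRS : ∀ (z : ℝ) (X : Matrix (Fin d₁ × Fin d₀) (Fin d₁ × Fin d₀) ℂ),
      (z : ℝ) • X = ((z : ℂ)) • X := by
    intro z X; ext p q; simp [Complex.real_smul]
  have hNnorm : (∑ i, ∑ m, ∑ n,
      (1 : Matrix (Fin (r i)) (Fin (r i)) ℂ) m n • ((K i n)ᴴ * K i m)) = 1 := by
    have h2 := ((hInst N).mp hN).2
    rw [show (∑ i, N i) = ∑ i, V i * (1 : Matrix (Fin (r i)) (Fin (r i)) ℂ) * (V i)ᴴ from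
      Finset.sum_congr rfl fun i _ => hNV i] at h2
    rw [hptr (fun i => (1 : Matrix (Fin (r i)) (Fin (r i)) ℂ)), Matrix.transpose_eq_one] at h2
    exact h2
  rw [mem_extremePoints]
  constructor
  · -- extremal → linearly independent
    intro hext
    by_contra hLI
    rw [Fintype.not_linearIndependent_iff] at hLI
    obtain ⟨g, hgrel, σ₀, hgσ⟩ := hLI
    set c : (i : Fin M) → Matrix (Fin (r i)) (Fin (r i)) ℂ :=
      fun i => Matrix.of fun m n => g ⟨i, (n, m)⟩ with hcdef
    have hFc : ∑ i, ∑ m, ∑ n, c i m n • ((K i n)ᴴ * K i m) = 0 := by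
      rw [← hFg c, ← hgrel]
      exact Finset.sum_congr rfl fun σ _ => rfl
    have hFcH : ∑ i, ∑ m, ∑ n, ((c i)ᴴ) m n • ((K i n)ᴴ * K i m) = 0 := by
      have h := congrArg Matrix.conjTranspose hFc
      simp only [Matrix.conjTranspose_sum, Matrix.conjTranspose_smul, Matrix.conjTranspose_mul,
        Matrix.conjTranspose_conjTranspose, Matrix.conjTranspose_zero] at h
      simp only [Matrix.conjTranspose_apply]
      exact Eq.trans (Finset.sum_congr rfl fun i _ => Finset.sum_comm) h
    obtain ⟨e, heH, heRel, i₀, he0⟩ :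
        ∃ e : (i : Fin M) → Matrix (Fin (r i)) (Fin (r i)) ℂ,
          (∀ i, (e i).IsHermitian) ∧
          (∑ i, ∑ m, ∑ n, e i m n • ((K i n)ᴴ * K i m)) = 0 ∧ ∃ i₀, e i₀ ≠ 0 := by
      by_cases hA : ∃ i, c i + (c i)ᴴ ≠ 0
      · obtain ⟨i₀, hi₀⟩ := hA
        refine ⟨fun i => c i + (c i)ᴴ, fun i => ?_, ?_, i₀, hi₀⟩
        · unfold Matrix.IsHermitian
          rw [Matrix.conjTranspose_add, Matrix.conjTranspose_conjTranspose, add_comm]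
        · simp only [Matrix.add_apply, add_smul, Finset.sum_add_distrib]
          rw [hFc, hFcH, add_zero]
      · push_neg at hA
        have hi₀ : c σ₀.1 ≠ 0 := by
          intro h0
          apply hgσ
          have : c σ₀.1 σ₀.2.2 σ₀.2.1 = g σ₀ := rfl
          rw [h0] at this
          simpa using this.symm
        refine ⟨fun i => Complex.I • (c i - (c i)ᴴ), fun i => ?_, ?_, σ₀.1, ?_⟩
        · unfold Matrix.IsHermitian
          rw [Matrix.conjTranspose_smul, Matrix.conjTranspose_sub,
            Matrix.conjTranspose_conjTranspose]
          simp only [Complex.star_def, Complex.conj_I, neg_smul, smul_sub, neg_sub]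
          abel
        · have hterm : ∀ (i : Fin M) (m n : Fin (r i)),
              (Complex.I • (c i - (c i)ᴴ)) m n • ((K i n)ᴴ * K i m)
                = Complex.I • (c i m n • ((K i n)ᴴ * K i m))
                  - Complex.I • (((c i)ᴴ) m n • ((K i n)ᴴ * K i m)) := by
            intro i m n
            simp only [Matrix.smul_apply, Matrix.sub_apply, smul_eq_mul,
              mul_smul, sub_smul, smul_sub]
          simp only [hterm, Finset.sum_sub_distrib, ← Finset.smul_sum]
          rw [hFc, hFcH]
          simp
        · intro h0
          have h1 : c σ₀.1 - (c σ₀.1)ᴴ = 0 := by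
            have := smul_eq_zero.mp h0
            rcases this with h | h
            · exact absurd h Complex.I_ne_zero
            · exact h
          have h2 := hA σ₀.1
          have h4 : (c σ₀.1)ᴴ = c σ₀.1 := (sub_eq_zero.mp h1).symm
          rw [h4] at h2
          apply hi₀
          ext m n
          have hmn : c σ₀.1 m n + c σ₀.1 m n = 0 := by
            have := congr_fun (congr_fun h2 m) n
            simpa [Matrix.add_apply] using this
          simpa using add_self_eq_zero.mp hmn
    -- construct the perturbation
    set Cb : ℝ := ∑ i, ∑ m, ∑ n, ‖e i m n‖ with hCbdef
    have hCb0 : 0 ≤ Cb := Finset.sum_nonneg fun i _ => Finset.sum_nonneg fun m _ =>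
      Finset.sum_nonneg fun n _ => norm_nonneg _
    set ε : ℝ := (1 + Cb)⁻¹ with hεdef
    have hε : 0 < ε := by
      rw [hεdef]; positivity
    have hbound : ∀ i, ε * (∑ m, ∑ n, ‖e i m n‖) ≤ 1 := by
      intro i
      have h1 : (∑ m, ∑ n, ‖e i m n‖) ≤ Cb := by
        rw [hCbdef]
        exact Finset.single_le_sum (f := fun i => ∑ m, ∑ n, ‖e i m n‖)
          (fun j _ => Finset.sum_nonneg fun m _ => Finset.sum_nonneg fun n _ =>
            norm_nonneg _) (Finset.mem_univ i)
      have h2 : ε * (1 + Cb) = 1 := by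
        rw [hεdef]
        exact inv_mul_cancel₀ (by linarith)
      nlinarith
    have hboundneg : ∀ i, ε * (∑ m, ∑ n, ‖(-(e i)) m n‖) ≤ 1 := by
      intro i
      simpa [Matrix.neg_apply] using hbound i
    set D : Fin M → Matrix (Fin d₁ × Fin d₀) (Fin d₁ × Fin d₀) ℂ :=
      fun i => V i * ((ε : ℂ) • e i) * (V i)ᴴ with hDdef
    have hptrD : ptrCJ (∑ i, D i) = 0 := by
      rw [hDdef, hptr (fun i => (ε : ℂ) • e i)]
      have : (∑ i, ∑ m, ∑ n, ((ε : ℂ) • e i) m n • ((K i n)ᴴ * K i m)) = 0 := by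
        have hterm : ∀ (i : Fin M) (m n : Fin (r i)),
            ((ε : ℂ) • e i) m n • ((K i n)ᴴ * K i m)
              = (ε : ℂ) • (e i m n • ((K i n)ᴴ * K i m)) := by
          intro i m n
          simp only [Matrix.smul_apply, smul_eq_mul, mul_smul]
        simp only [hterm, ← Finset.smul_sum]
        rw [heRel, smul_zero]
      rw [this, Matrix.transpose_zero]
    have hXinst : IsInstrument d₁ d₀ M (N + D) := by
      rw [hInst]
      constructor
      · intro i
        have hrep : (N + D) i = V i * ((1 : Matrix (Fin (r i)) (Fin (r i)) ℂ)
            + (ε : ℂ) • e i) * (V i)ᴴ := by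
          rw [Pi.add_apply, hNV i, hDdef, Matrix.mul_add, Matrix.add_mul]
        rw [hrep]
        exact (one_add_smul_psd_s17 (e i) (heH i) hε.le (hbound i)).mul_mul_conjTranspose_same (V i)
      · rw [show (∑ i, (N + D) i) = (∑ i, N i) + (∑ i, D i) by
          simp [Finset.sum_add_distrib]]
        rw [map_add, hptrD, ((hInst N).mp hN).2, add_zero]
    have hYinst : IsInstrument d₁ d₀ M (N - D) := by
      rw [hInst]
      constructor
      · intro i
        have hrep : (N - D) i = V i * ((1 : Matrix (Fin (r i)) (Fin (r i)) ℂ)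
            + (ε : ℂ) • (-(e i))) * (V i)ᴴ := by
          have hone : (1 : Matrix (Fin (r i)) (Fin (r i)) ℂ) + (ε : ℂ) • (-(e i))
              = (1 : Matrix (Fin (r i)) (Fin (r i)) ℂ) - (ε : ℂ) • e i := by
            rw [smul_neg, ← sub_eq_add_neg]
          rw [Pi.sub_apply, hNV i, hDdef, hone, Matrix.mul_sub, Matrix.sub_mul]
        rw [hrep]
        have hherm : (-(e i)).IsHermitian := by
          unfold Matrix.IsHermitian
          rw [Matrix.conjTranspose_neg, (heH i).eq]
        exact (one_add_smul_psd_s17 (-(e i)) hherm hε.le (hboundneg i)).mul_mul_conjTranspose_same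
          (V i)
      · rw [show (∑ i, (N - D) i) = (∑ i, N i) - (∑ i, D i) by
          simp [Finset.sum_sub_distrib]]
        rw [map_sub, hptrD, ((hInst N).mp hN).2, sub_zero]
    have hseg : N ∈ openSegment ℝ (N + D) (N - D) := by
      refine ⟨1/2, 1/2, by norm_num, by norm_num, by norm_num, ?_⟩
      calc (1/2 : ℝ) • (N + D) + (1/2 : ℝ) • (N - D)
          = ((1/2 : ℝ) + (1/2 : ℝ)) • N + ((1/2 : ℝ) - (1/2 : ℝ)) • D := by
            rw [smul_add, smul_sub, add_smul, sub_smul]; abel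
        _ = N := by norm_num
    obtain ⟨hXN, _⟩ := hext.2 (N + D) hXinst (N - D) hYinst hseg
    have hD0 : D = 0 := by
      have : N + D = N := hXN
      rwa [add_eq_left] at this
    have : (ε : ℂ) • e i₀ = 0 := by
      apply sandwich_cancel (V i₀) (hVinj i₀)
      exact congr_fun hD0 i₀
    rcases smul_eq_zero.mp this with h | h
    · exact absurd h (by exact_mod_cast ne_of_gt hε)
    · exact he0 h
  · -- linearly independent → extremal
    intro hli
    refine ⟨hN, ?_⟩
    intro P hP Q hQ hseg
    obtain ⟨a, b, ha, hb, hab, hsum⟩ := hseg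
    have main : ∀ (W : Fin M → Matrix (Fin d₁ × Fin d₀) (Fin d₁ × Fin d₀) ℂ) (u : ℝ),
        0 < u → IsInstrument d₁ d₀ M W → (∀ i, (N i - (u : ℝ) • W i).PosSemidef) → W = N := by
      intro W u hu hW hpsd
      have hrep : ∀ i, ∃ cc : Matrix (Fin (r i)) (Fin (r i)) ℂ,
          W i = V i * cc * (V i)ᴴ := by
        intro i
        have hBpsd : ((u : ℝ) • W i).PosSemidef := psd_real_smul_s17 (hW.1 i) hu.le
        have hAB : (V i * (V i)ᴴ - (u : ℝ) • W i).PosSemidef := by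
          have hVV : V i * (V i)ᴴ = N i := by rw [hNV i, Matrix.mul_one]
          rw [hVV]
          exact hpsd i
        obtain ⟨cc, hcc⟩ := support_lemma (V i) (hVinj i) hBpsd hAB
        refine ⟨((u : ℂ))⁻¹ • cc, ?_⟩
        have h1 : W i = (u : ℝ)⁻¹ • ((u : ℝ) • W i) := by
          rw [smul_smul, inv_mul_cancel₀ (ne_of_gt hu), one_smul]
        rw [h1, hcc, hRS, Matrix.mul_smul, Matrix.smul_mul]
        push_cast
        rfl
      choose cc hcc using hrep
      have hWnorm : (∑ i, ∑ m, ∑ n, cc i m n • ((K i n)ᴴ * K i m)) = 1 := by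
        have h2 := ((hInst W).mp hW).2
        rw [show (∑ i, W i) = ∑ i, V i * cc i * (V i)ᴴ from
          Finset.sum_congr rfl fun i _ => hcc i] at h2
        rw [hptr cc, Matrix.transpose_eq_one] at h2
        exact h2
      have hgrel : ∑ σ : (Σ i : Fin M, Fin (r i) × Fin (r i)),
          (cc σ.1 σ.2.2 σ.2.1 - (1 : Matrix (Fin (r σ.1)) (Fin (r σ.1)) ℂ) σ.2.2 σ.2.1) •
            ((K σ.1 σ.2.1)ᴴ * K σ.1 σ.2.2) = 0 := by
        simp only [sub_smul, Finset.sum_sub_distrib]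
        rw [hFg cc, hFg (fun i => (1 : Matrix (Fin (r i)) (Fin (r i)) ℂ)), hWnorm, hNnorm,
          sub_self]
      have hzero := Fintype.linearIndependent_iff.mp hli _ hgrel
      have hcc1 : ∀ i, cc i = 1 := by
        intro i
        ext m n
        have := hzero ⟨i, (n, m)⟩
        simpa [sub_eq_zero] using this
      funext i
      rw [hcc i, hcc1 i, ← hNV i]
    have hNi : ∀ i, N i = a • P i + b • Q i := by
      intro i
      have := congr_fun hsum i
      simpa using this.symm
    have hPa : ∀ i, (N i - (a : ℝ) • P i).PosSemidef := by
      intro i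
      have : N i - a • P i = b • Q i := by rw [hNi i]; abel
      rw [this]
      exact psd_real_smul_s17 (hQ.1 i) hb.le
    have hQb : ∀ i, (N i - (b : ℝ) • Q i).PosSemidef := by
      intro i
      have : N i - b • Q i = a • P i := by rw [hNi i]; abel
      rw [this]
      exact psd_real_smul_s17 (hP.1 i) ha.le
    exact ⟨main P a ha hP hPa, main Q b hb hQ hQb⟩
end

section
/- Let {P_i}_{i=1}^M be a POVM on a finite-dimensional complex Hilbert space ℋ with P_i ≠ 0 for all i, and consider the quantum instrument from ℋ to ℋ whose i-th outcome has the single Kraus operator √P_i, i.e. with Choi operators N_i = |√P_i⟩⟩⟨⟨√P_i| (corresponding to the maps ρ ↦ √P_i ρ √P_i). This instrument is extremal if and only if the operators {P_i}_{i=1}^M are linearly independent over ℂ. -/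
open Matrix Kronecker
open scoped ComplexOrder

namespace Matrix.PosSemidef
variable {n : Type*} [Fintype n] [DecidableEq n]
noncomputable def sqrt {A : Matrix n n ℂ} (h : A.PosSemidef) : Matrix n n ℂ :=
  h.1.eigenvectorUnitary.1 * diagonal (((↑) : ℝ → ℂ) ∘ Real.sqrt ∘ h.1.eigenvalues) *
    (star h.1.eigenvectorUnitary : Matrix n n ℂ)
theorem posSemidef_sqrt {A : Matrix n n ℂ} (h : A.PosSemidef) : h.sqrt.PosSemidef := by
  have hD : (diagonal (((↑) : ℝ → ℂ) ∘ Real.sqrt ∘ h.1.eigenvalues)).PosSemidef :=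
    PosSemidef.diagonal fun i => by simp [Real.sqrt_nonneg]
  have := hD.mul_mul_conjTranspose_same (h.1.eigenvectorUnitary.1)
  simpa [sqrt, star_eq_conjTranspose] using this
theorem sqrt_mul_self {A : Matrix n n ℂ} (h : A.PosSemidef) : h.sqrt * h.sqrt = A := by
  have hU : (star (h.1.eigenvectorUnitary : Matrix n n ℂ)) * h.1.eigenvectorUnitary = 1 :=
    Unitary.coe_star_mul_self _
  conv_rhs => rw [h.1.spectral_theorem, Unitary.conjStarAlgAut_apply]
  simp only [sqrt]
  set U := (h.1.eigenvectorUnitary : Matrix n n ℂ)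
  set D := diagonal (((↑) : ℝ → ℂ) ∘ Real.sqrt ∘ h.1.eigenvalues)
  calc U * D * star U * (U * D * star U) = U * (D * (star U * U) * D) * star U := by
        simp only [mul_assoc]
    _ = _ := by
        rw [hU, mul_one, diagonal_mul_diagonal]
        simp only [Function.comp_apply, ← Complex.ofReal_mul, Real.mul_self_sqrt,
          h.eigenvalues_nonneg]
        rfl
end Matrix.PosSemidef

set_option linter.unusedSectionVars false

namespace AuxCJ

variable {n : Type*} [Fintype n] [DecidableEq n]

lemma star_dot (v w : n → ℂ) : star (star v ⬝ᵥ w) = star w ⬝ᵥ v := by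
  rw [star_dotProduct, star_star]

lemma rk_mulVec (v x : n → ℂ) : vecMulVec v (star v) *ᵥ x = (star v ⬝ᵥ x) • v := by
  funext p
  simp only [mulVec, vecMulVec, of_apply, dotProduct, Pi.smul_apply, Pi.star_apply,
    smul_eq_mul, Finset.mul_sum]
  rw [Finset.sum_mul]
  exact Finset.sum_congr rfl fun q _ => by ring

lemma rk_hermitian (v : n → ℂ) : (vecMulVec v (star v)).IsHermitian := by
  ext p q
  simp only [conjTranspose_apply, vecMulVec, of_apply, Pi.star_apply, star_mul', star_star]
  ring

lemma rk_posSemidef (v : n → ℂ) : (vecMulVec v (star v)).PosSemidef := by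
  refine posSemidef_iff_dotProduct_mulVec.mpr ⟨rk_hermitian v, fun x => ?_⟩
  rw [rk_mulVec, dotProduct_smul, smul_eq_mul, ← star_dot]
  exact star_mul_self_nonneg (star x ⬝ᵥ v)

lemma smul_psd {r : ℝ} (hr : 0 ≤ r) {A : Matrix n n ℂ} (hA : A.PosSemidef) :
    ((r : ℂ) • A).PosSemidef := by
  refine posSemidef_iff_dotProduct_mulVec.mpr ⟨?_, fun x => ?_⟩
  · have : star (r : ℂ) = (r : ℂ) := by simp [Complex.ext_iff]
    rw [IsHermitian, conjTranspose_smul, this, hA.1]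
  · rw [smul_mulVec, dotProduct_smul, smul_eq_mul]
    have h := hA.dotProduct_mulVec_nonneg x
    rw [Complex.nonneg_iff] at h ⊢
    constructor
    · simp only [Complex.mul_re, Complex.ofReal_re, Complex.ofReal_im, zero_mul, sub_zero]
      exact mul_nonneg hr h.1
    · simp [Complex.mul_im, ← h.2]

lemma nonneg_re_coe {z : ℂ} (hz : 0 ≤ z) : z = (z.re : ℂ) := by
  rw [Complex.nonneg_iff] at hz
  exact Complex.ext rfl (by simp [← hz.2])

lemma dominated {v : n → ℂ} (hv : v ≠ 0) {X : Matrix n n ℂ}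
    (hX : X.PosSemidef) (hd : (vecMulVec v (star v) - X).PosSemidef) :
    ∃ t : ℝ, 0 ≤ t ∧ X = (t : ℂ) • vecMulVec v (star v) := by
  have hker : ∀ w : n → ℂ, star v ⬝ᵥ w = 0 → X *ᵥ w = 0 := by
    intro w hw
    rw [← hX.dotProduct_mulVec_zero_iff]
    have h1 := hd.dotProduct_mulVec_nonneg w
    rw [sub_mulVec, dotProduct_sub, rk_mulVec, hw, zero_smul, dotProduct_zero, zero_sub] at h1
    exact le_antisymm (neg_nonneg.mp h1) (hX.dotProduct_mulVec_nonneg w)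
  have hn0 : star v ⬝ᵥ v ≠ 0 := fun h => hv (dotProduct_star_self_eq_zero.mp h)
  set nn : ℂ := star v ⬝ᵥ v with hnn
  set a : ℂ := star v ⬝ᵥ (X *ᵥ v) with ha_def
  have ha : 0 ≤ a := hX.dotProduct_mulVec_nonneg v
  -- X *ᵥ v = (a / nn) • v
  have hXv : X *ᵥ v = (a / nn) • v := by
    set u : n → ℂ := X *ᵥ v - (a / nn) • v with hu
    have hvu : star v ⬝ᵥ u = 0 := by
      rw [hu, dotProduct_sub, dotProduct_smul, smul_eq_mul, ← ha_def, ← hnn,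
        div_mul_cancel₀ a hn0, sub_self]
    have hXu : X *ᵥ u = 0 := hker u hvu
    have h1 : star u ⬝ᵥ (X *ᵥ v) = 0 := by
      rw [dotProduct_mulVec, ← hX.1, ← star_mulVec, hXu]
      simp
    have h2 : star u ⬝ᵥ v = 0 := by
      rw [← star_dot v u, hvu, star_zero]
    have huu : star u ⬝ᵥ u = 0 := by
      have : star u ⬝ᵥ u = star u ⬝ᵥ (X *ᵥ v) - (a / nn) * (star u ⬝ᵥ v) := by
        conv_lhs => rw [hu]
        rw [dotProduct_sub, dotProduct_smul, smul_eq_mul]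
      rw [this, h1, h2, mul_zero, sub_zero]
    have : u = 0 := dotProduct_star_self_eq_zero.mp huu
    rw [hu, sub_eq_zero] at this
    exact this
  have hcol : ∀ x, X *ᵥ x = ((a / nn ^ 2) * (star v ⬝ᵥ x)) • v := by
    intro x
    have hw : star v ⬝ᵥ (x - ((star v ⬝ᵥ x) / nn) • v) = 0 := by
      rw [dotProduct_sub, dotProduct_smul, smul_eq_mul, ← hnn, div_mul_cancel₀ _ hn0, sub_self]
    have h0 := hker _ hw
    rw [mulVec_sub, mulVec_smul, sub_eq_zero] at h0
    rw [h0, hXv, smul_smul]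
    congr 1
    field_simp
  -- extract real t
  have hnn_nonneg : (0 : ℂ) ≤ nn := by
    rw [hnn]
    exact Finset.sum_nonneg fun i _ => star_mul_self_nonneg _
  have hnn_re : nn = ((nn.re : ℝ) : ℂ) := nonneg_re_coe hnn_nonneg
  have ha_re : a = ((a.re : ℝ) : ℂ) := nonneg_re_coe ha
  have hnn_re_pos : 0 < nn.re := by
    rcases lt_or_eq_of_le ((Complex.nonneg_iff.mp hnn_nonneg).1) with h | h
    · exact h
    · exact absurd (by rw [hnn_re, ← h]; simp) hn0
  have ha_re_nonneg : 0 ≤ a.re := (Complex.nonneg_iff.mp ha).1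
  obtain ⟨ar, har, ha2⟩ : ∃ r : ℝ, a = (r : ℂ) ∧ 0 ≤ r := ⟨a.re, ha_re, ha_re_nonneg⟩
  obtain ⟨nr, hnr, hn2⟩ : ∃ r : ℝ, nn = (r : ℂ) ∧ 0 < r := ⟨nn.re, hnn_re, hnn_re_pos⟩
  refine ⟨ar / nr ^ 2, by positivity, ?_⟩
  have ht : ((ar / nr ^ 2 : ℝ) : ℂ) = a / nn ^ 2 := by
    rw [har, hnr]
    push_cast
    ring
  ext p q
  have := congrFun (hcol (Pi.single q 1)) p
  rw [mulVec_single] at this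
  simp only [Pi.smul_apply, col_apply, op_smul_eq_mul, mul_one] at this
  rw [dotProduct_single, mul_one] at this
  rw [this, Matrix.smul_apply, vecMulVec_apply, ht, Pi.star_apply, smul_eq_mul,
    smul_eq_mul]
  ring




lemma real_smul_mat {n m : Type*} (r : ℝ) (A : Matrix n m ℂ) : r • A = (r : ℂ) • A := by
  ext p q
  simp [Matrix.smul_apply, Complex.real_smul]

lemma outer_eq_rk {d : ℕ} (A : Matrix (Fin d) (Fin d) ℂ) :
    outerCJ A A = vecMulVec (fun p : Fin d × Fin d => A p.1 p.2)
      (star fun p : Fin d × Fin d => A p.1 p.2) := rfl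

lemma outer_psd {d : ℕ} (A : Matrix (Fin d) (Fin d) ℂ) : (outerCJ A A).PosSemidef := by
  rw [outer_eq_rk]
  exact rk_posSemidef _

lemma ptrace_outer {d : ℕ} {Q : Matrix (Fin d) (Fin d) ℂ} (h : Q.PosSemidef) (j j' : Fin d) :
    ∑ k : Fin d, outerCJ h.sqrt h.sqrt (k, j) (k, j') = Q j' j := by
  have hs := h.posSemidef_sqrt.1
  have key : ∀ k : Fin d, outerCJ h.sqrt h.sqrt (k, j) (k, j')
      = h.sqrt j' k * h.sqrt k j := by
    intro k
    have h1 : star (h.sqrt k j') = h.sqrt j' k := by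
      conv_rhs => rw [← hs]
      rw [conjTranspose_apply]
    show h.sqrt k j * star (h.sqrt k j') = _
    rw [h1, mul_comm]
  rw [Finset.sum_congr rfl (fun k _ => key k), ← Matrix.mul_apply, h.sqrt_mul_self]

lemma one_apply_symm {d : ℕ} (j j' : Fin d) :
    (1 : Matrix (Fin d) (Fin d) ℂ) j' j = (1 : Matrix (Fin d) (Fin d) ℂ) j j' := by
  by_cases h : j = j'
  · subst h; rfl
  · rw [Matrix.one_apply_ne h, Matrix.one_apply_ne (Ne.symm h)]

/-- membership of the perturbed instrument; `e = 0` gives the instrument itself. -/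
lemma pert_mem {d M : ℕ} (P : Fin M → Matrix (Fin d) (Fin d) ℂ)
    (hP : ∀ i, (P i).PosSemidef) (hsum : ∑ i, P i = 1)
    (e : Fin M → ℝ) (he : ∀ i, 0 ≤ 1 + e i) (hdep : ∑ i, ((e i : ℂ)) • P i = 0) :
    IsInstrument d d M (fun i => (1 + e i : ℝ) • outerCJ (hP i).sqrt (hP i).sqrt) := by
  constructor
  · intro i
    show ((1 + e i : ℝ) • outerCJ (hP i).sqrt (hP i).sqrt).PosSemidef
    rw [real_smul_mat]
    exact smul_psd (he i) (outer_psd _)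
  · ext j j'
    simp only [Matrix.of_apply, Matrix.sum_apply]
    rw [Finset.sum_comm]
    have key : ∀ i, ∑ k : Fin d,
        ((1 + e i : ℝ) • outerCJ (hP i).sqrt (hP i).sqrt) (k, j) (k, j')
        = ((1 + e i : ℝ) : ℂ) * P i j' j := by
      intro i
      have : ∀ k : Fin d, ((1 + e i : ℝ) • outerCJ (hP i).sqrt (hP i).sqrt) (k, j) (k, j')
          = ((1 + e i : ℝ) : ℂ) * outerCJ (hP i).sqrt (hP i).sqrt (k, j) (k, j') := by
        intro k
        rw [real_smul_mat]
        simp [Matrix.smul_apply]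
      rw [Finset.sum_congr rfl fun k _ => this k, ← Finset.mul_sum, ptrace_outer (hP i)]
    rw [Finset.sum_congr rfl fun i _ => key i]
    have expand : ∑ i, ((1 + e i : ℝ) : ℂ) * P i j' j
        = (∑ i, P i) j' j + (∑ i, ((e i : ℂ)) • P i) j' j := by
      simp only [Matrix.sum_apply, Matrix.smul_apply, smul_eq_mul]
      rw [← Finset.sum_add_distrib]
      refine Finset.sum_congr rfl fun i _ => ?_
      push_cast
      ring
    rw [expand, hdep, hsum, Matrix.zero_apply, add_zero, one_apply_symm]








lemma half_eq {d M : ℕ} (P : Fin M → Matrix (Fin d) (Fin d) ℂ)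
    (hP : ∀ i, (P i).PosSemidef) (hsum : ∑ i, P i = 1)
    (hvne : ∀ i, (fun p : Fin d × Fin d => (hP i).sqrt p.1 p.2) ≠ 0)
    (hLI : LinearIndependent ℂ P)
    {X Y : Fin M → Matrix (Fin d × Fin d) (Fin d × Fin d) ℂ}
    (hX : IsInstrument d d M X) (hY : IsInstrument d d M Y)
    {a b : ℝ} (ha : 0 < a) (hb : 0 < b)
    (heq : a • X + b • Y = fun i => outerCJ (hP i).sqrt (hP i).sqrt) :
    X = fun i => outerCJ (hP i).sqrt (hP i).sqrt := by
  have hdom : ∀ i, ∃ t : ℝ, 0 ≤ t ∧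
      (a : ℂ) • X i = (t : ℂ) • vecMulVec (fun p : Fin d × Fin d => (hP i).sqrt p.1 p.2)
        (star fun p : Fin d × Fin d => (hP i).sqrt p.1 p.2) := by
    intro i
    refine dominated (hvne i) ?_ ?_
    · rw [← real_smul_mat]
      rw [real_smul_mat]
      exact smul_psd ha.le (hX.1 i)
    · have h1 : vecMulVec (fun p : Fin d × Fin d => (hP i).sqrt p.1 p.2)
          (star fun p : Fin d × Fin d => (hP i).sqrt p.1 p.2) - (a : ℂ) • X i
          = (b : ℂ) • Y i := by
        have h2 := congrFun heq i
        simp only [Pi.add_apply, Pi.smul_apply] at h2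
        rw [← outer_eq_rk, ← h2, real_smul_mat, real_smul_mat]
        abel
      rw [h1]
      exact smul_psd hb.le (hY.1 i)
  choose t ht0 hts using hdom
  -- define s i = t i / a, so X i = s i • Q i
  have hXi : ∀ i, X i = ((t i / a : ℝ) : ℂ) • outerCJ (hP i).sqrt (hP i).sqrt := by
    intro i
    have h := hts i
    rw [← outer_eq_rk] at h
    have ha' : (a : ℂ) ≠ 0 := by
      exact_mod_cast ha.ne'
    calc X i = (a : ℂ)⁻¹ • ((a : ℂ) • X i) := by
          rw [smul_smul, inv_mul_cancel₀ ha', one_smul]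
      _ = (a : ℂ)⁻¹ • ((t i : ℂ) • outerCJ (hP i).sqrt (hP i).sqrt) := by rw [h]
      _ = ((t i / a : ℝ) : ℂ) • outerCJ (hP i).sqrt (hP i).sqrt := by
          rw [smul_smul]
          congr 1
          push_cast
          ring
  -- trace condition for X
  have trX : ∀ j j' : Fin d, ∑ i, ((t i / a : ℝ) : ℂ) * P i j' j
      = (1 : Matrix (Fin d) (Fin d) ℂ) j j' := by
    intro j j'
    have h := Matrix.ext_iff.mpr hX.2 j j'
    simp only [Matrix.of_apply, Matrix.sum_apply] at h
    rw [← h, Finset.sum_comm]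
    refine Finset.sum_congr rfl fun i _ => ?_
    have : ∀ k : Fin d, X i (k, j) (k, j')
        = ((t i / a : ℝ) : ℂ) * outerCJ (hP i).sqrt (hP i).sqrt (k, j) (k, j') := by
      intro k
      rw [hXi i]
      simp [Matrix.smul_apply]
    rw [Finset.sum_congr rfl fun k _ => this k, ← Finset.mul_sum, ptrace_outer (hP i)]
  -- trace condition for N itself
  have trN : ∀ j j' : Fin d, ∑ i, P i j' j = (1 : Matrix (Fin d) (Fin d) ℂ) j j' := by
    intro j j'
    have hs : (∑ i, P i) j' j = ∑ i, P i j' j := by simp [Matrix.sum_apply]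
    rw [← hs, hsum, one_apply_symm]
  -- linear dependence
  have hzero : ∑ i, (((t i / a : ℝ) : ℂ) - 1) • P i = 0 := by
    ext x y
    simp only [Matrix.sum_apply, Matrix.smul_apply, smul_eq_mul, Matrix.zero_apply, sub_mul,
      one_mul]
    rw [Finset.sum_sub_distrib, trX y x, trN y x, sub_self]
  have hcoef := Fintype.linearIndependent_iff.mp hLI _ hzero
  funext i
  have h1 : ((t i / a : ℝ) : ℂ) = 1 := by
    have := hcoef i
    linear_combination this
  rw [hXi i, h1, one_smul]

end AuxCJ

open AuxCJ

set_option linter.unusedSectionVars false in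
theorem stmt_18 {d M : ℕ}
    (P : Fin M → Matrix (Fin d) (Fin d) ℂ)
    (hP : ∀ i, (P i).PosSemidef) (hsum : ∑ i, P i = 1)
    (hne : ∀ i, P i ≠ 0) :
    (fun i => outerCJ ((hP i).1.eigenvectorUnitary.1 * diagonal (((↑) : ℝ → ℂ) ∘ Real.sqrt ∘ (hP i).1.eigenvalues) * (star (hP i).1.eigenvectorUnitary : Matrix (Fin d) (Fin d) ℂ)) ((hP i).1.eigenvectorUnitary.1 * diagonal (((↑) : ℝ → ℂ) ∘ Real.sqrt ∘ (hP i).1.eigenvalues) * (star (hP i).1.eigenvectorUnitary : Matrix (Fin d) (Fin d) ℂ))) ∈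
        {W | IsInstrument d d M W}.extremePoints ℝ ↔
      LinearIndependent ℂ P := by
  have hvne : ∀ i, (fun p : Fin d × Fin d => (hP i).sqrt p.1 p.2) ≠ 0 := by
    intro i h
    apply hne i
    have hS : (hP i).sqrt = 0 := by
      ext a b
      exact congrFun h (a, b)
    rw [← (hP i).sqrt_mul_self, hS, mul_zero]
  have hmem : IsInstrument d d M (fun i => outerCJ (hP i).sqrt (hP i).sqrt) := by
    have h := pert_mem P hP hsum (fun _ => 0) (fun i => by norm_num) (by simp)
    simpa using h
  constructor
  · -- extremal → linearly independent
    intro hext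
    by_contra hLI
    obtain ⟨g, hg0, i₀, hgi₀⟩ := Fintype.not_linearIndependent_iff.mp hLI
    have hg0' : ∑ i, (star (g i)) • P i = 0 := by
      have h := congrArg conjTranspose hg0
      rw [conjTranspose_zero] at h
      rw [← h, conjTranspose_sum]
      refine Finset.sum_congr rfl fun i _ => ?_
      rw [conjTranspose_smul, (hP i).1]
    have hre : ∑ i, (((g i).re : ℂ)) • P i = 0 := by
      have h2 : ∑ i, ((g i + star (g i)) • P i) = 0 := by
        simp only [add_smul]
        rw [Finset.sum_add_distrib, hg0, hg0', add_zero]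
      have h4 : (2 : ℂ) • ∑ i, (((g i).re : ℂ)) • P i = 0 := by
        rw [Finset.smul_sum, ← h2]
        refine Finset.sum_congr rfl fun i _ => ?_
        rw [smul_smul]
        congr 1
        have hst : star (g i) = (starRingEnd ℂ) (g i) := rfl
        rw [hst, Complex.add_conj]
        push_cast
        ring
      rcases smul_eq_zero.mp h4 with h' | h'
      · exact absurd h' two_ne_zero
      · exact h'
    have him : ∑ i, (((g i).im : ℂ)) • P i = 0 := by
      have h2 : ∑ i, ((g i - star (g i)) • P i) = 0 := by
        simp only [sub_smul]
        rw [Finset.sum_sub_distrib, hg0, hg0', sub_zero]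
      have h4 : ((2 : ℂ) * Complex.I) • ∑ i, (((g i).im : ℂ)) • P i = 0 := by
        rw [Finset.smul_sum, ← h2]
        refine Finset.sum_congr rfl fun i _ => ?_
        rw [smul_smul]
        congr 1
        have hst : star (g i) = (starRingEnd ℂ) (g i) := rfl
        rw [hst, Complex.sub_conj]
        push_cast
        ring
      rcases smul_eq_zero.mp h4 with h' | h'
      · exact absurd h' (by simp [Complex.ext_iff])
      · exact h'
    have hrealdep : ∃ c : Fin M → ℝ, (∑ i, ((c i : ℂ)) • P i = 0) ∧ c ≠ 0 := by
      by_cases hre0 : (fun i => (g i).re) = (0 : Fin M → ℝ)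
      · refine ⟨fun i => (g i).im, him, fun h => hgi₀ ?_⟩
        exact Complex.ext (congrFun hre0 i₀) (congrFun h i₀)
      · exact ⟨fun i => (g i).re, hre, hre0⟩
    obtain ⟨c, hcdep, hcne⟩ := hrealdep
    obtain ⟨i₁, hci₁⟩ := Function.ne_iff.mp hcne
    simp only [Pi.zero_apply] at hci₁
    set B : ℝ := ∑ i, |c i| with hB
    have hεpos : 0 < (1 + B)⁻¹ := by
      have : 0 ≤ B := Finset.sum_nonneg fun i _ => abs_nonneg _
      positivity
    set ε : ℝ := (1 + B)⁻¹ with hε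
    have hbnd : ∀ i, |ε * c i| ≤ 1 := by
      intro i
      rw [abs_mul, abs_of_pos hεpos]
      have h1 : |c i| ≤ B :=
        Finset.single_le_sum (f := fun i => |c i|) (fun i _ => abs_nonneg _) (Finset.mem_univ i)
      have hBnn : 0 ≤ B := Finset.sum_nonneg fun i _ => abs_nonneg _
      have h2 : ε * (1 + B) = 1 := by
        rw [hε]
        field_simp
      nlinarith
    set e : Fin M → ℝ := fun i => ε * c i with he_def
    have hdep1 : ∑ i, ((e i : ℂ)) • P i = 0 := by
      have h1 : ∀ i, ((e i : ℂ)) • P i = ((ε : ℂ)) • (((c i : ℂ)) • P i) := by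
        intro i
        rw [smul_smul]
        congr 1
        norm_cast
      rw [Finset.sum_congr rfl fun i _ => h1 i, ← Finset.smul_sum, hcdep, smul_zero]
    have hdep2 : ∑ i, (((-e i : ℝ) : ℂ)) • P i = 0 := by
      have h1 : ∀ i : Fin M, (((-e i : ℝ) : ℂ)) • P i = -(((e i : ℂ)) • P i) := by
        intro i
        push_cast
        rw [neg_smul]
      rw [Finset.sum_congr rfl fun i _ => h1 i, Finset.sum_neg_distrib, hdep1, neg_zero]
    have hXmem := pert_mem P hP hsum e
      (fun i => by have := (abs_le.mp (hbnd i)).1; simp only [he_def] at *; linarith) hdep1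
    have hYmem := pert_mem P hP hsum (fun i => -e i)
      (fun i => by have := (abs_le.mp (hbnd i)).2; simp only [he_def] at *; linarith) hdep2
    rw [mem_extremePoints] at hext
    have hseg : (fun i => outerCJ (hP i).sqrt (hP i).sqrt) ∈
        openSegment ℝ (fun i => (1 + e i : ℝ) • outerCJ (hP i).sqrt (hP i).sqrt)
          (fun i => (1 + -e i : ℝ) • outerCJ (hP i).sqrt (hP i).sqrt) := by
      refine ⟨1/2, 1/2, by norm_num, by norm_num, by norm_num, ?_⟩
      funext i
      simp only [Pi.add_apply, Pi.smul_apply]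
      rw [smul_smul, smul_smul, ← add_smul]
      have h7 : (1/2 : ℝ) * (1 + e i) + (1/2) * (1 + -e i) = 1 := by ring
      rw [h7, one_smul]
    have hcon := (hext.2 _ hXmem _ hYmem hseg).1
    have h8 := congrFun hcon i₁
    have h5 : (e i₁) • outerCJ (hP i₁).sqrt (hP i₁).sqrt = 0 := by
      have h6 : (1 + e i₁ : ℝ) • outerCJ (hP i₁).sqrt (hP i₁).sqrt
          = (1 : ℝ) • outerCJ (hP i₁).sqrt (hP i₁).sqrt := by
        rw [one_smul]
        exact h8
      have h9 := sub_eq_zero.mpr h6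
      rw [← sub_smul] at h9
      have h10 : (1 + e i₁ - 1 : ℝ) = e i₁ := by ring
      rwa [h10] at h9
    obtain ⟨p, hp⟩ := Function.ne_iff.mp (hvne i₁)
    have hentry := congrFun (congrFun h5 p) p
    simp only [Matrix.smul_apply, Matrix.zero_apply] at hentry
    rcases smul_eq_zero.mp hentry with h' | h'
    · rcases mul_eq_zero.mp h' with h'' | h''
      · exact hεpos.ne' h''
      · exact hci₁ h''
    · have := mul_eq_zero.mp h'
      rcases this with h'' | h''
      · exact hp h''
      · exact hp (by simpa using h'')
  · -- linearly independent → extremal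
    intro hLI
    rw [mem_extremePoints]
    refine ⟨hmem, fun X hX Y hY hseg => ?_⟩
    obtain ⟨a, b, ha, hb, hab, heqv⟩ := hseg
    refine ⟨half_eq P hP hsum hvne hLI hX hY ha hb heqv, ?_⟩
    refine half_eq P hP hsum hvne hLI hY hX hb ha ?_
    change _ = fun i => outerCJ (hP i).sqrt (hP i).sqrt at heqv
    rw [← heqv, add_comm]
end

section
/- Let {Π_i}_{i=1}^M be nonzero orthogonal projections on a finite-dimensional complex Hilbert space ℋ with Π_i Π_j = δ_{ij} Π_i and ∑_{i=1}^M Π_i = I. Then the Von Neumann–Lüders instrument whose i-th outcome has the single Kraus operator Π_i, i.e. with Choi operators N_i = |Π_i⟩⟩⟨⟨Π_i| (corresponding to the maps ρ ↦ Π_i ρ Π_i), is an extremal quantum instrument. -/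
open Matrix Kronecker
open scoped ComplexOrder

lemma outer_form {n : Type*} [Fintype n] (v x y : n → ℂ) :
    star x ⬝ᵥ (Matrix.vecMulVec v (star v)) *ᵥ y = (star x ⬝ᵥ v) * (star v ⬝ᵥ y) := by
  simp only [dotProduct, Matrix.mulVec, Matrix.vecMulVec_apply, Pi.star_apply,
    Finset.mul_sum, Finset.sum_mul]
  rw [Finset.sum_comm]
  congr 1; ext p; congr 1; ext q; ring

lemma psd_outer {n : Type*} [Fintype n] (v : n → ℂ) :
    (Matrix.vecMulVec v (star v)).PosSemidef := by
  rw [Matrix.posSemidef_iff_dotProduct_mulVec]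
  constructor
  · ext p q
    simp [Matrix.vecMulVec_apply, Matrix.conjTranspose_apply, mul_comm]
  · intro x
    rw [outer_form]
    have : star v ⬝ᵥ x = star (star x ⬝ᵥ v) := by
      simp [dotProduct, star_sum, mul_comm]
    rw [this]
    exact mul_star_self_nonneg _

lemma rankone_dom {n : Type*} [Fintype n] [DecidableEq n] {v : n → ℂ} (hv : v ≠ 0)
    {A : Matrix n n ℂ} (hA : A.PosSemidef)
    (hD : (Matrix.vecMulVec v (star v) - A).PosSemidef) :
    ∃ c : ℂ, A = c • Matrix.vecMulVec v (star v) := by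
  classical
  set n₀ : ℂ := star v ⬝ᵥ v with hn₀
  have hn₀ne : n₀ ≠ 0 := fun h => hv (dotProduct_star_self_eq_zero.mp h)
  have hn₀real : star n₀ = n₀ := by
    simp [hn₀, dotProduct, star_sum, mul_comm]
  -- Step A: A kills v-perp
  have stepA : ∀ x : n → ℂ, star v ⬝ᵥ x = 0 → A *ᵥ x = 0 := by
    intro x hx
    rw [← hA.dotProduct_mulVec_zero_iff]
    have hP : star x ⬝ᵥ (Matrix.vecMulVec v (star v)) *ᵥ x = 0 := by
      rw [outer_form, hx, mul_zero]
    have h1 := hD.dotProduct_mulVec_nonneg x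
    rw [Matrix.sub_mulVec, dotProduct_sub, hP, zero_sub] at h1
    exact le_antisymm (neg_nonneg.mp h1) (hA.dotProduct_mulVec_nonneg x)
  -- Step B: A x = (⟨v,x⟩/n₀) • (A v)
  have stepB : ∀ x : n → ℂ, A *ᵥ x = ((star v ⬝ᵥ x) / n₀) • (A *ᵥ v) := by
    intro x
    have hx0 : star v ⬝ᵥ (x - ((star v ⬝ᵥ x) / n₀) • v) = 0 := by
      rw [dotProduct_sub, dotProduct_smul, smul_eq_mul, ← hn₀,
        div_mul_cancel₀ _ hn₀ne, sub_self]
    have := stepA _ hx0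
    rw [Matrix.mulVec_sub, Matrix.mulVec_smul, sub_eq_zero] at this
    exact this
  -- Step C: entrywise formula
  set w : n → ℂ := A *ᵥ v with hw
  have stepC : ∀ p q, A p q = (star (v q) / n₀) * w p := by
    intro p q
    have h1 : A *ᵥ (Pi.single q 1) = ((star v ⬝ᵥ Pi.single q 1) / n₀) • w := stepB _
    have h2 : (A *ᵥ (Pi.single q 1)) p = A p q := by
      simp [Matrix.mulVec_single]
    have h3 : star v ⬝ᵥ Pi.single q 1 = star (v q) := by
      simp [dotProduct, Pi.single_apply, mul_ite]
    rw [h1] at h2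
    rw [← h2, h3, Pi.smul_apply, smul_eq_mul]
  -- Step D: w is a multiple of v
  obtain ⟨q₀, hq₀⟩ : ∃ q, v q ≠ 0 := by
    by_contra h
    push_neg at h
    exact hv (funext h)
  have hherm := hA.1
  have hDw : ∀ p, w p = (star (w q₀ / v q₀)) * v p := by
    intro p
    have e1 : A q₀ p = (star (v p) / n₀) * w q₀ := stepC q₀ p
    have e2 : A q₀ p = star (A p q₀) := by
      have := congr_fun (congr_fun hherm q₀) p
      simpa [Matrix.conjTranspose_apply] using this.symm
    have e : star (v p) / n₀ * w q₀ = star (star (v q₀) / n₀ * w p) := by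
      rw [← stepC p q₀, ← e2, stepC q₀ p]
    have e' := congrArg star e
    simp only [star_mul', star_div₀, star_star, hn₀real] at e'
    have hvq0 : (starRingEnd ℂ) (v q₀) ≠ 0 := by
      simpa [RCLike.star_def] using star_ne_zero.mpr hq₀
    rw [star_div₀]
    field_simp at e'
    simp only [RCLike.star_def]
    rw [eq_comm, div_mul_eq_mul_div, div_eq_iff hvq0]
    simp only [RCLike.star_def] at e'
    linear_combination e'
  refine ⟨star (w q₀ / v q₀) / n₀, ?_⟩
  ext p q
  rw [stepC p q, hDw p, Matrix.smul_apply, Matrix.vecMulVec_apply, smul_eq_mul, Pi.star_apply]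
  ring

lemma psd_csmul {n : Type*} [Fintype n] {X : Matrix n n ℂ} (hX : X.PosSemidef)
    {a : ℝ} (ha : 0 ≤ a) : (((a : ℂ)) • X).PosSemidef := by
  rw [Matrix.posSemidef_iff_dotProduct_mulVec]
  constructor
  · show (((a : ℂ)) • X)ᴴ = _
    rw [Matrix.conjTranspose_smul, hX.1]
    congr 1
    simp [Complex.conj_ofReal]
  · intro x
    rw [Matrix.smul_mulVec, dotProduct_smul, smul_eq_mul]
    exact mul_nonneg (by exact_mod_cast ha) (hX.dotProduct_mulVec_nonneg x)

lemma real_smul_matrix {n m : Type*} (a : ℝ) (X : Matrix n m ℂ) :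
    a • X = ((a : ℂ)) • X := by
  ext p q
  simp [Complex.real_smul]


theorem stmt_19 {d M : ℕ}
    (Pr : Fin M → Matrix (Fin d) (Fin d) ℂ)
    (hherm : ∀ i, (Pr i).IsHermitian)
    (hne : ∀ i, Pr i ≠ 0)
    (horth : ∀ i j, Pr i * Pr j = if i = j then Pr i else 0)
    (hsum : ∑ i, Pr i = 1) :
    (fun i => outerCJ (Pr i) (Pr i)) ∈
      {W | IsInstrument d d M W}.extremePoints ℝ := by
  classical
  set v : Fin M → (Fin d × Fin d → ℂ) := fun i p => Pr i p.1 p.2 with hv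
  have houter : ∀ i, outerCJ (Pr i) (Pr i)
      = Matrix.vecMulVec (v i) (star (v i)) := by
    intro i; ext p q; rfl
  have hvne : ∀ i, v i ≠ 0 := by
    intro i h
    apply hne i
    ext p q
    exact congr_fun h (p, q)
  -- the column-sum computation
  have hcol : ∀ i (j j' : Fin d), ∑ k, Pr i k j * star (Pr i k j') = Pr i j' j := by
    intro i j j'
    have h2 : (Pr i)ᴴ * Pr i = Pr i := by
      rw [hherm i, horth i i, if_pos rfl]
    calc ∑ k, Pr i k j * star (Pr i k j')
        = ((Pr i)ᴴ * Pr i) j' j := by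
          simp only [Matrix.mul_apply, Matrix.conjTranspose_apply]
          exact Finset.sum_congr rfl fun k _ => by ring
      _ = Pr i j' j := by rw [h2]
  -- partial trace of scaled family
  have hpt : ∀ (c : Fin M → ℂ) (j j' : Fin d),
      ∑ k, (∑ i, c i • Matrix.vecMulVec (v i) (star (v i))) (k, j) (k, j')
        = (∑ i, c i • Pr i) j' j := by
    intro c j j'
    simp only [Matrix.sum_apply, Matrix.smul_apply, Matrix.vecMulVec_apply, Pi.star_apply,
      smul_eq_mul]
    rw [Finset.sum_comm]
    refine Finset.sum_congr rfl fun i _ => ?_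
    rw [← Finset.mul_sum, hcol i j j']
  -- scalars summing against projections to 1 must all be 1
  have hpin : ∀ (c : Fin M → ℂ), (∑ i, c i • Pr i = 1) → ∀ j, c j = 1 := by
    intro c hc j
    have h := congrArg (· * Pr j) hc
    simp only [Finset.sum_mul, one_mul, Matrix.smul_mul] at h
    rw [Finset.sum_eq_single j
      (fun i _ hij => by rw [horth i j, if_neg hij, smul_zero])
      (fun h' => absurd (Finset.mem_univ j) h')] at h
    rw [horth j j, if_pos rfl] at h
    have hz : (c j - 1) • Pr j = 0 := by
      rw [sub_smul, one_smul, h, sub_self]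
    rcases smul_eq_zero.mp hz with h' | h'
    · exact sub_eq_zero.mp h'
    · exact absurd h' (hne j)
  have hmem : IsInstrument d d M (fun i => outerCJ (Pr i) (Pr i)) := by
    constructor
    · intro i
      show (outerCJ (Pr i) (Pr i)).PosSemidef
      rw [houter i]
      exact psd_outer (v i)
    · ext j j'
      rw [Matrix.of_apply]
      have : ∑ i, outerCJ (Pr i) (Pr i)
          = ∑ i, (1 : ℂ) • Matrix.vecMulVec (v i) (star (v i)) := by
        refine Finset.sum_congr rfl fun i _ => ?_
        rw [one_smul, houter i]
      rw [this, hpt (fun _ => 1) j j']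
      have : ∑ i, (1 : ℂ) • Pr i = 1 := by simpa using hsum
      rw [this]
      simp [Matrix.one_apply, eq_comm]
  rw [mem_extremePoints]
  refine ⟨hmem, fun x₁ hx₁ x₂ hx₂ hseg => ?_⟩
  obtain ⟨a, b, ha, hb, hab, hcomb⟩ := hseg
  have ha' : (a : ℂ) ≠ 0 := by exact_mod_cast ne_of_gt ha
  -- each x₁ i is a multiple of the rank-one projector
  have hx1form : ∀ i, ∃ e : ℂ, x₁ i = e • Matrix.vecMulVec (v i) (star (v i)) := by
    intro i
    have hcombi : a • x₁ i + b • x₂ i = outerCJ (Pr i) (Pr i) := congr_fun hcomb i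
    have hAi : (((a : ℂ)) • x₁ i).PosSemidef := psd_csmul (hx₁.1 i) (le_of_lt ha)
    have hDi : (Matrix.vecMulVec (v i) (star (v i)) - ((a : ℂ)) • x₁ i).PosSemidef := by
      have : Matrix.vecMulVec (v i) (star (v i)) - ((a : ℂ)) • x₁ i = ((b : ℂ)) • x₂ i := by
        rw [← houter i, ← hcombi, real_smul_matrix a, real_smul_matrix b]
        abel
      rw [this]
      exact psd_csmul (hx₂.1 i) (le_of_lt hb)
    obtain ⟨c, hc⟩ := rankone_dom (hvne i) hAi hDi
    refine ⟨c / (a : ℂ), ?_⟩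
    have := congrArg (fun X => ((a : ℂ))⁻¹ • X) hc
    simp only [smul_smul, inv_mul_cancel₀ ha', one_smul] at this
    rw [this, div_eq_inv_mul]
  choose e he using hx1form
  -- the trace condition on x₁ forces all e i = 1
  have htrace := hx₁.2
  have hsum1 : ∑ i, e i • Pr i = 1 := by
    ext j j'
    have h1 : ∑ i, x₁ i = ∑ i, e i • Matrix.vecMulVec (v i) (star (v i)) :=
      Finset.sum_congr rfl fun i _ => he i
    have h2 := congr_fun (congr_fun htrace j') j
    simp only [Matrix.of_apply] at h2
    rw [h1, hpt e j' j] at h2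
    rw [h2]
    simp [Matrix.one_apply, eq_comm]
  have he1 : ∀ i, e i = 1 := hpin e hsum1
  have hx1eq : x₁ = fun i => outerCJ (Pr i) (Pr i) := by
    funext i
    rw [he i, he1 i, one_smul, houter i]
  constructor
  · exact hx1eq
  · have hb' : b • x₂ = b • (fun i => outerCJ (Pr i) (Pr i)) := by
      have : b = 1 - a := by linarith
      calc b • x₂ = (a • x₁ + b • x₂) - a • x₁ := by abel
        _ = (fun i => outerCJ (Pr i) (Pr i)) - a • (fun i => outerCJ (Pr i) (Pr i)) := by
            rw [hcomb, hx1eq]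
        _ = (1 - a) • (fun i => outerCJ (Pr i) (Pr i)) := by
            rw [sub_smul, one_smul]
        _ = b • (fun i => outerCJ (Pr i) (Pr i)) := by rw [← this]
    exact smul_right_injective _ (ne_of_gt hb) hb'
end
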